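/- arXiv:2307.05569 — 4 statements merged into one kernel-verified Lean document; each statement's English description precedes it below -/
import Mathlib

section
/- (Redei's theorem) Let D=(V,A) be a tournament. Then the number of Hamiltonian paths of D is odd, where by convention the empty list counts as a Hamiltonian path of the empty tournament with 0 vertices. Equivalently: the number of V-listings (w_1,…,w_n) such that (w_i,w_{i+1}) ∈ A for every i ∈ {1,…,n−1} is odd. -/
open scoped Classical

noncomputable section

/-- The power sum `p_k = x_1^k + x_2^k + ⋯` as a formal power series over `R`
in countably many variables indexed by the positive integers. -/
def pSumR (R : Type) [CommRing R] (k : ℕ) : MvPowerSeries ℕ+ R :=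
  fun d => if ∃ i : ℕ+, d = Finsupp.single i k then 1 else 0

/-- The power sum `p_k` over `ℤ`. -/
def pSum (k : ℕ) : MvPowerSeries ℕ+ ℤ := pSumR ℤ k

/-- The fundamental quasisymmetric function `L_{I,n}` (with positions 0-indexed):
its coefficient at a monomial `d` is the number of weakly increasing `n`-tuples
`(i_0, …, i_{n-1})` of positive integers, strictly increasing at the positions in `I`,
whose associated monomial `x_{i_0} ⋯ x_{i_{n-1}}` is `d`. -/
def Lfun (n : ℕ) (I : Set ℕ) : MvPowerSeries ℕ+ ℤ :=
  fun d =>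
    ((Set.ncard {i : Fin n → ℕ+ |
        Monotone i ∧
        (∀ (p : ℕ) (h : p + 1 < n), p ∈ I → i ⟨p, Nat.lt_of_succ_lt h⟩ < i ⟨p + 1, h⟩) ∧
        (∑ k : Fin n, Finsupp.single (i k) 1) = d}) : ℤ)

/-- The descent set `Des(w, D)` (0-indexed) of the `V`-listing `w = (e 0, e 1, …, e (n-1))`
with respect to the digraph with arc set `A`. -/
def descents {V : Type} (A : Set (V × V)) {n : ℕ} (e : Fin n ≃ V) : Set ℕ :=
  {p | ∃ h : p + 1 < n, (e ⟨p, Nat.lt_of_succ_lt h⟩, e ⟨p + 1, h⟩) ∈ A}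

/-- The Redei–Berge symmetric function `U_D` of the digraph `D = (V, A)`. -/
def redeiBerge (V : Type) [Fintype V] [DecidableEq V] (A : Set (V × V)) :
    MvPowerSeries ℕ+ ℤ :=
  ∑ e : Fin (Fintype.card V) ≃ V, Lfun (Fintype.card V) (descents A e)

/-- The cycles of a permutation `σ`, each represented by its set of entries
(i.e. by the corresponding orbit of `σ`). -/
def cyclesOf {V : Type} [Fintype V] [DecidableEq V] (σ : Equiv.Perm V) :
    Finset (Finset V) :=
  Finset.univ.image fun v => Finset.univ.filter fun u => σ.SameCycle v u

/-- `p_{type σ}`: the product of `p_{ℓ(γ)}` over all cycles `γ` of `σ`. -/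
def pType {V : Type} [Fintype V] [DecidableEq V] (σ : Equiv.Perm V) :
    MvPowerSeries ℕ+ ℤ :=
  ∏ O ∈ cyclesOf σ, pSum O.card

/-- `φ(σ) = ∑ (ℓ(γ) - 1)`, summed over all cycles `γ` of `σ` that are `D`-cycles.
A cycle of `σ` with orbit `O` is a `D`-cycle iff all its cyclic arcs `(u, σ u)`
(for `u ∈ O`) lie in `A`. -/
def phi {V : Type} [Fintype V] [DecidableEq V] (A : Set (V × V)) (σ : Equiv.Perm V) : ℕ :=
  ∑ O ∈ (cyclesOf σ).filter (fun O => ∀ u ∈ O, (u, σ u) ∈ A), (O.card - 1)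

/-- `σ ∈ S_V(D, D̄)`: each cycle of `σ` is a `D`-cycle or a `D̄`-cycle. -/
def memSVDDbar {V : Type} [Fintype V] [DecidableEq V] (A : Set (V × V))
    (σ : Equiv.Perm V) : Prop :=
  ∀ O ∈ cyclesOf σ, (∀ u ∈ O, (u, σ u) ∈ A) ∨ (∀ u ∈ O, (u, σ u) ∉ A)

/-- `σ ∈ S_V(D)`: each nontrivial cycle of `σ` is a `D`-cycle. -/
def memSVD {V : Type} [Fintype V] [DecidableEq V] (A : Set (V × V))
    (σ : Equiv.Perm V) : Prop :=
  ∀ O ∈ cyclesOf σ, 1 < O.card → ∀ u ∈ O, (u, σ u) ∈ A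

/-- `ψ(σ)`: the number of nontrivial cycles of `σ`. -/
def psi {V : Type} [Fintype V] [DecidableEq V] (σ : Equiv.Perm V) : ℕ :=
  ((cyclesOf σ).filter fun O => 1 < O.card).card

/-- The digraph `(V, A)` is a tournament: no loops, and for any two distinct vertices
`u, v`, exactly one of `(u,v)` and `(v,u)` is an arc. -/
def IsTournament {V : Type} (A : Set (V × V)) : Prop :=
  (∀ u : V, (u, u) ∉ A) ∧ ∀ u v : V, u ≠ v → Xor' ((u, v) ∈ A) ((v, u) ∈ A)

/-- The number of Hamiltonian paths of the digraph `(W, B)` (the empty list counts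
as a Hamiltonian path when `W` is empty). -/
def hampCount (W : Type) [Fintype W] (B : Set (W × W)) : ℕ :=
  Set.ncard {w : List W | w.Nodup ∧ (∀ x : W, x ∈ w) ∧ w.Chain' fun a b => (a, b) ∈ B}

/-- `A_σ = {(v, σ v) : v ∈ V}`. -/
def ApermSet {V : Type} (σ : Equiv.Perm V) : Set (V × V) :=
  Set.range fun v => (v, σ v)

/-- The arc set of a tuple (encoded as a list): the set of its consecutive pairs. -/
def arcsList {V : Type} (p : List V) : Set (V × V) := {a | a ∈ p.zip p.tail}

/-- `C` is a path cover of `V`: a set of paths of `V` (nonempty tuples of distinct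
elements) such that each element of `V` belongs to exactly one of these paths. -/
def IsPathCover (V : Type) (C : Set (List V)) : Prop :=
  (∀ p ∈ C, p ≠ [] ∧ p.Nodup) ∧ ∀ v : V, ∃! p, p ∈ C ∧ v ∈ p

/-- The arc set of a path cover. -/
def arcsCover {V : Type} (C : Set (List V)) : Set (V × V) :=
  ⋃ p ∈ C, arcsList p

/-- A subset `F ⊆ V × V` is linear if it is the arc set of some path cover of `V`. -/
def IsLinear (V : Type) (F : Set (V × V)) : Prop :=
  ∃ C : Set (List V), IsPathCover V C ∧ F = arcsCover C

set_option linter.unusedSectionVars false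

namespace RedeiProof

variable {V : Type} [Fintype V] [DecidableEq V]

def HSet (A : Set (V × V)) : Set (List V) :=
  {w : List V | w.Nodup ∧ (∀ x : V, x ∈ w) ∧ w.IsChain fun a b => (a, b) ∈ A}

def compl' (A : Set (V × V)) : Set (V × V) := {p | p.1 ≠ p.2 ∧ p ∉ A}

lemma hset_finite (A : Set (V × V)) : (HSet A).Finite := by
  apply (List.finite_length_le V (Fintype.card V)).subset
  rintro w ⟨hnd, -, -⟩
  exact hnd.length_le_card

lemma hset_mono {A B : Set (V × V)} (h : A ⊆ B) : HSet A ⊆ HSet B :=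
  fun _ ⟨h1, h2, h3⟩ => ⟨h1, h2, h3.imp fun _ _ hab => h hab⟩

lemma hset_split {A : Set (V × V)} {e : V × V} (_ : e ∉ A) :
    (HSet (insert e A)).ncard = (HSet A).ncard + (HSet (insert e A) \ HSet A).ncard := by
  have h := Set.ncard_diff_add_ncard_of_subset (hset_mono (Set.subset_insert e A))
    (hset_finite _)
  omega

lemma chain'_congr_ne {α : Type*} {R S : α → α → Prop}
    (h : ∀ a b : α, a ≠ b → (R a b ↔ S a b)) :
    ∀ l : List α, l.Nodup → (l.IsChain R ↔ l.IsChain S)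
  | [], _ => by simp
  | [a], _ => by simp
  | a :: b :: t, hnd => by
      have hab : a ≠ b := by
        intro heq; subst heq; simp [List.nodup_cons] at hnd
      rw [List.isChain_cons_cons, List.isChain_cons_cons, h a b hab,
        chain'_congr_ne h (b :: t) hnd.of_cons]

lemma hset_congr {A B : Set (V × V)} (h : ∀ a b : V, a ≠ b → ((a, b) ∈ A ↔ (a, b) ∈ B)) :
    HSet A = HSet B := by
  ext w
  simp only [HSet, Set.mem_setOf_eq]
  constructor <;> rintro ⟨h1, h2, h3⟩
  · exact ⟨h1, h2, (chain'_congr_ne (fun a b hab => h a b hab) w h1).mp h3⟩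
  · exact ⟨h1, h2, (chain'_congr_ne (fun a b hab => h a b hab) w h1).mpr h3⟩


lemma chain'_of_infix {α : Type*} {R : α → α → Prop} {w : List α} {a b : α}
    (hc : w.IsChain R) (h : [a, b].IsInfix w) : R a b := by
  obtain ⟨s, t, rfl⟩ := h
  have h1 : (s ++ [a, b]).IsChain R := (List.isChain_append.1 hc).1
  have h2 : ([a, b] : List α).IsChain R := (List.isChain_append.1 h1).2.1
  exact List.isChain_pair.1 h2

lemma infix_of_chain'_insert {B : Set (V × V)} {x y : V} :
    ∀ w : List V, w.IsChain (fun a b => (a, b) ∈ insert (x, y) B) →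
      ¬ w.IsChain (fun a b => (a, b) ∈ B) → [x, y].IsInfix w
  | [], _, hn => absurd List.isChain_nil hn
  | [a], _, hn => absurd (List.isChain_singleton a) hn
  | a :: b :: t, hc, hn => by
      rw [List.isChain_cons_cons] at hc hn
      by_cases h2 : (b :: t).IsChain (fun a b => (a, b) ∈ B)
      · have hab : (a, b) ∉ B := fun h => hn ⟨h, h2⟩
        have heq : (a, b) = (x, y) := by
          rcases Set.mem_insert_iff.1 hc.1 with h | h
          · exact h
          · exact absurd h hab
        obtain ⟨rfl, rfl⟩ := Prod.mk.injEq _ _ _ _ ▸ heq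
        exact ⟨[], t, rfl⟩
      · exact (infix_of_chain'_insert (b :: t) hc.2 h2).trans (List.infix_cons (List.infix_rfl))

lemma diff_char {B : Set (V × V)} {x y : V} (he : (x, y) ∉ B) :
    HSet (insert (x, y) B) \ HSet B
      = {w | w ∈ HSet (insert (x, y) B) ∧ [x, y].IsInfix w} := by
  ext w
  constructor
  · rintro ⟨hw, hnw⟩
    refine ⟨hw, ?_⟩
    apply infix_of_chain'_insert w hw.2.2
    intro hch
    exact hnw ⟨hw.1, hw.2.1, hch⟩
  · rintro ⟨hw, hinf⟩
    exact ⟨hw, fun hmem => he (chain'_of_infix hmem.2.2 hinf)⟩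

lemma indexOf_append_cons {v : V} : ∀ (s : List V), v ∉ s → ∀ r : List V,
    (s ++ v :: r).idxOf v = s.length
  | [], _, r => by simp
  | a :: s, hv, r => by
      have hav : a ≠ v := fun h => hv (h ▸ List.mem_cons_self)
      simp only [List.cons_append, List.idxOf_cons_ne _ (by exact hav),
        indexOf_append_cons s (fun h => hv (List.mem_cons_of_mem a h)) r, List.length_cons]

lemma not_infix_swap {w : List V} {u v : V} (hnd : w.Nodup)
    (h1 : [v, u].IsInfix w) (h2 : [u, v].IsInfix w) : False := by
  obtain ⟨s, t, rfl⟩ := h1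
  obtain ⟨s', t', heq⟩ := h2
  have hw : s ++ [v, u] ++ t = s ++ v :: u :: t := by simp
  rw [hw] at hnd heq
  have heq' : s' ++ u :: v :: t' = s ++ v :: u :: t := by simpa using heq
  -- nodup facts
  have hnd' : (s' ++ u :: v :: t').Nodup := heq' ▸ hnd
  have hvs : v ∉ s ∧ u ∉ s ∧ u ≠ v := by
    rw [List.nodup_append] at hnd
    refine ⟨fun h => hnd.2.2 _ h _ (by simp) rfl, fun h => hnd.2.2 _ h _ (by simp) rfl, ?_⟩
    have := hnd.2.1
    simp only [List.nodup_cons] at this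
    exact fun h => this.1 (h ▸ by simp)
  have hvs' : u ∉ s' ∧ v ∉ s' := by
    rw [List.nodup_append] at hnd'
    exact ⟨fun h => hnd'.2.2 _ h _ (by simp) rfl, fun h => hnd'.2.2 _ h _ (by simp) rfl⟩
  have e1 : (s ++ v :: u :: t).idxOf v = s.length := indexOf_append_cons s hvs.1 _
  have e2 : (s ++ v :: u :: t).idxOf u = s.length + 1 := by
    have : s ++ v :: u :: t = (s ++ [v]) ++ u :: t := by simp
    rw [this, indexOf_append_cons (s ++ [v]) (by
      simp only [List.mem_append, List.mem_singleton]
      rintro (h | h)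
      · exact hvs.2.1 h
      · exact hvs.2.2 h), List.length_append, List.length_singleton]
  have e3 : (s' ++ u :: v :: t').idxOf u = s'.length := indexOf_append_cons s' hvs'.1 _
  have e4 : (s' ++ u :: v :: t').idxOf v = s'.length + 1 := by
    have : s' ++ u :: v :: t' = (s' ++ [u]) ++ v :: t' := by simp
    rw [this, indexOf_append_cons (s' ++ [u]) (by
      simp only [List.mem_append, List.mem_singleton]
      rintro (h | h)
      · exact hvs'.2 h
      · exact hvs.2.2 h.symm), List.length_append, List.length_singleton]
  rw [heq'] at e3 e4
  omega


lemma even_ncard_of_invol {α : Type} :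
    ∀ (n : ℕ) (s : Set α), s.ncard = n → s.Finite → ∀ f : α → α,
      (∀ a ∈ s, f a ∈ s) → (∀ a ∈ s, f (f a) = a) → (∀ a ∈ s, f a ≠ a) →
      Even s.ncard := by
  intro n
  induction n using Nat.strong_induction_on with
  | _ n ih =>
    intro s hcard hs f hmem hinv hne
    rcases s.eq_empty_or_nonempty with rfl | ⟨a, ha⟩
    · simp
    · have hfa : f a ∈ s := hmem a ha
      have hnea : f a ≠ a := hne a ha
      have hsub : {a, f a} ⊆ s := by
        rintro z (rfl | rfl)
        · exact ha
        · exact hfa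
      have hpair : ({a, f a} : Set α).ncard = 2 := Set.ncard_pair (Ne.symm hnea)
      have hdiff := Set.ncard_diff_add_ncard_of_subset hsub hs
      set t := s \ {a, f a} with ht
      have htf : t.Finite := hs.diff
      have htmem : ∀ z ∈ t, f z ∈ t := by
        rintro z ⟨hzs, hz⟩
        simp only [Set.mem_insert_iff, Set.mem_singleton_iff] at hz
        push_neg at hz
        refine ⟨hmem z hzs, ?_⟩
        simp only [Set.mem_insert_iff, Set.mem_singleton_iff]
        push_neg
        constructor
        · intro h
          exact hz.2 (by rw [← hinv z hzs, h])
        · intro h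
          exact hz.1 (by rw [← hinv z hzs, h, hinv a ha])
      have hlt : t.ncard < n := by
        rw [hpair] at hdiff; omega
      have heven : Even t.ncard :=
        ih t.ncard hlt t rfl htf f htmem (fun z hz => hinv z hz.1) (fun z hz => hne z hz.1)
      rw [hpair] at hdiff
      rw [← hcard] at *
      obtain ⟨k, hk⟩ := heven
      exact ⟨k + 1, by omega⟩

def revA (A : Set (V × V)) : Set (V × V) := {p | (p.2, p.1) ∈ A}

lemma reverse_mem_hset {A : Set (V × V)} {w : List V} :
    w.reverse ∈ HSet A ↔ w ∈ HSet (revA A) := by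
  simp only [HSet, Set.mem_setOf_eq, List.nodup_reverse, List.mem_reverse,
    List.isChain_reverse]
  rfl

lemma reverse_image_hset (A : Set (V × V)) :
    List.reverse '' HSet (revA A) = HSet A := by
  ext w
  constructor
  · rintro ⟨m, hm, rfl⟩
    exact reverse_mem_hset.2 hm
  · intro hw
    exact ⟨w.reverse, by rwa [reverse_mem_hset.symm, List.reverse_reverse], List.reverse_reverse w⟩

lemma hset_rev_ncard (A : Set (V × V)) : (HSet (revA A)).ncard = (HSet A).ncard := by
  rw [← reverse_image_hset A, Set.ncard_image_of_injective _ List.reverse_injective]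

lemma hset_rev_diff_ncard (A B : Set (V × V)) :
    (HSet (revA A) \ HSet (revA B)).ncard = (HSet A \ HSet B).ncard := by
  rw [← reverse_image_hset A, ← reverse_image_hset B,
    ← Set.image_diff List.reverse_injective,
    Set.ncard_image_of_injective _ List.reverse_injective]


lemma chain'_congr_mem {α : Type*} {R S : α → α → Prop} :
    ∀ l : List α, (∀ a b, a ∈ l → b ∈ l → (R a b ↔ S a b)) → (l.IsChain R ↔ l.IsChain S)
  | [], _ => by simp
  | [a], _ => by simp
  | a :: b :: t, h => by
      rw [List.isChain_cons_cons, List.isChain_cons_cons, h a b (by simp) (by simp),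
        chain'_congr_mem (b :: t) (fun a' b' ha' hb' =>
          h a' b' (List.mem_cons_of_mem a ha') (List.mem_cons_of_mem a hb'))]

lemma tw_take {y : V} : ∀ (P : List V), y ∉ P → ∀ Q : List V,
    (P ++ y :: Q).takeWhile (fun a => decide (a ≠ y)) = P
  | [], _, Q => by simp
  | a :: P, hy, Q => by
      have hay : a ≠ y := fun h => hy (h ▸ List.mem_cons_self)
      simp only [List.cons_append, List.takeWhile_cons, decide_eq_true_eq, if_pos hay,
        List.cons.injEq, true_and]
      exact tw_take P (fun h => hy (List.mem_cons_of_mem a h)) Q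

lemma tw_drop {y : V} : ∀ (P : List V), y ∉ P → ∀ Q : List V,
    (P ++ y :: Q).dropWhile (fun a => decide (a ≠ y)) = y :: Q
  | [], _, Q => by simp
  | a :: P, hy, Q => by
      have hay : a ≠ y := fun h => hy (h ▸ List.mem_cons_self)
      simp only [List.cons_append, List.dropWhile_cons, decide_eq_true_eq, if_pos hay]
      exact tw_drop P (fun h => hy (List.mem_cons_of_mem a h)) Q

section Transfer

variable {x y : V} {B : Set (V × V)}

lemma transfer (hxy : x ≠ y) {P Q : List V} (hyP : y ∉ P) (hyQ : y ∉ Q) :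
    (P ++ x :: y :: Q).IsChain (fun a b => (a, b) ∈ insert (x, y) B) ↔
    (P ++ y :: Q).IsChain (fun a b => if b = y then (a, x) ∈ B else (a, b) ∈ B) := by
  have p1 : P.IsChain (fun a b => (a, b) ∈ insert (x, y) B) ↔
      P.IsChain (fun a b => if b = y then (a, x) ∈ B else (a, b) ∈ B) := by
    apply chain'_congr_mem
    intro a b _ hb
    have hby : b ≠ y := fun h => hyP (h ▸ hb)
    rw [if_neg hby, Set.mem_insert_iff]
    simp only [Prod.mk.injEq]
    constructor
    · rintro (⟨rfl, rfl⟩ | h)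
      · exact absurd rfl hby
      · exact h
    · exact Or.inr
  have p2 : Q.IsChain (fun a b => (a, b) ∈ insert (x, y) B) ↔
      Q.IsChain (fun a b => if b = y then (a, x) ∈ B else (a, b) ∈ B) := by
    apply chain'_congr_mem
    intro a b _ hb
    have hby : b ≠ y := fun h => hyQ (h ▸ hb)
    rw [if_neg hby, Set.mem_insert_iff]
    simp only [Prod.mk.injEq]
    constructor
    · rintro (⟨rfl, rfl⟩ | h)
      · exact absurd rfl hby
      · exact h
    · exact Or.inr
  have p3 : ∀ q ∈ Q.head?, ((y, q) ∈ insert (x, y) B ↔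
      (if q = y then (y, x) ∈ B else (y, q) ∈ B)) := by
    intro q hq
    have hqQ : q ∈ Q := List.mem_of_mem_head? hq
    have hqy : q ≠ y := fun h => hyQ (h ▸ hqQ)
    rw [if_neg hqy, Set.mem_insert_iff]
    simp only [Prod.mk.injEq]
    constructor
    · rintro (⟨rfl, rfl⟩ | h)
      · exact absurd rfl hxy.symm
      · exact h
    · exact Or.inr
  have p4 : ∀ a : V, ((a, x) ∈ insert (x, y) B ↔ (a, x) ∈ B) := by
    intro a
    rw [Set.mem_insert_iff]
    simp only [Prod.mk.injEq]
    constructor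
    · rintro (⟨rfl, rfl⟩ | h)
      · exact absurd rfl hxy
      · exact h
    · exact Or.inr
  rw [List.isChain_append, List.isChain_append, List.isChain_cons_cons, List.isChain_cons,
    List.isChain_cons]
  simp only [List.head?_cons, Option.mem_def, Option.some.injEq, forall_eq', if_true,
    eq_self_iff_true]
  constructor
  · rintro ⟨hP, ⟨-, hyQh, hQ⟩, hJ⟩
    exact ⟨p1.1 hP, ⟨fun q hq => (p3 q hq).1 (hyQh q hq), p2.1 hQ⟩,
      fun a ha => (p4 a).1 (hJ a ha)⟩
  · rintro ⟨hP, ⟨hyQh, hQ⟩, hJ⟩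
    exact ⟨p1.2 hP, ⟨Set.mem_insert _ _, fun q hq => (p3 q hq).2 (hyQh q hq), p2.2 hQ⟩,
      fun a ha => (p4 a).2 (hJ a ha)⟩

end Transfer


section Contraction

variable {x y : V}

def contractMap (x y : V) [DecidableEq V] : List {a : V // a ≠ x} → List V := fun w' =>
  ((w'.map Subtype.val).takeWhile (fun a => decide (a ≠ y))) ++
    x :: ((w'.map Subtype.val).dropWhile (fun a => decide (a ≠ y)))

lemma contraction (hxy : x ≠ y) (B : Set (V × V)) (he : (x, y) ∉ B) :
    (HSet (insert (x, y) B) \ HSet B).ncard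
      = (HSet {q : {a : V // a ≠ x} × {a : V // a ≠ x} |
          if (q.2 : V) = y then ((q.1 : V), x) ∈ B else ((q.1 : V), (q.2 : V)) ∈ B}).ncard := by
  set Bc : Set ({a : V // a ≠ x} × {a : V // a ≠ x}) :=
    {q | if (q.2 : V) = y then ((q.1 : V), x) ∈ B else ((q.1 : V), (q.2 : V)) ∈ B} with hBc
  -- basic facts about members of HSet Bc
  have decomp : ∀ w' ∈ HSet Bc, ∃ P Q : List V,
      w'.map Subtype.val = P ++ y :: Q ∧ y ∉ P ∧ y ∉ Q ∧
      x ∉ w'.map Subtype.val ∧ (w'.map Subtype.val).Nodup ∧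
      contractMap x y w' = P ++ x :: y :: Q := by
    rintro w' ⟨hnd, hcom, -⟩
    have hmnd : (w'.map Subtype.val).Nodup := hnd.map Subtype.val_injective
    have hxm : x ∉ w'.map Subtype.val := by
      rw [List.mem_map]
      rintro ⟨a, -, ha⟩
      exact a.2 ha
    have hym : y ∈ w'.map Subtype.val :=
      List.mem_map_of_mem (f := Subtype.val) (hcom ⟨y, Ne.symm hxy⟩)
    obtain ⟨P, Q, hm⟩ := List.append_of_mem hym
    have hyP : y ∉ P := by
      rw [hm, List.nodup_append] at hmnd
      exact fun h => hmnd.2.2 _ h _ (List.mem_cons_self) rfl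
    have hyQ : y ∉ Q := by
      rw [hm, List.nodup_append, List.nodup_cons] at hmnd
      exact hmnd.2.1.1
    refine ⟨P, Q, hm, hyP, hyQ, hxm, hmnd, ?_⟩
    rw [contractMap, hm, tw_take P hyP Q, tw_drop P hyP Q]
  have claim1 : contractMap x y '' HSet Bc = HSet (insert (x, y) B) \ HSet B := by
    rw [diff_char he]
    ext w
    constructor
    · rintro ⟨w', hw', rfl⟩
      obtain ⟨P, Q, hm, hyP, hyQ, hxm, hmnd, hg⟩ := decomp w' hw'
      rw [hg]
      obtain ⟨hnd, hcom, hch⟩ := hw'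
      have hchm : (w'.map Subtype.val).IsChain
          (fun a b => if b = y then (a, x) ∈ B else (a, b) ∈ B) := by
        rw [List.isChain_map]
        exact hch
      rw [hm] at hchm hxm
      constructor
      · refine ⟨?_, ?_, ?_⟩
        · rw [List.nodup_middle, List.nodup_cons]
          exact ⟨hxm, hm ▸ hmnd⟩
        · intro z
          rw [List.Perm.mem_iff List.perm_middle, List.mem_cons]
          rcases eq_or_ne z x with rfl | hz
          · exact Or.inl rfl
          · right
            have : (⟨z, hz⟩ : {a : V // a ≠ x}) ∈ w' := hcom _
            have : z ∈ w'.map Subtype.val := List.mem_map_of_mem (f := Subtype.val) this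
            rwa [hm] at this
        · exact (transfer hxy hyP hyQ).2 hchm
      · exact ⟨P, Q, by simp⟩
    · rintro ⟨hw, P, Q, rfl⟩
      have hw' := hw
      obtain ⟨hnd, hcom, hch⟩ := hw'
      have hweq : P ++ [x, y] ++ Q = P ++ x :: y :: Q := by simp
      rw [hweq] at hnd hcom hch ⊢
      have hnd' : (x :: (P ++ y :: Q)).Nodup := List.nodup_middle.1 hnd
      rw [List.nodup_cons] at hnd'
      obtain ⟨hxm, hmnd⟩ := hnd'
      have hyP : y ∉ P := by
        rw [List.nodup_append] at hmnd
        exact fun h => hmnd.2.2 _ h _ (List.mem_cons_self) rfl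
      have hyQ : y ∉ Q := by
        rw [List.nodup_append, List.nodup_cons] at hmnd
        exact hmnd.2.1.1
      have hne : ∀ a ∈ P ++ y :: Q, a ≠ x := fun a ha h => hxm (h ▸ ha)
      refine ⟨(P ++ y :: Q).pmap Subtype.mk hne, ?_, ?_⟩
      · have hmap : ((P ++ y :: Q).pmap Subtype.mk hne).map Subtype.val = P ++ y :: Q := by
          rw [List.map_pmap]
          exact (List.pmap_eq_map (f := id) hne).trans (List.map_id _)
        refine ⟨?_, ?_, ?_⟩
        · exact List.Nodup.of_map Subtype.val (by rw [hmap]; exact hmnd)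
        · rintro ⟨z, hz⟩
          have hzin : z ∈ P ++ y :: Q := by
            have := hcom z
            rw [List.Perm.mem_iff List.perm_middle, List.mem_cons] at this
            rcases this with rfl | h
            · exact absurd rfl hz
            · exact h
          have : z ∈ ((P ++ y :: Q).pmap Subtype.mk hne).map Subtype.val := by
            rw [hmap]; exact hzin
          rw [List.mem_map] at this
          obtain ⟨b, hb, hbz⟩ := this
          have : b = ⟨z, hz⟩ := Subtype.ext hbz
          exact this ▸ hb
        · have : (P ++ y :: Q).IsChain (fun a b => if b = y then (a, x) ∈ B else (a, b) ∈ B) :=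
            (transfer hxy hyP hyQ).1 hch
          rw [← hmap, List.isChain_map] at this
          exact this
      · have hmap : ((P ++ y :: Q).pmap Subtype.mk hne).map Subtype.val = P ++ y :: Q := by
          rw [List.map_pmap]
          exact (List.pmap_eq_map (f := id) hne).trans (List.map_id _)
        rw [contractMap, hmap, tw_take P hyP Q, tw_drop P hyP Q]
  have claim2 : Set.InjOn (contractMap x y) (HSet Bc) := by
    intro w1 h1 w2 h2 heq
    obtain ⟨P1, Q1, hm1, hyP1, hyQ1, hxm1, hnd1, hg1⟩ := decomp w1 h1
    obtain ⟨P2, Q2, hm2, hyP2, hyQ2, hxm2, hnd2, hg2⟩ := decomp w2 h2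
    rw [hg1, hg2] at heq
    have hxP1 : x ∉ P1 := fun h => hxm1 (hm1 ▸ List.mem_append_left _ h)
    have hxP2 : x ∉ P2 := fun h => hxm2 (hm2 ▸ List.mem_append_left _ h)
    have hmeq : w1.map Subtype.val = w2.map Subtype.val := by
      rw [hm1, hm2]
      have e1 : (P1 ++ x :: y :: Q1).erase x = P1 ++ y :: Q1 := by
        rw [List.erase_append_right _ hxP1, List.erase_cons_head]
      have e2 : (P2 ++ x :: y :: Q2).erase x = P2 ++ y :: Q2 := by
        rw [List.erase_append_right _ hxP2, List.erase_cons_head]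
      rw [← e1, ← e2, heq]
    exact List.map_injective_iff.2 Subtype.val_injective hmeq
  rw [← claim1, Set.ncard_image_of_injOn claim2]

end Contraction


lemma hset_card_le_one (h : Fintype.card V ≤ 1) (A : Set (V × V)) :
    HSet A = {w : List V | w.Nodup ∧ ∀ z : V, z ∈ w} := by
  ext w
  constructor
  · rintro ⟨h1, h2, -⟩
    exact ⟨h1, h2⟩
  · rintro ⟨h1, h2⟩
    refine ⟨h1, h2, ?_⟩
    match w, h1 with
    | [], _ => exact List.isChain_nil
    | [a], _ => exact List.isChain_singleton a
    | a :: b :: t, h1 =>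
      have := h1.length_le_card
      simp only [List.length_cons] at this
      omega

lemma hset_empty_eq (h : 2 ≤ Fintype.card V) : HSet (∅ : Set (V × V)) = ∅ := by
  ext w
  simp only [Set.mem_empty_iff_false, iff_false]
  rintro ⟨h1, h2, h3⟩
  obtain ⟨a, b, hab⟩ := Fintype.exists_pair_of_one_lt_card (α := V) (by omega)
  match w, h1, h3 with
  | [], _, _ => exact absurd (h2 a) (List.not_mem_nil)
  | [c], _, _ =>
    have ha := h2 a; have hb := h2 b
    simp only [List.mem_singleton] at ha hb
    exact hab (ha.trans hb.symm)
  | c :: d :: t, _, h3 => exact (List.isChain_cons_cons.1 h3).1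

def swapHead {α : Type*} : List α → List α
  | a :: b :: t => b :: a :: t
  | l => l

lemma hset_compl_empty_eq :
    HSet (compl' (∅ : Set (V × V))) = {w : List V | w.Nodup ∧ ∀ z : V, z ∈ w} := by
  ext w
  constructor
  · rintro ⟨h1, h2, -⟩
    exact ⟨h1, h2⟩
  · rintro ⟨h1, h2⟩
    refine ⟨h1, h2, ?_⟩
    have : w.IsChain (· ≠ ·) := List.Pairwise.isChain h1
    exact this.imp fun a b hab => ⟨hab, Set.notMem_empty _⟩

lemma even_compl_empty (h : 2 ≤ Fintype.card V) :
    Even (HSet (compl' (∅ : Set (V × V)))).ncard := by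
  rw [hset_compl_empty_eq]
  have hfin : ({w : List V | w.Nodup ∧ ∀ z : V, z ∈ w}).Finite := by
    apply (List.finite_length_le V (Fintype.card V)).subset
    rintro w ⟨hnd, -⟩
    exact hnd.length_le_card
  have hform : ∀ w ∈ {w : List V | w.Nodup ∧ ∀ z : V, z ∈ w},
      ∃ a b t, w = a :: b :: t := by
    rintro w ⟨h1, h2⟩
    obtain ⟨a, b, hab⟩ := Fintype.exists_pair_of_one_lt_card (α := V) (by omega)
    match w with
    | [] => exact absurd (h2 a) (List.not_mem_nil)
    | [c] =>
      have ha := h2 a; have hb := h2 b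
      simp only [List.mem_singleton] at ha hb
      exact absurd (ha.trans hb.symm) hab
    | a' :: b' :: t => exact ⟨a', b', t, rfl⟩
  apply even_ncard_of_invol _ _ rfl hfin swapHead
  · rintro w hw
    obtain ⟨a, b, t, rfl⟩ := hform w hw
    obtain ⟨h1, h2⟩ := hw
    constructor
    · exact (List.Perm.swap a b t).nodup_iff.2 h1
    · intro z
      have := h2 z
      show z ∈ b :: a :: t
      rw [(List.Perm.swap a b t).mem_iff]
      exact this
  · rintro w hw
    obtain ⟨a, b, t, rfl⟩ := hform w hw
    rfl
  · rintro w hw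
    obtain ⟨a, b, t, rfl⟩ := hform w hw
    obtain ⟨h1, -⟩ := hw
    intro heq
    have hba : b = a := by injection heq
    rw [List.nodup_cons] at h1
    exact h1.1 (hba ▸ List.mem_cons_self)

lemma berge : ∀ (n : ℕ) (W : Type) [Fintype W] [DecidableEq W], Fintype.card W = n →
    ∀ A : Set (W × W), (HSet A).ncard % 2 = (HSet (compl' A)).ncard % 2 := by
  intro n
  induction n using Nat.strong_induction_on with
  | _ n ih =>
    intro W _ _ hn A
    refine Set.Finite.induction_on
      (motive := fun A _ => (HSet A).ncard % 2 = (HSet (compl' A)).ncard % 2) A (Set.toFinite A) ?_ ?_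
    · rcases le_or_gt (Fintype.card W) 1 with h1 | h2
      · simp only [hset_card_le_one h1]
      · rw [hset_empty_eq h2]
        obtain ⟨k, hk⟩ := even_compl_empty h2
        simp only [Set.ncard_empty]
        omega
    · intro e s he _ IH
      obtain ⟨x, y⟩ := e
      rcases eq_or_ne x y with rfl | hne
      · have h1 : HSet (insert (x, x) s) = HSet s := by
          apply hset_congr
          intro a b hab
          rw [Set.mem_insert_iff]
          simp only [Prod.mk.injEq]
          constructor
          · rintro (⟨rfl, rfl⟩ | h)
            · exact absurd rfl hab
            · exact h
          · exact Or.inr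
        have h2 : compl' (insert (x, x) s) = compl' s := by
          ext ⟨a, b⟩
          simp only [compl', Set.mem_setOf_eq, Set.mem_insert_iff, Prod.mk.injEq]
          constructor
          · rintro ⟨hab, h⟩
            exact ⟨hab, fun hs => h (Or.inr hs)⟩
          · rintro ⟨hab, h⟩
            refine ⟨hab, ?_⟩
            rintro (⟨rfl, rfl⟩ | hs)
            · exact hab rfl
            · exact h hs
        rw [h1, h2]
        exact IH
      · -- nonloop arc
        have hnW : 1 ≤ Fintype.card W := by
          have : Nonempty W := ⟨x⟩
          exact Fintype.card_pos
        have hcard' : Fintype.card {a : W // a ≠ x} = Fintype.card W - 1 := by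
          simpa using Fintype.card_subtype_compl (fun a : W => a = x)
        have hsplit1 := hset_split he
        have hc1 := contraction hne s he
        have heC : (x, y) ∉ compl' (insert (x, y) s) :=
          fun h => h.2 (Set.mem_insert _ _)
        have hins : insert (x, y) (compl' (insert (x, y) s)) = compl' s := by
          ext ⟨a, b⟩
          simp only [compl', Set.mem_insert_iff, Set.mem_setOf_eq, Prod.mk.injEq]
          constructor
          · rintro (⟨rfl, rfl⟩ | ⟨hab, h⟩)
            · exact ⟨hne, he⟩
            · exact ⟨hab, fun hs => h (Or.inr hs)⟩
          · rintro ⟨hab, h⟩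
            by_cases hxy2 : a = x ∧ b = y
            · exact Or.inl ⟨hxy2.1, hxy2.2⟩
            · refine Or.inr ⟨hab, ?_⟩
              rintro (⟨rfl, rfl⟩ | hs)
              · exact hxy2 ⟨rfl, rfl⟩
              · exact h hs
        have hsplit2 := hset_split heC
        rw [hins] at hsplit2
        have hc2 := contraction hne (compl' (insert (x, y) s)) heC
        rw [hins] at hc2
        have hcongr2 : HSet {q : {a : W // a ≠ x} × {a : W // a ≠ x} |
              if (q.2 : W) = y then ((q.1 : W), x) ∈ compl' (insert (x, y) s)
              else ((q.1 : W), (q.2 : W)) ∈ compl' (insert (x, y) s)}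
            = HSet (compl' {q : {a : W // a ≠ x} × {a : W // a ≠ x} |
              if (q.2 : W) = y then ((q.1 : W), x) ∈ s
              else ((q.1 : W), (q.2 : W)) ∈ s}) := by
          apply hset_congr
          rintro a b hab
          have hval : (a : W) ≠ (b : W) → True := fun _ => trivial
          simp only [Set.mem_setOf_eq, compl']
          rcases eq_or_ne (b : W) y with hby | hby
          · rw [if_pos hby, if_pos hby]
            simp only [compl', Set.mem_setOf_eq, Set.mem_insert_iff, Prod.mk.injEq]
            constructor
            · rintro ⟨-, h⟩
              exact ⟨hab, fun hs => h (Or.inr hs)⟩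
            · rintro ⟨-, h⟩
              refine ⟨a.2, ?_⟩
              rintro (⟨h1, h2⟩ | hs)
              · exact a.2 h1
              · exact h hs
          · rw [if_neg hby, if_neg hby]
            simp only [compl', Set.mem_setOf_eq, Set.mem_insert_iff, Prod.mk.injEq]
            constructor
            · rintro ⟨-, h⟩
              exact ⟨hab, fun hs => h (Or.inr hs)⟩
            · rintro ⟨hab', h⟩
              refine ⟨fun hv => hab (Subtype.ext hv), ?_⟩
              rintro (⟨h1, h2⟩ | hs)
              · exact a.2 h1
              · exact h hs
        have houter := ih (n - 1) (by omega) {a : W // a ≠ x}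
          (by rw [hcard', hn])
          {q : {a : W // a ≠ x} × {a : W // a ≠ x} |
            if (q.2 : W) = y then ((q.1 : W), x) ∈ s
            else ((q.1 : W), (q.2 : W)) ∈ s}
        rw [← hcongr2] at houter
        rw [hc1] at hsplit1
        rw [hc2] at hsplit2
        omega


lemma tourn_ne {T : Set (V × V)} (hT : IsTournament T) {u v : V} (huv : (u, v) ∈ T) :
    u ≠ v := fun h => hT.1 v (h ▸ huv)

lemma tourn_not_rev {T : Set (V × V)} (hT : IsTournament T) {u v : V} (huv : (u, v) ∈ T) :
    (v, u) ∉ T := by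
  rcases hT.2 u v (tourn_ne hT huv) with ⟨-, h⟩ | ⟨-, h⟩
  · exact h
  · exact absurd huv h

lemma tourn_mem_of_not {T : Set (V × V)} (hT : IsTournament T) {u v : V} (hne : u ≠ v)
    (h : (u, v) ∉ T) : (v, u) ∈ T := by
  rcases hT.2 u v hne with ⟨h1, -⟩ | ⟨h1, -⟩
  · exact absurd h1 h
  · exact h1

lemma compl'_tourn {T : Set (V × V)} (hT : IsTournament T) : compl' T = revA T := by
  ext ⟨a, b⟩
  simp only [compl', revA, Set.mem_setOf_eq]
  constructor
  · rintro ⟨hab, h⟩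
    exact tourn_mem_of_not hT hab h
  · intro h
    exact ⟨(tourn_ne hT h).symm, tourn_not_rev hT h⟩

lemma flip_parity {T : Set (V × V)} (hT : IsTournament T) {u v : V} (huv : (u, v) ∈ T) :
    (HSet (insert (v, u) (T \ {(u, v)}))).ncard % 2 = (HSet T).ncard % 2 := by
  have hne : u ≠ v := tourn_ne hT huv
  set T0 := T \ {(u, v)} with hT0
  have he0 : (u, v) ∉ T0 := by simp [hT0]
  have hvu : (v, u) ∉ T0 := fun h => tourn_not_rev hT huv h.1
  have hins : insert (u, v) T0 = T := by
    rw [hT0, Set.insert_diff_singleton, Set.insert_eq_self.2 huv]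
  -- splits
  have split2 := hset_split hvu
  have splitc := hset_split (A := revA T) (e := (u, v))
    (fun h => tourn_not_rev hT huv h)
  -- berge
  have hberge := berge (Fintype.card V) V rfl T0
  have hcT0 : compl' T0 = insert (u, v) (revA T) := by
    rw [← compl'_tourn hT]
    ext ⟨a, b⟩
    simp only [compl', hT0, Set.mem_insert_iff, Set.mem_setOf_eq, Set.mem_diff,
      Set.mem_singleton_iff, Prod.mk.injEq]
    constructor
    · rintro ⟨hab, h⟩
      by_cases hp : a = u ∧ b = v
      · exact Or.inl hp
      · exact Or.inr ⟨hab, fun ht => h ⟨ht, fun he => hp he⟩⟩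
    · rintro (⟨rfl, rfl⟩ | ⟨hab, h⟩)
      · exact ⟨hne, fun hd => hd.2 ⟨rfl, rfl⟩⟩
      · exact ⟨hab, fun hd => h hd.1⟩
  -- reversal identification of the complement-side difference
  have hrevins : revA (insert (v, u) T) = insert (u, v) (revA T) := by
    ext ⟨a, b⟩
    simp only [revA, Set.mem_insert_iff, Set.mem_setOf_eq, Prod.mk.injEq]
    tauto
  have hdrev : (HSet (insert (u, v) (revA T)) \ HSet (revA T)).ncard
      = (HSet (insert (v, u) T) \ HSet T).ncard := by
    rw [← hrevins, ← (show revA (revA T) = T by ext ⟨a, b⟩; simp [revA])] at *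
    exact hset_rev_diff_ncard (insert (v, u) (revA (revA T))) (revA (revA T))
  -- X = Y
  have hXY : HSet (insert (v, u) T) \ HSet T = HSet (insert (v, u) T0) \ HSet T0 := by
    have hvuT : (v, u) ∉ T := tourn_not_rev hT huv
    rw [diff_char hvuT, diff_char hvu]
    have hcomm : insert (u, v) (insert (v, u) T0) = insert (v, u) T := by
      rw [Set.insert_comm, hins]
    ext w
    constructor
    · rintro ⟨hw, hinf⟩
      refine ⟨⟨hw.1, hw.2.1, ?_⟩, hinf⟩
      by_contra hch
      have : [u, v].IsInfix w := by
        apply infix_of_chain'_insert w ?_ hch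
        rw [show insert ((u : V), (v : V)) (insert (v, u) T0) = insert (v, u) T from hcomm]
        exact hw.2.2
      exact not_infix_swap hw.1 hinf this
    · rintro ⟨hw, hinf⟩
      refine ⟨⟨hw.1, hw.2.1, ?_⟩, hinf⟩
      exact (hw.2.2).imp fun a b hab => by
        rcases hab with h | h
        · exact Set.mem_insert_iff.2 (Or.inl h)
        · exact Set.mem_insert_iff.2 (Or.inr h.1)
  -- assemble
  have hrT : (HSet (revA T)).ncard = (HSet T).ncard := hset_rev_ncard T
  rw [hcT0] at hberge
  rw [hXY] at hdrev
  omega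

lemma flip_tournament {T : Set (V × V)} (hT : IsTournament T) {u v : V} (huv : (u, v) ∈ T) :
    IsTournament (insert (v, u) (T \ {(u, v)})) := by
  have hne : u ≠ v := tourn_ne hT huv
  constructor
  · intro a
    simp only [Set.mem_insert_iff, Set.mem_diff, Set.mem_singleton_iff, Prod.mk.injEq]
    rintro (⟨rfl, rfl⟩ | ⟨h, -⟩)
    · exact hne rfl
    · exact hT.1 a h
  · intro a b hab
    have hmem : ∀ c d : V, ((c, d) ∈ insert (v, u) (T \ {(u, v)}) ↔
        ((c, d) = (v, u) ∨ ((c, d) ∈ T ∧ (c, d) ≠ (u, v)))) := by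
      intro c d
      simp only [Set.mem_insert_iff, Set.mem_diff, Set.mem_singleton_iff]
    rw [Xor']
    rw [hmem, hmem]
    by_cases h1 : (a, b) = (u, v)
    · have h2 : (b, a) = (v, u) := by
        rw [Prod.mk.injEq] at h1 ⊢
        exact ⟨h1.2, h1.1⟩
      right
      refine ⟨Or.inl h2, ?_⟩
      rintro (h3 | ⟨h3, h4⟩)
      · rw [h1, Prod.mk.injEq] at h3
        exact hne h3.1
      · exact h4 h1
    · by_cases h2 : (a, b) = (v, u)
      · have h3 : (b, a) = (u, v) := by
          rw [Prod.mk.injEq] at h2 ⊢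
          exact ⟨h2.2, h2.1⟩
        left
        refine ⟨Or.inl h2, ?_⟩
        rintro (h4 | ⟨h4, h5⟩)
        · rw [h3, Prod.mk.injEq] at h4
          exact hne h4.1
        · exact h5 h3
      · have h3 : (b, a) ≠ (v, u) := fun h => h1 (by
          rw [Prod.mk.injEq] at h ⊢
          exact ⟨h.2, h.1⟩)
        have h4 : (b, a) = (u, v) → False := fun h => h2 (by
          rw [Prod.mk.injEq] at h ⊢
          exact ⟨h.2, h.1⟩)
        rcases hT.2 a b hab with ⟨hm, hn⟩ | ⟨hm, hn⟩
        · left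
          exact ⟨Or.inr ⟨hm, h1⟩, by
            rintro (h5 | ⟨h5, h6⟩)
            · exact h3 h5
            · exact hn h5⟩
        · right
          exact ⟨Or.inr ⟨hm, fun h => h4 h⟩, by
            rintro (h5 | ⟨h5, h6⟩)
            · exact h2 h5
            · exact hn h5⟩

lemma tournament_eq_of_subset {T1 T2 : Set (V × V)} (h1 : IsTournament T1)
    (h2 : IsTournament T2) (hs : T1 ⊆ T2) : T1 = T2 := by
  apply Set.Subset.antisymm hs
  rintro ⟨a, b⟩ hab
  have hne : a ≠ b := tourn_ne h2 hab
  by_contra h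
  have : (b, a) ∈ T1 := tourn_mem_of_not h1 hne h
  exact tourn_not_rev h2 hab (hs this)

lemma parity_chain : ∀ (k : ℕ) (T1 T2 : Set (V × V)), IsTournament T1 → IsTournament T2 →
    (T1 \ T2).ncard = k → (HSet T1).ncard % 2 = (HSet T2).ncard % 2 := by
  intro k
  induction k with
  | zero =>
    intro T1 T2 h1 h2 hk
    have hd : T1 \ T2 = ∅ := (Set.ncard_eq_zero (Set.toFinite _)).1 hk
    have hsub : T1 ⊆ T2 := by
      intro p hp
      by_contra h
      exact (Set.eq_empty_iff_forall_notMem.1 hd p) ⟨hp, h⟩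
    rw [tournament_eq_of_subset h1 h2 hsub]
  | succ k ihk =>
    intro T1 T2 h1 h2 hk
    have hnonempty : (T1 \ T2).Nonempty :=
      Set.nonempty_of_ncard_ne_zero (by omega)
    obtain ⟨⟨u, w⟩, huw1, huw2⟩ := hnonempty
    have hne : u ≠ w := tourn_ne h1 huw1
    have hflip := flip_parity h1 huw1
    have hT1' := flip_tournament h1 huw1
    have hdiff : insert (w, u) (T1 \ {(u, w)}) \ T2 = (T1 \ T2) \ {(u, w)} := by
      have hwu2 : (w, u) ∈ T2 := tourn_mem_of_not h2 hne huw2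
      ext ⟨a, b⟩
      simp only [Set.mem_insert_iff, Set.mem_diff, Set.mem_singleton_iff, Prod.mk.injEq]
      constructor
      · rintro ⟨hm | ⟨hm1, hm2⟩, hnm⟩
        · obtain ⟨rfl, rfl⟩ := hm
          exact absurd hwu2 hnm
        · exact ⟨⟨hm1, hnm⟩, hm2⟩
      · rintro ⟨⟨hm1, hm2⟩, hm3⟩
        exact ⟨Or.inr ⟨hm1, hm3⟩, hm2⟩
    have hkd : (insert (w, u) (T1 \ {(u, w)}) \ T2).ncard = k := by
      rw [hdiff, Set.ncard_diff_singleton_of_mem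
        (show ((u, w) : V × V) ∈ T1 \ T2 from ⟨huw1, huw2⟩), hk]
      omega
    have := ihk (insert (w, u) (T1 \ {(u, w)})) T2 hT1' h2 hkd
    omega

lemma chain'_exists_pred {α : Type*} {R : α → α → Prop} :
    ∀ l : List α, l.IsChain R → ∀ b ∈ l.tail, ∃ a, R a b
  | [], _, b, hb => absurd hb (List.not_mem_nil)
  | [a], _, b, hb => absurd hb (List.not_mem_nil)
  | a :: c :: t, hc, b, hb => by
      rw [List.isChain_cons_cons] at hc
      rcases List.mem_cons.1 hb with rfl | hb'
      · exact ⟨a, hc.1⟩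
      · exact chain'_exists_pred (c :: t) hc.2 b hb'

lemma dominant (v : V) (A : Set (V × V)) (hdom : ∀ w : V, w ≠ v → (v, w) ∈ A)
    (hnin : ∀ w : V, (w, v) ∉ A) :
    (HSet A).ncard =
      (HSet {q : {a : V // a ≠ v} × {a : V // a ≠ v} | ((q.1 : V), (q.2 : V)) ∈ A}).ncard := by
  set Asub : Set ({a : V // a ≠ v} × {a : V // a ≠ v}) :=
    {q | ((q.1 : V), (q.2 : V)) ∈ A} with hAsub
  set g : List {a : V // a ≠ v} → List V := fun w' => v :: w'.map Subtype.val with hg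
  have hinj : Function.Injective g := by
    intro w1 w2 h
    simp only [hg, List.cons.injEq, true_and] at h
    exact List.map_injective_iff.2 Subtype.val_injective h
  have himg : g '' HSet Asub = HSet A := by
    ext w
    constructor
    · rintro ⟨w', ⟨hnd, hcom, hch⟩, rfl⟩
      have hvm : v ∉ w'.map Subtype.val := by
        rw [List.mem_map]
        rintro ⟨a, -, ha⟩
        exact a.2 ha
      refine ⟨?_, ?_, ?_⟩
      · rw [List.nodup_cons]
        exact ⟨hvm, hnd.map Subtype.val_injective⟩
      · intro z
        rcases eq_or_ne z v with rfl | hz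
        · exact List.mem_cons_self
        · exact List.mem_cons_of_mem _ (List.mem_map_of_mem (f := Subtype.val) (hcom ⟨z, hz⟩))
      · rw [List.isChain_cons]
        constructor
        · intro q hq
          have hqm : q ∈ w'.map Subtype.val := List.mem_of_mem_head? hq
          have hqv : q ≠ v := fun h => hvm (h ▸ hqm)
          exact hdom q hqv
        · rw [List.isChain_map]
          exact hch
    · rintro ⟨hnd, hcom, hch⟩
      match w, hnd, hcom, hch with
      | [], hnd, hcom, hch => exact absurd (hcom v) (List.not_mem_nil)
      | a :: t, hnd, hcom, hch =>
        have hav : a = v := by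
          by_contra hav
          have hvt : v ∈ t := by
            rcases List.mem_cons.1 (hcom v) with h | h
            · exact absurd h.symm hav
            · exact h
          obtain ⟨p, hp⟩ := chain'_exists_pred (a :: t) hch v hvt
          exact hnin p hp
        subst hav
        rw [List.nodup_cons] at hnd
        have hne : ∀ z ∈ t, z ≠ a := fun z hz h => hnd.1 (h ▸ hz)
        refine ⟨t.pmap Subtype.mk hne, ?_, ?_⟩
        · have hmap : (t.pmap Subtype.mk hne).map Subtype.val = t := by
            rw [List.map_pmap]
            exact (List.pmap_eq_map (f := id) hne).trans (List.map_id _)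
          refine ⟨?_, ?_, ?_⟩
          · exact List.Nodup.of_map Subtype.val (by rw [hmap]; exact hnd.2)
          · rintro ⟨z, hz⟩
            have hzt : z ∈ t := by
              rcases List.mem_cons.1 (hcom z) with h | h
              · exact absurd h hz
              · exact h
            have : z ∈ (t.pmap Subtype.mk hne).map Subtype.val := by rw [hmap]; exact hzt
            rw [List.mem_map] at this
            obtain ⟨b, hb, hbz⟩ := this
            exact (Subtype.ext hbz : b = ⟨z, hz⟩) ▸ hb
          · have : t.IsChain (fun a b => (a, b) ∈ A) := (List.isChain_cons.1 hch).2
            rw [← hmap, List.isChain_map] at this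
            exact this
        · simp only [hg]
          congr 1
          rw [List.map_pmap]
          exact (List.pmap_eq_map (f := id) hne).trans (List.map_id _)
  rw [← himg, Set.ncard_image_of_injective _ hinj]


lemma hset_card_zero (h : Fintype.card V = 0) (A : Set (V × V)) :
    HSet A = {([] : List V)} := by
  have hemp : IsEmpty V := Fintype.card_eq_zero_iff.1 h
  ext w
  constructor
  · rintro ⟨-, -, -⟩
    match w with
    | [] => rfl
    | a :: t => exact (hemp.false a).elim
  · rintro rfl
    exact ⟨List.nodup_nil, fun z => (hemp.false z).elim, List.isChain_nil⟩

lemma main_parity : ∀ (n : ℕ) (W : Type) [Fintype W] [DecidableEq W] (A : Set (W × W)),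
    Fintype.card W = n → IsTournament A → (HSet A).ncard % 2 = 1 := by
  intro n
  induction n with
  | zero =>
    intro W _ _ A hn _
    rw [hset_card_zero hn A, Set.ncard_singleton]
  | succ m ihm =>
    intro W _ _ A hn hA
    have hpos : Nonempty W := Fintype.card_pos_iff.1 (by omega)
    obtain ⟨v⟩ := hpos
    set Astar : Set (W × W) :=
      {p | (p.1 = v ∧ p.2 ≠ v) ∨ (p.1 ≠ v ∧ p.2 ≠ v ∧ p ∈ A)} with hAstar
    have hdom : ∀ w : W, w ≠ v → (v, w) ∈ Astar := fun w hw => Or.inl ⟨rfl, hw⟩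
    have hnin : ∀ w : W, (w, v) ∉ Astar := by
      rintro w (⟨-, h⟩ | ⟨-, h, -⟩) <;> exact h rfl
    have hAstarT : IsTournament Astar := by
      constructor
      · rintro a (⟨h1, h2⟩ | ⟨-, -, h3⟩)
        · exact h2 h1
        · exact hA.1 a h3
      · intro a b hab
        rcases eq_or_ne a v with hav | hav
        · have hbv : b ≠ v := fun h => hab (hav.trans h.symm)
          left
          refine ⟨Or.inl ⟨hav, hbv⟩, ?_⟩
          rintro (⟨-, h⟩ | ⟨-, h, -⟩) <;> exact h hav
        · rcases eq_or_ne b v with hbv | hbv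
          · right
            refine ⟨Or.inl ⟨hbv, hav⟩, ?_⟩
            rintro (⟨h3, -⟩ | ⟨-, h3, -⟩)
            · exact hav h3
            · exact h3 hbv
          · rcases hA.2 a b hab with ⟨h1, h2⟩ | ⟨h1, h2⟩
            · left
              refine ⟨Or.inr ⟨hav, hbv, h1⟩, ?_⟩
              rintro (⟨h3, -⟩ | ⟨-, -, h3⟩)
              · exact hbv h3
              · exact h2 h3
            · right
              refine ⟨Or.inr ⟨hbv, hav, h1⟩, ?_⟩
              rintro (⟨h3, -⟩ | ⟨-, -, h3⟩)
              · exact hav h3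
              · exact h2 h3
    have hsubT : IsTournament
        {q : {a : W // a ≠ v} × {a : W // a ≠ v} | ((q.1 : W), (q.2 : W)) ∈ Astar} := by
      constructor
      · intro a h
        exact hAstarT.1 (a : W) h
      · intro a b hab
        exact hAstarT.2 (a : W) (b : W) (fun h => hab (Subtype.ext h))
    have hcard' : Fintype.card {a : W // a ≠ v} = m := by
      have := Fintype.card_subtype_compl (fun a : W => a = v)
      simp only [Fintype.card_subtype_eq] at this
      have h2 : Fintype.card {a : W // a ≠ v} = Fintype.card W - 1 := this
      omega
    have hsub := ihm {a : W // a ≠ v}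
      {q : {a : W // a ≠ v} × {a : W // a ≠ v} | ((q.1 : W), (q.2 : W)) ∈ Astar}
      hcard' hsubT
    have hdomeq := dominant v Astar hdom hnin
    have hchain := parity_chain ((A \ Astar).ncard) A Astar hA hAstarT rfl
    omega

end RedeiProof


/-- **Redei's theorem.** The number of Hamiltonian paths of a tournament is odd. -/
theorem redei_theorem (V : Type) [Fintype V] [DecidableEq V]
    (A : Set (V × V)) (hD : IsTournament A) :
    Odd (hampCount V A) := by
  have h := RedeiProof.main_parity (Fintype.card V) V A rfl hD
  rw [Nat.odd_iff]
  exact h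
end
end

section
/- (Berge's theorem) Let D=(V,A) be a digraph, and let D̄ := (V,(V×V)∖A) be its complement. Then the number of Hamiltonian paths of D̄ is congruent to the number of Hamiltonian paths of D modulo 2. Equivalently: the number of V-listings (w_1,…,w_n) with (w_i,w_{i+1}) ∉ A for all i ∈ {1,…,n−1} is congruent, modulo 2, to the number of V-listings (w_1,…,w_n) with (w_i,w_{i+1}) ∈ A for all i ∈ {1,…,n−1}. -/
open scoped Classical

noncomputable section

namespace BergeAux

variable {V : Type}

def blocksOk (A : Set (V × V)) (L : List (List V)) : Prop :=
  ∀ b ∈ L, b ≠ [] ∧ b.Chain' (fun a c => (a, c) ∈ A)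

def step (A : Set (V × V)) : List (List V) → List (List V)
  | [] => []
  | [] :: t => [] :: t
  | (x :: y :: r) :: t => [x] :: (y :: r) :: t
  | [x] :: [] => [x] :: []
  | [x] :: [] :: t => [x] :: [] :: t
  | [x] :: (z :: b) :: t => if (x, z) ∈ A then (x :: z :: b) :: t else [x] :: step A ((z :: b) :: t)

theorem flatten_step (A : Set (V × V)) : ∀ L, (step A L).flatten = L.flatten := by
  intro L
  induction L using step.induct A with
  | case1 => rfl
  | case2 => rfl
  | case3 x y r t => simp [step]
  | case4 => rfl
  | case5 => rfl
  | case6 x z b t h => simp [step, h]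
  | case7 x z b t h ih => simp [step, h, ih]

theorem blocksOk_step (A : Set (V × V)) : ∀ L, blocksOk A L → blocksOk A (step A L) := by
  intro L
  induction L using step.induct A with
  | case1 => exact fun h => h
  | case2 => exact fun h => h
  | case3 x y r t =>
      intro h
      have h1 := h (x :: y :: r) (by simp)
      intro b hb
      simp only [step, List.mem_cons] at hb
      rcases hb with rfl | rfl | hb
      · exact ⟨by simp, List.isChain_singleton _⟩
      · exact ⟨by simp, (List.isChain_cons_cons.1 h1.2).2⟩
      · exact h b (by simp [hb])
  | case4 => exact fun h => h
  | case5 => exact fun h => h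
  | case6 x z b t h =>
      intro hok
      have h2 := hok (z :: b) (by simp)
      intro c hc
      simp only [step, h, if_true, List.mem_cons] at hc
      rcases hc with rfl | hc
      · exact ⟨by simp, List.isChain_cons_cons.2 ⟨h, h2.2⟩⟩
      · exact hok c (by simp [hc])
  | case7 x z b t h ih =>
      intro hok
      have hok' : blocksOk A ((z :: b) :: t) := fun c hc => hok c (by simp [List.mem_cons] at hc ⊢; tauto)
      intro c hc
      simp only [step, h, if_false, List.mem_cons] at hc
      rcases hc with rfl | hc
      · exact ⟨by simp, List.isChain_singleton _⟩
      · exact ih hok' c hc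

theorem exists_head (A : Set (V × V)) (M : List (List V)) (hok : blocksOk A M)
    (hne : M.flatten ≠ []) : ∃ z c t', M = (z :: c) :: t' ∧ M.flatten = z :: (c ++ t'.flatten) := by
  cases M with
  | nil => simp at hne
  | cons b t =>
      obtain ⟨hb, -⟩ := hok b (by simp)
      cases b with
      | nil => simp at hb
      | cons z c => exact ⟨z, c, t, rfl, by simp⟩

theorem step_invol (A : Set (V × V)) : ∀ L, blocksOk A L → step A (step A L) = L := by
  intro L
  induction L using step.induct A with
  | case1 => intro _; rfl
  | case2 t => intro h; exact absurd rfl (h [] (by simp)).1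
  | case3 x y r t =>
      intro hok
      have h1 := hok (x :: y :: r) (by simp)
      have hxy : (x, y) ∈ A := (List.isChain_cons_cons.1 h1.2).1
      simp [step, hxy]
  | case4 => intro _; rfl
  | case5 x t => intro h; exact absurd rfl (h [] (by simp)).1
  | case6 x z b t h =>
      intro hok
      simp [step, h]
  | case7 x z b t h ih =>
      intro hok
      have hok' : blocksOk A ((z :: b) :: t) := fun c hc => hok c (by simp [List.mem_cons] at hc ⊢; tauto)
      have hM : blocksOk A (step A ((z :: b) :: t)) := blocksOk_step A _ hok'
      have hfl : (step A ((z :: b) :: t)).flatten = z :: (b ++ t.flatten) := by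
        rw [flatten_step]; simp
      obtain ⟨z', c, t', hM1, hM2⟩ := exists_head A _ hM (by rw [hfl]; simp)
      rw [hfl] at hM2
      obtain ⟨rfl, -⟩ := List.cons_eq_cons.mp hM2
      have : step A ([x] :: (z :: b) :: t) = [x] :: step A ((z :: b) :: t) := by
        simp [step, h]
      rw [this, hM1]
      show step A ([x] :: (z :: c) :: t') = _
      simp only [step, h, if_false]
      rw [← hM1, ih hok']

end BergeAux

namespace BergeAux
variable {V : Type}

def Rno (A : Set (V × V)) (b c : List V) : Prop := ∀ x ∈ b, ∀ y ∈ c, (x, y) ∉ A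

theorem step_fixed (A : Set (V × V)) : ∀ L, blocksOk A L →
    (step A L = L ↔ (∀ b ∈ L, ∃ x, b = [x]) ∧ L.Chain' (Rno A)) := by
  intro L
  induction L using step.induct A with
  | case1 => intro _; simp [step, List.Chain', List.isChain_nil]
  | case2 t => intro h; exact absurd rfl (h [] (by simp)).1
  | case3 x y r t =>
      intro hok
      constructor
      · intro heq
        exfalso
        have := (List.cons_eq_cons.mp (heq : [x] :: (y :: r) :: t = (x :: y :: r) :: t)).1
        simp at this
      · rintro ⟨hs, -⟩
        obtain ⟨x', hx'⟩ := hs (x :: y :: r) (by simp)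
        simp at hx'
  | case4 x =>
      intro _
      simp only [step, true_iff]
      exact ⟨by rintro b hb; simp at hb; exact ⟨x, hb⟩, List.isChain_singleton _⟩
  | case5 x t => intro h; exact absurd rfl (h [] (by simp)).1
  | case6 x z b t h =>
      intro hok
      constructor
      · intro heq
        exfalso
        have := congrArg List.length heq
        simp [step, h] at this
      · rintro ⟨-, hc⟩
        exact absurd (((List.isChain_cons_cons.mp hc).1 x (by simp) z (by simp))) (by simpa using h)
  | case7 x z b t h ih =>
      intro hok
      have hok' : blocksOk A ((z :: b) :: t) := fun c hc => hok c (by simp [List.mem_cons] at hc ⊢; tauto)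
      have hstep : step A ([x] :: (z :: b) :: t) = [x] :: step A ((z :: b) :: t) := by
        simp [step, h]
      rw [hstep]
      constructor
      · intro heq
        have hM : step A ((z :: b) :: t) = (z :: b) :: t := (List.cons_eq_cons.mp heq).2
        obtain ⟨hs, hc⟩ := (ih hok').mp hM
        obtain ⟨z', hz'⟩ := hs (z :: b) (by simp)
        obtain ⟨rfl, rfl⟩ : z' = z ∧ b = [] := by
          constructor
          · exact (List.cons_eq_cons.mp hz'.symm).1
          · exact (List.cons_eq_cons.mp hz'.symm).2.symm
        refine ⟨?_, ?_⟩
        · rintro c hc'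
          rcases List.mem_cons.mp hc' with rfl | hc'
          · exact ⟨x, rfl⟩
          · exact hs c hc'
        · refine List.isChain_cons_cons.mpr ⟨?_, hc⟩
          rintro x' hx' y hy
          simp at hx' hy
          subst hx'; subst hy
          exact h
      · rintro ⟨hs, hc⟩
        have hM : (∀ c ∈ (z :: b) :: t, ∃ x', c = [x']) ∧ ((z :: b) :: t).Chain' (Rno A) := by
          exact ⟨fun c hc' => hs c (by simp [hc']), (List.isChain_cons_cons.mp hc).2⟩
        rw [(ih hok').mpr hM]
end BergeAux

namespace BergeAux
variable {V : Type}

def XSet (A : Set (V × V)) : Set (List (List V)) :=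
  {L | blocksOk A L ∧ L.flatten.Nodup ∧ ∀ v, v ∈ L.flatten}

def hampSet (A : Set (V × V)) : Set (List V) :=
  {w | w.Nodup ∧ (∀ x : V, x ∈ w) ∧ w.Chain' fun a b => (a, b) ∈ A}

def swap2 : List (List V) → List (List V)
  | a :: b :: t => b :: a :: t
  | l => l

theorem swap2_invol (L : List (List V)) : swap2 (swap2 L) = L := by
  match L with
  | [] => rfl
  | [a] => rfl
  | a :: b :: t => rfl

theorem flatten_swap2_perm (L : List (List V)) : (swap2 L).flatten.Perm L.flatten := by
  match L with
  | [] => rfl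
  | [a] => rfl
  | a :: b :: t =>
      show (b ++ (a ++ t.flatten)).Perm (a ++ (b ++ t.flatten))
      rw [← List.append_assoc, ← List.append_assoc]
      exact (List.perm_append_comm).append_right _

theorem swap2_mem_XSet {A : Set (V × V)} {L : List (List V)} (h : L ∈ XSet A) :
    swap2 L ∈ XSet A := by
  obtain ⟨hok, hnd, hcov⟩ := h
  refine ⟨?_, ?_, ?_⟩
  · intro b hb
    refine hok b ?_
    match L with
    | [] => exact hb
    | [a] => exact hb
    | a :: c :: t => simp only [swap2, List.mem_cons] at hb ⊢; tauto
  · exact (flatten_swap2_perm L).symm.nodup hnd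
  · intro v; exact ((flatten_swap2_perm L).mem_iff).mpr (hcov v)

theorem step_mem_XSet {A : Set (V × V)} {L : List (List V)} (h : L ∈ XSet A) :
    step A L ∈ XSet A := by
  obtain ⟨hok, hnd, hcov⟩ := h
  exact ⟨blocksOk_step A L hok, by rw [flatten_step]; exact hnd,
    fun v => by rw [flatten_step]; exact hcov v⟩

theorem swap2_fixed {A : Set (V × V)} {L : List (List V)} (h : L ∈ XSet A) :
    swap2 L = L ↔ L.length ≤ 1 := by
  obtain ⟨hok, hnd, -⟩ := h
  match L with
  | [] => simp [swap2]
  | [a] => simp [swap2]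
  | a :: b :: t =>
      simp only [swap2, List.length_cons]
      constructor
      · intro heq
        exfalso
        have hba : b = a := (List.cons_eq_cons.mp heq).1
        obtain ⟨hane, -⟩ := hok a (by simp)
        rw [hba] at hnd
        obtain ⟨x, r, rfl⟩ : ∃ x r, a = x :: r := by
          cases a with
          | nil => exact absurd rfl hane
          | cons x r => exact ⟨x, r, rfl⟩
        have : ¬ ((x :: r) ++ ((x :: r) ++ t.flatten)).Nodup := by
          intro hh
          rw [List.nodup_append] at hh
          exact hh.2.2 x (show x ∈ x :: r by simp) x (by simp) rfl
        exact this (by simpa using hnd)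
      · intro hlen; omega
end BergeAux

namespace BergeAux
variable {V : Type}

def chop : List V → List ℕ → List (List V)
  | _, [] => []
  | w, k :: ks => w.take k :: chop (w.drop k) ks

theorem chop_flatten : ∀ L : List (List V), chop L.flatten (L.map List.length) = L := by
  intro L
  induction L with
  | nil => rfl
  | cons a t ih =>
      show chop (a ++ t.flatten) (a.length :: t.map List.length) = a :: t
      rw [chop]
      rw [List.take_left, List.drop_left, ih]

theorem length_le_flatten_length (L : List (List V)) (h : ∀ b ∈ L, b ≠ []) :
    L.length ≤ L.flatten.length := by
  induction L with
  | nil => simp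
  | cons a t ih =>
      have ha := h a (by simp)
      have : 1 ≤ a.length := by
        cases a with
        | nil => exact absurd rfl ha
        | cons x r => simp
      have := ih (fun b hb => h b (by simp [hb]))
      simp only [List.length_cons, List.flatten_cons, List.length_append]
      omega

theorem finite_natlists (n : ℕ) : {ls : List ℕ | ls.length ≤ n ∧ ∀ k ∈ ls, k ≤ n}.Finite := by
  have h1 : {l : List (Fin (n + 1)) | l.length ≤ n}.Finite := List.finite_length_le _ n
  refine Set.Finite.subset (h1.image (List.map Fin.val)) ?_
  rintro ls ⟨hlen, hbd⟩
  refine ⟨ls.attach.map (fun x => (⟨x.1, Nat.lt_succ_of_le (hbd x.1 x.2)⟩ : Fin (n + 1))), by simpa using hlen, ?_⟩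
  rw [List.map_map]
  simp

theorem XSet_finite [Fintype V] (A : Set (V × V)) : (XSet A).Finite := by
  classical
  set n := Fintype.card V with hn
  have h1 : {w : List V | w.length ≤ n}.Finite := List.finite_length_le _ n
  have h2 := (h1.prod (finite_natlists n)).image (fun p => chop p.1 p.2)
  refine Set.Finite.subset h2 ?_
  rintro L ⟨hok, hnd, -⟩
  refine ⟨(L.flatten, L.map List.length), ⟨?_, ?_, ?_⟩, chop_flatten L⟩
  · exact hnd.length_le_card
  · rw [List.length_map]
    exact le_trans (length_le_flatten_length L (fun b hb => (hok b hb).1)) hnd.length_le_card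
  · intro k hk
    simp only [List.mem_map] at hk
    obtain ⟨b, hb, rfl⟩ := hk
    exact le_trans ((List.sublist_flatten_of_mem hb).length_le) hnd.length_le_card

theorem ncard_modEq_fixed {α : Type} {s : Set α} (hs : s.Finite) (f : α → α)
    (hmem : ∀ a ∈ s, f a ∈ s) (hinv : ∀ a ∈ s, f (f a) = a) :
    s.ncard ≡ {a ∈ s | f a = a}.ncard [MOD 2] := by
  classical
  have hsep : {a ∈ s | f a = a} = ↑(hs.toFinset.filter (fun a => f a = a)) := by
    ext a; simp [Set.mem_sep_iff]
  rw [hsep, Set.ncard_coe_finset, Set.ncard_eq_toFinset_card s hs]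
  set t := hs.toFinset with ht
  have hsplit := Finset.card_filter_add_card_filter_not
    (s := t) (p := fun a => f a = a)
  have hsum : ∑ _x ∈ t.filter (fun a => ¬ f a = a), (1 : ZMod 2) = 0 := by
    refine Finset.sum_involution (fun a _ => f a) (fun a _ => by decide) ?_ ?_ ?_
    · intro a ha _
      simp only [Finset.mem_filter, ht, Set.Finite.mem_toFinset] at ha
      exact fun hfa => ha.2 hfa
    · intro a ha
      simp only [Finset.mem_filter, ht, Set.Finite.mem_toFinset] at ha ⊢
      exact ⟨hmem a ha.1, by rw [hinv a ha.1]; exact fun h => ha.2 h.symm⟩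
    · intro a ha
      simp only [Finset.mem_filter, ht, Set.Finite.mem_toFinset] at ha
      exact hinv a ha.1
  have hcast : (((t.filter (fun a => ¬ f a = a)).card : ℕ) : ZMod 2) = 0 := by
    rw [← hsum]; simp
  have hdvd : 2 ∣ (t.filter (fun a => ¬ f a = a)).card :=
    (ZMod.natCast_eq_zero_iff _ 2).mp hcast
  obtain ⟨r, hr⟩ := hdvd
  unfold Nat.ModEq
  omega

end BergeAux

namespace BergeAux
variable {V : Type}

theorem flatten_sing (w : List V) : (w.map (fun v => [v])).flatten = w := by
  induction w with
  | nil => rfl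
  | cons a t ih => simp [ih]

theorem sing_eq (L : List (List V)) (h : ∀ b ∈ L, ∃ x, b = [x]) :
    L = L.flatten.map (fun v => [v]) := by
  induction L with
  | nil => rfl
  | cons b t ih =>
      obtain ⟨x, rfl⟩ := h b (by simp)
      have := ih (fun c hc => h c (by simp [hc]))
      simp only [List.flatten_cons, List.singleton_append, List.map_cons]
      exact congrArg _ this

def embA (w : List V) : List (List V) := if w = [] then [] else [w]

theorem fixedA_eq (A : Set (V × V)) :
    {L ∈ XSet A | swap2 L = L} = embA '' hampSet A := by
  ext L
  constructor
  · rintro ⟨hX, hfix⟩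
    obtain ⟨hok, hnd, hcov⟩ := hX
    have hlen := (swap2_fixed ⟨hok, hnd, hcov⟩).mp hfix
    match L, hlen with
    | [], _ =>
        refine ⟨[], ⟨by simp, fun x => by simpa using hcov x, List.isChain_nil⟩, by simp [embA]⟩
    | [b], _ =>
        obtain ⟨hbne, hbch⟩ := hok b (by simp)
        refine ⟨b, ⟨by simpa using hnd, fun x => by simpa using hcov x, hbch⟩, by simp [embA, hbne]⟩
  · rintro ⟨w, ⟨hnd, hcov, hch⟩, rfl⟩
    by_cases hw : w = []
    · subst hw
      simp only [embA, if_pos rfl]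
      exact ⟨⟨fun b hb => absurd hb (by simp), by simp, fun v => by simpa using hcov v⟩, rfl⟩
    · simp only [embA, if_neg hw]
      refine ⟨⟨?_, by simpa using hnd, fun v => by simpa using hcov v⟩, rfl⟩
      rintro b hb
      simp only [List.mem_singleton] at hb
      subst hb
      exact ⟨hw, hch⟩

theorem fixedAc_eq (A : Set (V × V)) :
    {L ∈ XSet A | step A L = L} = (fun w : List V => w.map (fun v => [v])) '' hampSet Aᶜ := by
  ext L
  constructor
  · rintro ⟨hX, hfix⟩
    obtain ⟨hok, hnd, hcov⟩ := hX
    obtain ⟨hs, hc⟩ := (step_fixed A L hok).mp hfix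
    refine ⟨L.flatten, ⟨hnd, hcov, ?_⟩, (sing_eq L hs).symm⟩
    have hL : L = L.flatten.map (fun v => [v]) := sing_eq L hs
    rw [hL, List.Chain', List.isChain_map] at hc
    refine List.IsChain.imp ?_ hc
    intro a b hab
    exact hab a (by simp) b (by simp)
  · rintro ⟨w, ⟨hnd, hcov, hch⟩, rfl⟩
    have hok : blocksOk A (w.map fun v => [v]) := by
      rintro b hb
      simp only [List.mem_map] at hb
      obtain ⟨v, -, rfl⟩ := hb
      exact ⟨by simp, List.isChain_singleton _⟩
    refine ⟨⟨hok, by rw [flatten_sing]; exact hnd, fun v => by rw [flatten_sing]; exact hcov v⟩, ?_⟩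
    rw [step_fixed A _ hok]
    constructor
    · rintro b hb
      simp only [List.mem_map] at hb
      obtain ⟨v, -, rfl⟩ := hb
      exact ⟨v, rfl⟩
    · rw [List.Chain', List.isChain_map]
      refine List.IsChain.imp ?_ hch
      intro a b hab
      intro x hx y hy
      simp at hx hy
      subst hx; subst hy
      exact hab

end BergeAux

namespace BergeAux

theorem berge_aux (V : Type) [Fintype V] [DecidableEq V] (A : Set (V × V)) :
    (hampSet Aᶜ).ncard ≡ (hampSet A).ncard [MOD 2] := by
  have hinj1 : Set.InjOn (embA (V := V)) (hampSet A) := by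
    rintro w1 - w2 - h
    by_cases h1 : w1 = [] <;> by_cases h2 : w2 = [] <;> simp [embA, h1, h2] at h ⊢ <;> tauto
  have hinj2 : Set.InjOn (fun w : List V => w.map (fun v => [v])) (hampSet Aᶜ) := by
    rintro w1 - w2 - h
    exact List.map_injective_iff.mpr (fun a b hab => by simpa using hab) h
  calc (hampSet Aᶜ).ncard
      = {L ∈ XSet A | step A L = L}.ncard := by
        rw [fixedAc_eq A]; exact (Set.ncard_image_of_injOn hinj2).symm
    _ ≡ (XSet A).ncard [MOD 2] :=
        (ncard_modEq_fixed (XSet_finite A) (step A) (fun L hL => step_mem_XSet hL)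
          (fun L hL => step_invol A L hL.1)).symm
    _ ≡ {L ∈ XSet A | swap2 L = L}.ncard [MOD 2] :=
        ncard_modEq_fixed (XSet_finite A) swap2 (fun L hL => swap2_mem_XSet hL)
          (fun L _ => swap2_invol L)
    _ = (hampSet A).ncard := by
        rw [fixedA_eq A]; exact Set.ncard_image_of_injOn hinj1

end BergeAux


/-- **Berge's theorem.** The number of Hamiltonian paths of the complement `D̄` is
congruent to the number of Hamiltonian paths of `D` modulo `2`. -/
theorem berge_theorem (V : Type) [Fintype V] [DecidableEq V] (A : Set (V × V)) :
    hampCount V Aᶜ ≡ hampCount V A [MOD 2] := by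
  exact BergeAux.berge_aux V A
end
end

section
/- Let D=(V,A) be a digraph. For each permutation σ of V set φ(σ) := ∑ (ℓ(γ)−1), summed over those cycles γ of σ that are D-cycles. Then the number of Hamiltonian paths of the complement D̄ equals ∑_{σ ∈ S_V(D,D̄)} (−1)^{φ(σ)}. -/
open scoped Classical

noncomputable section

set_option linter.unusedSectionVars false
section RBauxSec
namespace RBaux

open Equiv Finset

variable {V : Type} [Fintype V] [DecidableEq V] {σ τ : Equiv.Perm V} {O W T : Finset V}
  {u v x y : V}

def orbit (σ : Equiv.Perm V) (v : V) : Finset V :=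
  Finset.univ.filter fun u => σ.SameCycle v u

lemma mem_orbit_iff : u ∈ orbit σ v ↔ σ.SameCycle v u := by
  simp [orbit]

lemma self_mem_orbit (σ : Equiv.Perm V) (v : V) : v ∈ orbit σ v :=
  mem_orbit_iff.2 (Equiv.Perm.SameCycle.refl σ v)

lemma orbit_mem_cyclesOf (σ : Equiv.Perm V) (v : V) : orbit σ v ∈ cyclesOf σ := by
  simp only [cyclesOf, Finset.mem_image]
  exact ⟨v, Finset.mem_univ v, rfl⟩

lemma mem_cyclesOf_iff : O ∈ cyclesOf σ ↔ ∃ v, O = orbit σ v := by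
  simp only [cyclesOf, Finset.mem_image, orbit]
  constructor
  · rintro ⟨v, -, rfl⟩; exact ⟨v, rfl⟩
  · rintro ⟨v, rfl⟩; exact ⟨v, Finset.mem_univ v, rfl⟩

lemma orbit_eq_of_mem (h : u ∈ orbit σ v) : orbit σ v = orbit σ u := by
  rw [mem_orbit_iff] at h
  ext w
  simp only [mem_orbit_iff]
  exact ⟨fun h' => h.symm.trans h', fun h' => h.trans h'⟩

lemma cyclesOf_nonempty (h : O ∈ cyclesOf σ) : O.Nonempty := by
  obtain ⟨v, rfl⟩ := mem_cyclesOf_iff.1 h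
  exact ⟨v, self_mem_orbit σ v⟩

lemma apply_mem_of_mem (hO : O ∈ cyclesOf σ) (hu : u ∈ O) : σ u ∈ O := by
  obtain ⟨v, rfl⟩ := mem_cyclesOf_iff.1 hO
  rw [mem_orbit_iff] at hu ⊢
  exact hu.trans (Equiv.Perm.sameCycle_apply_right.2 (Equiv.Perm.SameCycle.refl σ u))

lemma mem_iff_apply_mem (hO : O ∈ cyclesOf σ) : u ∈ O ↔ σ u ∈ O := by
  obtain ⟨v, rfl⟩ := mem_cyclesOf_iff.1 hO
  simp only [mem_orbit_iff]
  rw [Equiv.Perm.sameCycle_apply_right]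

lemma cyclesOf_eq_of_mem (hO : O ∈ cyclesOf σ) (hu : u ∈ O) : O = orbit σ u := by
  obtain ⟨v, rfl⟩ := mem_cyclesOf_iff.1 hO
  exact orbit_eq_of_mem hu

lemma cyclesOf_disjoint (hO : O ∈ cyclesOf σ) (hO' : W ∈ cyclesOf σ) (hne : O ≠ W) :
    Disjoint O W := by
  rw [Finset.disjoint_left]
  intro a haO haW
  exact hne ((cyclesOf_eq_of_mem hO haO).trans (cyclesOf_eq_of_mem hO' haW).symm)

lemma pow_mem_of_closed (h : ∀ u ∈ W, σ u ∈ W) (hv : v ∈ W) (k : ℕ) : (σ ^ k) v ∈ W := by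
  induction k with
  | zero => simpa using hv
  | succ k ih =>
    rw [pow_succ', Equiv.Perm.mul_apply]
    exact h _ ih

lemma exists_pow_of_mem_orbit (h : u ∈ orbit σ v) : ∃ k : ℕ, (σ ^ k) v = u := by
  rw [mem_orbit_iff] at h
  obtain ⟨i, -, hi⟩ := h.exists_pow_eq'
  exact ⟨i, hi⟩

/-- A cycle of `σ'` contained in a set where `σ'` agrees with `σ` is a cycle of `σ`. -/
lemma mem_cyclesOf_of_agree (hO : O ∈ cyclesOf τ) (hagree : ∀ u ∈ O, τ u = σ u) :
    O ∈ cyclesOf σ := by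
  obtain ⟨v, hv⟩ := cyclesOf_nonempty hO
  have hclosedτ : ∀ u ∈ O, τ u ∈ O := fun u hu => apply_mem_of_mem hO hu
  have hclosedσ : ∀ u ∈ O, σ u ∈ O := fun u hu => (hagree u hu) ▸ hclosedτ u hu
  have hpow : ∀ k : ℕ, (τ ^ k) v = (σ ^ k) v ∧ (τ ^ k) v ∈ O := by
    intro k
    induction k with
    | zero => simpa using hv
    | succ k ih =>
      constructor
      · rw [pow_succ', pow_succ', Equiv.Perm.mul_apply, Equiv.Perm.mul_apply, hagree _ ih.2, ih.1]
      · rw [pow_succ', Equiv.Perm.mul_apply]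
        exact hclosedτ _ ih.2
  have : O = orbit σ v := by
    apply Finset.Subset.antisymm
    · intro u hu
      have hsc : τ.SameCycle v u := by
        have := cyclesOf_eq_of_mem hO hv
        rw [this] at hu
        exact mem_orbit_iff.1 hu
      obtain ⟨i, -, hi⟩ := hsc.exists_pow_eq'
      rw [mem_orbit_iff]
      exact ⟨(i : ℤ), by rw [zpow_natCast, ← (hpow i).1, hi]⟩
    · intro u hu
      obtain ⟨k, hk⟩ := exists_pow_of_mem_orbit hu
      exact hk ▸ pow_mem_of_closed hclosedσ hv k
  rw [this]
  exact orbit_mem_cyclesOf σ v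


lemma orbit_eq_singleton_of_fixed (h : σ v = v) : orbit σ v = {v} := by
  ext u
  simp only [mem_orbit_iff, Finset.mem_singleton]
  constructor
  · rintro ⟨i, hi⟩
    rw [Equiv.Perm.zpow_apply_eq_self_of_apply_eq_self h] at hi
    exact hi.symm
  · rintro rfl; exact Equiv.Perm.SameCycle.refl σ _

lemma orbit_eq_support_cycleOf (h : v ∈ σ.support) :
    orbit σ v = (σ.cycleOf v).support := by
  ext u
  rw [mem_orbit_iff, Equiv.Perm.mem_support_cycleOf_iff]
  exact ⟨fun h' => ⟨h', h⟩, fun h' => h'.1⟩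

lemma nontrivial_cyclesOf_eq :
    (cyclesOf σ).filter (fun O => 1 < O.card) = σ.cycleFactorsFinset.image Equiv.Perm.support := by
  ext O
  simp only [Finset.mem_filter, Finset.mem_image]
  constructor
  · rintro ⟨hO, hcard⟩
    obtain ⟨v, rfl⟩ := mem_cyclesOf_iff.1 hO
    have hv : v ∈ σ.support := by
      by_contra hfix
      rw [Equiv.Perm.notMem_support] at hfix
      rw [orbit_eq_singleton_of_fixed hfix] at hcard
      simp at hcard
    refine ⟨σ.cycleOf v, Equiv.Perm.cycleOf_mem_cycleFactorsFinset_iff.2 hv, ?_⟩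
    exact (orbit_eq_support_cycleOf hv).symm
  · rintro ⟨c, hc, rfl⟩
    have hcyc := (Equiv.Perm.mem_cycleFactorsFinset_iff.1 hc).1
    obtain ⟨v, hv⟩ := hcyc.nonempty_support
    have hvσ : v ∈ σ.support := by
      rw [Equiv.Perm.mem_support]
      rw [← (Equiv.Perm.mem_cycleFactorsFinset_iff.1 hc).2 v hv]
      exact Equiv.Perm.mem_support.1 hv
    have : c = σ.cycleOf v := Equiv.Perm.cycle_is_cycleOf hv hc
    rw [this, ← orbit_eq_support_cycleOf hvσ]
    refine ⟨orbit_mem_cyclesOf σ v, ?_⟩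
    calc 1 < 2 := one_lt_two
    _ ≤ c.support.card := hcyc.two_le_card_support
    _ = _ := by rw [this, orbit_eq_support_cycleOf hvσ]

lemma support_injOn_factors :
    Set.InjOn Equiv.Perm.support (σ.cycleFactorsFinset : Set (Equiv.Perm V)) := by
  intro c hc d hd h
  simp only [Finset.coe_mem, Finset.mem_coe] at hc hd
  obtain ⟨v, hv⟩ := (Equiv.Perm.mem_cycleFactorsFinset_iff.1 hc).1.nonempty_support
  have hvd : v ∈ d.support := by rw [← h]; exact hv
  rw [Equiv.Perm.cycle_is_cycleOf hv hc, Equiv.Perm.cycle_is_cycleOf hvd hd]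

/-- The key sign identity. -/
lemma prod_neg_one_pow_card_sub_one (σ : Equiv.Perm V) :
    (∏ O ∈ cyclesOf σ, (-1 : ℤ) ^ (O.card - 1)) = Equiv.Perm.sign σ := by
  have h1 : (∏ O ∈ cyclesOf σ, (-1 : ℤ) ^ (O.card - 1)) =
      ∏ O ∈ (cyclesOf σ).filter (fun O => 1 < O.card), (-1 : ℤ) ^ (O.card - 1) := by
    rw [eq_comm]
    apply Finset.prod_subset (Finset.filter_subset _ _)
    intro O hO hO'
    simp only [Finset.mem_filter, hO, true_and, not_lt] at hO'
    have : O.card = 1 := le_antisymm hO' (Finset.card_pos.2 (cyclesOf_nonempty hO))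
    simp [this]
  rw [h1, nontrivial_cyclesOf_eq, Finset.prod_image (fun c hc d hd h =>
    support_injOn_factors (by simpa using hc) (by simpa using hd) h)]
  have h2 : ∀ c ∈ σ.cycleFactorsFinset,
      (-1 : ℤ) ^ (c.support.card - 1) = -(-1 : ℤ) ^ (c.support.card) := by
    intro c hc
    have h2le := (Equiv.Perm.mem_cycleFactorsFinset_iff.1 hc).1.two_le_card_support
    obtain ⟨m, hm⟩ : ∃ m, c.support.card = m + 1 :=
      ⟨c.support.card - 1, by omega⟩
    rw [hm]
    simp [pow_succ]
  rw [Finset.prod_congr rfl h2]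
  have h3 : ∀ c ∈ σ.cycleFactorsFinset, -(-1 : ℤ) ^ (c.support.card) =
      (-1) * (-1 : ℤ) ^ (c.support.card) := by intro c hc; ring
  rw [Finset.prod_congr rfl h3, Finset.prod_mul_distrib, Finset.prod_const,
    Finset.prod_pow_eq_pow_sum]
  have hsum : ∑ c ∈ σ.cycleFactorsFinset, c.support.card = σ.cycleType.sum := by
    rw [Equiv.Perm.cycleType_def]
    rfl
  have hcard : σ.cycleFactorsFinset.card = Multiset.card σ.cycleType := by
    rw [Equiv.Perm.cycleType_def, Multiset.card_map]
    rfl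
  rw [hsum, hcard, Equiv.Perm.sign_of_cycleType]
  push_cast
  ring


section Main

variable (A : Set (V × V))

/-- indicator of the complement -/
def bf (A : Set (V × V)) (u v : V) : ℤ := if (u, v) ∈ A then 0 else 1

def W1 (A : Set (V × V)) (σ : Equiv.Perm V) : Finset V :=
  Finset.univ.filter fun u => (u, σ u) ∈ A

def Inv (σ : Equiv.Perm V) (W : Finset V) : Prop := ∀ u, u ∈ W ↔ σ u ∈ W

def sgnW (σ : Equiv.Perm V) (W : Finset V) : ℤ :=
  ∏ O ∈ (cyclesOf σ).filter (fun O => O ⊆ W), (-1 : ℤ) ^ (O.card - 1)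

def NoCyc (σ : Equiv.Perm V) (T : Finset V) : Prop := ∀ O ∈ cyclesOf σ, ¬ O ⊆ T

def w2 (p : Equiv.Perm V × Finset V × Finset V) : ℤ :=
  sgnW p.1 p.2.1 * (-1) ^ p.2.2.card * ∏ u ∈ p.2.2 ∪ p.2.1ᶜ, bf A u (p.1 u)

def w3 (p : Equiv.Perm V × Finset V) : ℤ :=
  sgnW p.1 Finset.univ * (-1) ^ p.2.card * ∏ u ∈ p.2, bf A u (p.1 u)

def s2Set : Finset (Equiv.Perm V × Finset V × Finset V) :=
  Finset.univ.filter fun p => Inv p.1 p.2.1 ∧ p.2.2 ⊆ p.2.1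

def s3Set : Finset (Equiv.Perm V × Finset V) :=
  Finset.univ.filter fun p => NoCyc p.1 p.2

def nonlast (n : ℕ) : Finset (Fin n) := Finset.univ.filter fun i => (i : ℕ) + 1 < n

def Pw (A : Set (V × V)) (e : Fin (Fintype.card V) ≃ V) : ℤ :=
  ∏ i ∈ nonlast (Fintype.card V), bf A (e i) (e (finRotate (Fintype.card V) i))

lemma inv_cycle_cases {σ : Equiv.Perm V} {W O : Finset V} (hInv : Inv σ W)
    (hO : O ∈ cyclesOf σ) : O ⊆ W ∨ ∀ u ∈ O, u ∉ W := by
  by_cases h : ∃ v ∈ O, v ∈ W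
  · left
    obtain ⟨v, hvO, hvW⟩ := h
    intro u hu
    rw [cyclesOf_eq_of_mem hO hvO] at hu
    obtain ⟨k, hk⟩ := exists_pow_of_mem_orbit hu
    exact hk ▸ pow_mem_of_closed (fun w hw => (hInv w).1 hw) hvW k
  · right
    push_neg at h
    exact h

lemma step1 :
    (∑ σ ∈ Finset.univ.filter (fun σ : Equiv.Perm V => memSVDDbar A σ),
        (-1 : ℤ) ^ phi A σ) =
    ∑ σ : Equiv.Perm V, ∑ W ∈ Finset.univ.filter (fun W => Inv σ W),
      sgnW σ W * ((∏ u ∈ W, (1 - bf A u (σ u))) * ∏ u ∈ Wᶜ, bf A u (σ u)) := by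
  have key : ∀ σ : Equiv.Perm V,
      (∑ W ∈ Finset.univ.filter (fun W => Inv σ W),
        sgnW σ W * ((∏ u ∈ W, (1 - bf A u (σ u))) * ∏ u ∈ Wᶜ, bf A u (σ u))) =
      if memSVDDbar A σ then (-1 : ℤ) ^ phi A σ else 0 := by
    intro σ
    have hmemW1 : ∀ u, u ∈ W1 A σ ↔ (u, σ u) ∈ A := by
      intro u; simp [W1]
    have hInvIff : Inv σ (W1 A σ) ↔ memSVDDbar A σ := by
      constructor
      · intro hInv O hO
        rcases inv_cycle_cases hInv hO with h | h
        · exact Or.inl fun u hu => (hmemW1 u).1 (h hu)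
        · exact Or.inr fun u hu hA => h u hu ((hmemW1 u).2 hA)
      · intro hS u
        rcases hS (orbit σ u) (orbit_mem_cyclesOf σ u) with h | h
        · constructor
          · intro _
            exact (hmemW1 _).2 (h (σ u) (apply_mem_of_mem (orbit_mem_cyclesOf σ u)
              (self_mem_orbit σ u)))
          · intro _
            exact (hmemW1 u).2 (h u (self_mem_orbit σ u))
        · constructor
          · intro hu
            exact absurd ((hmemW1 u).1 hu) (h u (self_mem_orbit σ u))
          · intro hu
            exact absurd ((hmemW1 _).1 hu) (h (σ u) (apply_mem_of_mem
              (orbit_mem_cyclesOf σ u) (self_mem_orbit σ u)))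
    have hzero : ∀ W, W ≠ W1 A σ →
        ((∏ u ∈ W, (1 - bf A u (σ u))) * ∏ u ∈ Wᶜ, bf A u (σ u)) = 0 := by
      intro W hW
      by_cases hsub : W ⊆ W1 A σ
      · have : ∃ u ∈ W1 A σ, u ∉ W := by
          by_contra h
          push_neg at h
          exact hW (Finset.Subset.antisymm hsub h)
        obtain ⟨u, hu1, huW⟩ := this
        have : bf A u (σ u) = 0 := by
          simp only [bf, if_pos ((hmemW1 u).1 hu1)]
        rw [Finset.prod_eq_zero (Finset.mem_compl.2 huW) this, mul_zero]
      · obtain ⟨u, huW, hu1⟩ := not_subset.1 hsub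
        have : (1 : ℤ) - bf A u (σ u) = 0 := by
          simp only [bf, if_neg (fun h => hu1 ((hmemW1 u).2 h))]
          ring
        rw [Finset.prod_eq_zero huW this, zero_mul]
    have hone : ((∏ u ∈ W1 A σ, (1 - bf A u (σ u))) * ∏ u ∈ (W1 A σ)ᶜ, bf A u (σ u)) = 1 := by
      have e1 : (∏ u ∈ W1 A σ, (1 - bf A u (σ u))) = 1 := by
        apply Finset.prod_eq_one
        intro u hu
        simp [bf, (hmemW1 u).1 hu]
      have e2 : (∏ u ∈ (W1 A σ)ᶜ, bf A u (σ u)) = 1 := by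
        apply Finset.prod_eq_one
        intro u hu
        have : (u, σ u) ∉ A := fun h => (Finset.mem_compl.1 hu) ((hmemW1 u).2 h)
        simp [bf, this]
      rw [e1, e2, mul_one]
    have hsgn : sgnW σ (W1 A σ) = (-1 : ℤ) ^ phi A σ := by
      unfold sgnW phi
      rw [Finset.prod_pow_eq_pow_sum]
      congr 1
      apply Finset.sum_congr _ (fun _ _ => rfl)
      apply Finset.filter_congr
      intro O hO
      constructor
      · intro h; exact fun u hu => (hmemW1 u).1 (h hu)
      · intro h u hu; exact (hmemW1 u).2 (h u hu)
    by_cases hmem : memSVDDbar A σ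
    · rw [if_pos hmem]
      rw [Finset.sum_eq_single_of_mem (W1 A σ)
        (Finset.mem_filter.2 ⟨Finset.mem_univ _, hInvIff.2 hmem⟩)
        (fun W hW hne => by rw [hzero W hne, mul_zero])]
      rw [hone, mul_one, hsgn]
    · rw [if_neg hmem]
      apply Finset.sum_eq_zero
      intro W hW
      have hne : W ≠ W1 A σ := by
        rintro rfl
        exact hmem (hInvIff.1 (Finset.mem_filter.1 hW).2)
      rw [hzero W hne, mul_zero]
  rw [eq_comm, Finset.sum_congr rfl (fun σ _ => key σ), ← Finset.sum_filter]

lemma step2 :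
    (∑ σ : Equiv.Perm V, ∑ W ∈ Finset.univ.filter (fun W => Inv σ W),
      sgnW σ W * ((∏ u ∈ W, (1 - bf A u (σ u))) * ∏ u ∈ Wᶜ, bf A u (σ u))) =
    ∑ p ∈ (s2Set : Finset (Equiv.Perm V × Finset V × Finset V)), w2 A p := by
  have hps : ∀ W : Finset V, Finset.univ.filter (fun T => T ⊆ W) = W.powerset := by
    intro W; ext T; simp [Finset.mem_powerset]
  have prodneg : ∀ (T : Finset V) (f : V → ℤ),
      (∏ u ∈ T, (-f u)) = (-1) ^ T.card * ∏ u ∈ T, f u := by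
    intro T f
    rw [Finset.prod_congr rfl (fun u _ => (neg_one_mul (f u)).symm),
      Finset.prod_mul_distrib, Finset.prod_const]
  rw [eq_comm]
  unfold s2Set
  rw [Finset.sum_filter, Fintype.sum_prod_type]
  apply Finset.sum_congr rfl
  intro σ _
  rw [Fintype.sum_prod_type]
  have inner : ∀ W : Finset V,
      (∑ T : Finset V, if Inv σ W ∧ T ⊆ W then w2 A (σ, W, T) else 0) =
      if Inv σ W then
        sgnW σ W * ((∏ u ∈ W, (1 - bf A u (σ u))) * ∏ u ∈ Wᶜ, bf A u (σ u)) else 0 := by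
    intro W
    by_cases hI : Inv σ W
    · rw [if_pos hI]
      have hcong : ∀ T : Finset V, (if Inv σ W ∧ T ⊆ W then w2 A (σ, W, T) else 0) =
          if T ⊆ W then w2 A (σ, W, T) else 0 := by
        intro T; by_cases hT : T ⊆ W <;> simp [hI, hT]
      rw [Finset.sum_congr rfl (fun T _ => hcong T), ← Finset.sum_filter, hps]
      have hexp : (∏ u ∈ W, ((1 : ℤ) - bf A u (σ u))) =
          ∑ T ∈ W.powerset, (-1 : ℤ) ^ T.card * ∏ u ∈ T, bf A u (σ u) := by
        rw [Finset.prod_congr rfl (fun u (_ : u ∈ W) =>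
          (by ring : (1 : ℤ) - bf A u (σ u) = -bf A u (σ u) + 1)), Finset.prod_add]
        apply Finset.sum_congr rfl
        intro T hT
        rw [Finset.prod_const_one, mul_one, prodneg]
      rw [hexp, Finset.sum_mul, Finset.mul_sum]
      apply Finset.sum_congr rfl
      intro T hT
      have hTW : T ⊆ W := Finset.mem_powerset.1 hT
      have hdisj : Disjoint T Wᶜ := by
        rw [Finset.disjoint_left]
        intro a ha hac
        exact (Finset.mem_compl.1 hac) (hTW ha)
      unfold w2
      rw [Finset.prod_union hdisj]
      ring
    · rw [if_neg hI]
      apply Finset.sum_eq_zero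
      intro T _
      rw [if_neg (fun h => hI h.1)]
  rw [Finset.sum_congr rfl (fun W _ => inner W), ← Finset.sum_filter]


def pickO (σ : Equiv.Perm V) (U : Finset V) : Finset V :=
  if h : ((U.filter fun v => orbit σ v ⊆ U).image (Fintype.equivFin V)).Nonempty then
    orbit σ ((Fintype.equivFin V).symm (Finset.min' _ h))
  else ∅

lemma pickO_spec {σ : Equiv.Perm V} {U : Finset V} (h : ∃ O ∈ cyclesOf σ, O ⊆ U) :
    pickO σ U ∈ cyclesOf σ ∧ pickO σ U ⊆ U := by
  obtain ⟨O, hO, hOU⟩ := h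
  obtain ⟨v, hv⟩ := cyclesOf_nonempty hO
  have hvfil : v ∈ U.filter (fun w => orbit σ w ⊆ U) := by
    refine Finset.mem_filter.2 ⟨hOU hv, ?_⟩
    rw [← cyclesOf_eq_of_mem hO hv]
    exact hOU
  have hne : ((U.filter fun w => orbit σ w ⊆ U).image (Fintype.equivFin V)).Nonempty :=
    ⟨_, Finset.mem_image_of_mem _ hvfil⟩
  rw [pickO, dif_pos hne]
  have hm := Finset.min'_mem _ hne
  obtain ⟨w, hw, hwm⟩ := Finset.mem_image.1 hm
  have hww : (Fintype.equivFin V).symm (Finset.min' _ hne) = w := by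
    rw [← hwm]; simp
  rw [hww]
  exact ⟨orbit_mem_cyclesOf _ _, (Finset.mem_filter.1 hw).2⟩

lemma Inv_sdiff {σ : Equiv.Perm V} {W O : Finset V} (hI : Inv σ W) (hO : O ∈ cyclesOf σ) :
    Inv σ (W \ O) := by
  intro u
  rw [Finset.mem_sdiff, Finset.mem_sdiff]
  exact and_congr (hI u) (not_congr (mem_iff_apply_mem hO))

lemma Inv_union {σ : Equiv.Perm V} {W O : Finset V} (hI : Inv σ W) (hO : O ∈ cyclesOf σ) :
    Inv σ (W ∪ O) := by
  intro u
  rw [Finset.mem_union, Finset.mem_union]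
  exact or_congr (hI u) (mem_iff_apply_mem hO)

lemma sdiff_union_compl_eq {W T O : Finset V} (hOT : O ⊆ T) :
    T \ O ∪ (W \ O)ᶜ = T ∪ Wᶜ := by
  ext u
  simp only [Finset.mem_union, Finset.mem_sdiff, Finset.mem_compl, Finset.mem_sdiff, not_and,
    not_not]
  constructor
  · rintro (⟨h1, _⟩ | h)
    · exact Or.inl h1
    · by_cases huO : u ∈ O
      · exact Or.inl (hOT huO)
      · exact Or.inr (fun hW => absurd (h hW) huO)
  · rintro (h | h)
    · by_cases huO : u ∈ O
      · exact Or.inr (fun hW => huO)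
      · exact Or.inl ⟨h, huO⟩
    · exact Or.inr (fun hW => absurd hW h)

lemma union_union_compl_eq {W T O : Finset V} (hOW : ∀ u ∈ O, u ∉ W) :
    (T ∪ O) ∪ (W ∪ O)ᶜ = T ∪ Wᶜ := by
  ext u
  simp only [Finset.mem_union, Finset.mem_compl, Finset.mem_union, not_or]
  constructor
  · rintro ((h | h) | ⟨h1, h2⟩)
    · exact Or.inl h
    · exact Or.inr (hOW u h)
    · exact Or.inr h1
  · rintro (h | h)
    · exact Or.inl (Or.inl h)
    · by_cases huO : u ∈ O
      · exact Or.inl (Or.inr huO)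
      · exact Or.inr ⟨h, huO⟩

lemma w2_remove {σ : Equiv.Perm V} {W T O : Finset V} (hO : O ∈ cyclesOf σ) (hOW : O ⊆ W)
    (hOT : O ⊆ T) (hTW : T ⊆ W) :
    w2 A (σ, W, T) = - w2 A (σ, W \ O, T \ O) := by
  have hOne : O.Nonempty := cyclesOf_nonempty hO
  have hfil : (cyclesOf σ).filter (fun O' => O' ⊆ W \ O) =
      ((cyclesOf σ).filter (fun O' => O' ⊆ W)).erase O := by
    ext O'
    simp only [Finset.mem_filter, Finset.mem_erase]
    constructor
    · rintro ⟨h1, h2⟩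
      refine ⟨?_, h1, h2.trans Finset.sdiff_subset⟩
      rintro rfl
      obtain ⟨v, hv⟩ := hOne
      exact (Finset.mem_sdiff.1 (h2 hv)).2 hv
    · rintro ⟨hne, h1, h2⟩
      refine ⟨h1, fun u hu => Finset.mem_sdiff.2 ⟨h2 hu, fun huO => ?_⟩⟩
      exact (Finset.disjoint_left.1 (cyclesOf_disjoint h1 hO hne)) hu huO
  have hsgn : sgnW σ W = (-1 : ℤ) ^ (O.card - 1) * sgnW σ (W \ O) := by
    unfold sgnW
    have hmpe := Finset.mul_prod_erase ((cyclesOf σ).filter (fun O' => O' ⊆ W))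
      (fun O' => (-1 : ℤ) ^ (O'.card - 1)) (Finset.mem_filter.2 ⟨hO, hOW⟩)
    rw [hfil, ← hmpe]
  have hcard : T.card = (T \ O).card + O.card :=
    (Finset.card_sdiff_add_card_eq_card hOT).symm
  obtain ⟨m, hm⟩ : ∃ m, O.card = m + 1 :=
    ⟨O.card - 1, by have := Finset.card_pos.2 hOne; omega⟩
  have h2 : (-1 : ℤ) ^ m * (-1 : ℤ) ^ (m + 1) = -1 := by
    rw [pow_succ, ← mul_assoc, ← mul_pow]
    norm_num
  unfold w2
  simp only
  rw [hsgn, hcard, pow_add, ← sdiff_union_compl_eq (W := W) hOT, hm, Nat.add_sub_cancel]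
  linear_combination ((-1 : ℤ) ^ (T \ O).card * sgnW σ (W \ O) *
    ∏ u ∈ T \ O ∪ (W \ O)ᶜ, bf A u (σ u)) * h2

lemma step3 :
    (∑ p ∈ (s2Set : Finset (Equiv.Perm V × Finset V × Finset V)), w2 A p) =
    ∑ p ∈ (s3Set : Finset (Equiv.Perm V × Finset V)), w3 A p := by
  classical
  set Bad : Equiv.Perm V × Finset V × Finset V → Prop :=
    fun p => ∃ O ∈ cyclesOf p.1, O ⊆ p.2.2 ∪ p.2.1ᶜ with hBad
  rw [← Finset.sum_filter_add_sum_filter_not (s2Set) Bad (w2 A)]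
  have hbadzero : (∑ p ∈ (s2Set : Finset (Equiv.Perm V × Finset V × Finset V)).filter Bad,
      w2 A p) = 0 := by
    have hmemdata : ∀ p ∈ (s2Set : Finset (Equiv.Perm V × Finset V × Finset V)).filter Bad,
        Inv p.1 p.2.1 ∧ p.2.2 ⊆ p.2.1 ∧
        pickO p.1 (p.2.2 ∪ p.2.1ᶜ) ∈ cyclesOf p.1 ∧
        pickO p.1 (p.2.2 ∪ p.2.1ᶜ) ⊆ p.2.2 ∪ p.2.1ᶜ := by
      intro p hp
      obtain ⟨hp1, hp2⟩ := Finset.mem_filter.1 hp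
      obtain ⟨hInv, hsub⟩ := (Finset.mem_filter.1 hp1).2
      obtain ⟨hc1, hc2⟩ := pickO_spec hp2
      exact ⟨hInv, hsub, hc1, hc2⟩
    apply Finset.sum_involution (g := fun p _ =>
      if pickO p.1 (p.2.2 ∪ p.2.1ᶜ) ⊆ p.2.1 then
        (p.1, p.2.1 \ pickO p.1 (p.2.2 ∪ p.2.1ᶜ), p.2.2 \ pickO p.1 (p.2.2 ∪ p.2.1ᶜ))
      else (p.1, p.2.1 ∪ pickO p.1 (p.2.2 ∪ p.2.1ᶜ), p.2.2 ∪ pickO p.1 (p.2.2 ∪ p.2.1ᶜ)))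
    · -- sum of weights is zero
      rintro ⟨σ, W, T⟩ hp
      obtain ⟨hInv, hsub, hO, hOU⟩ := hmemdata _ hp
      simp only at hO hOU ⊢
      set O := pickO σ (T ∪ Wᶜ) with hOdef
      obtain ⟨v, hv⟩ := cyclesOf_nonempty hO
      by_cases hc : O ⊆ W
      · rw [if_pos hc]
        have hOT : O ⊆ T := by
          intro u hu
          rcases Finset.mem_union.1 (hOU hu) with h | h
          · exact h
          · exact absurd (hc hu) (Finset.mem_compl.1 h)
        rw [w2_remove A hO hc hOT hsub]
        ring
      · rw [if_neg hc]
        rcases inv_cycle_cases hInv hO with h | hout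
        · exact absurd h hc
        have hTWO : T ∪ O ⊆ W ∪ O := Finset.union_subset_union_left hsub
        have := w2_remove A (W := W ∪ O) (T := T ∪ O) hO
          Finset.subset_union_right Finset.subset_union_right hTWO
        have hWd : (W ∪ O) \ O = W := by
          rw [Finset.union_sdiff_cancel_right ?_]
          rw [Finset.disjoint_right]
          exact fun a ha => hout a ha
        have hTd : (T ∪ O) \ O = T := by
          rw [Finset.union_sdiff_cancel_right ?_]
          rw [Finset.disjoint_right]
          exact fun a ha hT => hout a ha (hsub hT)
        rw [hWd, hTd] at this
        rw [this]
        ring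
    · -- g p ≠ p
      rintro ⟨σ, W, T⟩ hp -
      obtain ⟨hInv, hsub, hO, hOU⟩ := hmemdata _ hp
      simp only at hO hOU ⊢
      set O := pickO σ (T ∪ Wᶜ) with hOdef
      obtain ⟨v, hv⟩ := cyclesOf_nonempty hO
      by_cases hc : O ⊆ W
      · rw [if_pos hc]
        intro h
        have h21 := congrArg (fun p => p.2.1) h
        simp only at h21
        have hvW : v ∈ W := hc hv
        rw [← h21] at hvW
        exact (Finset.mem_sdiff.1 hvW).2 hv
      · rw [if_neg hc]
        intro h
        have h21 := congrArg (fun p => p.2.1) h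
        simp only at h21
        have : O ⊆ W ∪ O := Finset.subset_union_right
        rw [h21] at this
        exact hc this
    · -- involutive
      rintro ⟨σ, W, T⟩ hp
      obtain ⟨hInv, hsub, hO, hOU⟩ := hmemdata _ hp
      simp only at hO hOU ⊢
      set O := pickO σ (T ∪ Wᶜ) with hOdef
      obtain ⟨v, hv⟩ := cyclesOf_nonempty hO
      by_cases hc : O ⊆ W
      · have hOT : O ⊆ T := by
          intro u hu
          rcases Finset.mem_union.1 (hOU hu) with h | h
          · exact h
          · exact absurd (hc hu) (Finset.mem_compl.1 h)
        rw [if_pos hc]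
        have hU' : T \ O ∪ (W \ O)ᶜ = T ∪ Wᶜ := sdiff_union_compl_eq hOT
        dsimp only
        rw [hU', ← hOdef]
        have hnotsub : ¬ O ⊆ W \ O := fun h => (Finset.mem_sdiff.1 (h hv)).2 hv
        rw [if_neg hnotsub]
        ext u : 2
        · rfl
        · simp only [Finset.sdiff_union_self_eq_union]
          rw [Finset.union_eq_left.2 hc]
        · simp only [Finset.sdiff_union_self_eq_union]
          rw [Finset.union_eq_left.2 hOT]
      · rw [if_neg hc]
        rcases inv_cycle_cases hInv hO with h | hout
        · exact absurd h hc
        have hU' : (T ∪ O) ∪ (W ∪ O)ᶜ = T ∪ Wᶜ := union_union_compl_eq hout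
        dsimp only
        rw [hU', ← hOdef]
        rw [if_pos (Finset.subset_union_right)]
        have hWd : (W ∪ O) \ O = W := by
          rw [Finset.union_sdiff_cancel_right ?_]
          rw [Finset.disjoint_right]
          exact fun a ha => hout a ha
        have hTd : (T ∪ O) \ O = T := by
          rw [Finset.union_sdiff_cancel_right ?_]
          rw [Finset.disjoint_right]
          exact fun a ha hT => hout a ha (hsub hT)
        rw [hWd, hTd]
    · -- g maps into the set
      rintro ⟨σ, W, T⟩ hp
      obtain ⟨hInv, hsub, hO, hOU⟩ := hmemdata _ hp
      simp only at hO hOU ⊢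
      set O := pickO σ (T ∪ Wᶜ) with hOdef
      obtain ⟨v, hv⟩ := cyclesOf_nonempty hO
      by_cases hc : O ⊆ W
      · rw [if_pos hc]
        have hOT : O ⊆ T := by
          intro u hu
          rcases Finset.mem_union.1 (hOU hu) with h | h
          · exact h
          · exact absurd (hc hu) (Finset.mem_compl.1 h)
        refine Finset.mem_filter.2 ⟨?_, ?_⟩
        · exact Finset.mem_filter.2 ⟨Finset.mem_univ _,
            Inv_sdiff hInv hO, Finset.sdiff_subset_sdiff hsub (le_refl _)⟩
        show ∃ O' ∈ cyclesOf σ, O' ⊆ T \ O ∪ (W \ O)ᶜ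
        exact ⟨O, hO, fun u hu => Finset.mem_union_right _
          (Finset.mem_compl.2 (fun hw => (Finset.mem_sdiff.1 hw).2 hu))⟩
      · rw [if_neg hc]
        refine Finset.mem_filter.2 ⟨?_, ?_⟩
        · exact Finset.mem_filter.2 ⟨Finset.mem_univ _,
            Inv_union hInv hO, Finset.union_subset_union_left hsub⟩
        show ∃ O' ∈ cyclesOf σ, O' ⊆ (T ∪ O) ∪ (W ∪ O)ᶜ
        exact ⟨O, hO, fun u hu => Finset.mem_union_left _ (Finset.mem_union_right _ hu)⟩
  have hgood : (∑ p ∈ (s2Set : Finset (Equiv.Perm V × Finset V × Finset V)).filter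
      (fun p => ¬ Bad p), w2 A p) = ∑ p ∈ (s3Set : Finset (Equiv.Perm V × Finset V)), w3 A p := by
    apply Finset.sum_nbij' (i := fun p => (p.1, p.2.2)) (j := fun q => (q.1, Finset.univ, q.2))
    · intro p hp
      obtain ⟨hp1, hp2⟩ := Finset.mem_filter.1 hp
      obtain ⟨hInv, hsub⟩ := Finset.mem_filter.1 hp1 |>.2
      refine Finset.mem_filter.2 ⟨Finset.mem_univ _, ?_⟩
      intro O hO hOT
      exact hp2 ⟨O, hO, hOT.trans Finset.subset_union_left⟩
    · intro q hq
      have hq2 := (Finset.mem_filter.1 hq).2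
      refine Finset.mem_filter.2 ⟨Finset.mem_filter.2 ⟨Finset.mem_univ _,
        fun u => by simp, Finset.subset_univ _⟩, ?_⟩
      rintro ⟨O, hO, hOsub⟩
      rw [Finset.compl_univ, Finset.union_empty] at hOsub
      exact hq2 O hO hOsub
    · intro p hp
      obtain ⟨hp1, hp2⟩ := Finset.mem_filter.1 hp
      obtain ⟨hInv, hsub⟩ := Finset.mem_filter.1 hp1 |>.2
      have hWuniv : p.2.1 = Finset.univ := by
        by_contra h
        obtain ⟨v, hv⟩ : ∃ v, v ∉ p.2.1 := by
          by_contra h'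
          push_neg at h'
          exact h (Finset.eq_univ_iff_forall.2 h')
        rcases inv_cycle_cases hInv (orbit_mem_cyclesOf p.1 v) with hc | hc
        · exact hv (hc (self_mem_orbit p.1 v))
        · refine hp2 ⟨orbit p.1 v, orbit_mem_cyclesOf p.1 v, fun u hu => ?_⟩
          exact Finset.mem_union_right _ (Finset.mem_compl.2 (hc u hu))
      ext <;> simp [hWuniv]
    · intro q hq; rfl
    · intro p hp
      obtain ⟨hp1, hp2⟩ := Finset.mem_filter.1 hp
      have hWuniv : p.2.1 = Finset.univ := by
        obtain ⟨hInv, hsub⟩ := Finset.mem_filter.1 hp1 |>.2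
        by_contra h
        obtain ⟨v, hv⟩ : ∃ v, v ∉ p.2.1 := by
          by_contra h'
          push_neg at h'
          exact h (Finset.eq_univ_iff_forall.2 h')
        rcases inv_cycle_cases hInv (orbit_mem_cyclesOf p.1 v) with hc | hc
        · exact hv (hc (self_mem_orbit p.1 v))
        · refine hp2 ⟨orbit p.1 v, orbit_mem_cyclesOf p.1 v, fun u hu => ?_⟩
          exact Finset.mem_union_right _ (Finset.mem_compl.2 (hc u hu))
      unfold w2 w3
      rw [hWuniv]
      simp
  rw [hbadzero, hgood, zero_add]


def swp (T : Finset V) : Equiv.Perm V :=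
  if h : 2 ≤ ((Tᶜ).image (Fintype.equivFin V)).card then
    Equiv.swap
      ((Fintype.equivFin V).symm (((Tᶜ).image (Fintype.equivFin V)).min'
        (Finset.card_pos.1 (lt_of_lt_of_le two_pos h))))
      ((Fintype.equivFin V).symm ((((Tᶜ).image (Fintype.equivFin V)).erase
          (((Tᶜ).image (Fintype.equivFin V)).min'
            (Finset.card_pos.1 (lt_of_lt_of_le two_pos h)))).min'
        (Finset.card_pos.1 (by
          rw [Finset.card_erase_of_mem (Finset.min'_mem _ _)]
          omega))))
  else 1

lemma swp_invol (T : Finset V) : swp T * swp T = 1 := by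
  unfold swp
  split
  · exact Equiv.swap_mul_self _ _
  · exact one_mul 1

lemma swp_spec {T : Finset V} (h : 2 ≤ (Tᶜ).card) :
    ∃ x y, x ∈ Tᶜ ∧ y ∈ Tᶜ ∧ x ≠ y ∧ swp T = Equiv.swap x y := by
  have hcard : ((Tᶜ).image (Fintype.equivFin V)).card = (Tᶜ).card :=
    Finset.card_image_of_injective _ (Fintype.equivFin V).injective
  have h' : 2 ≤ ((Tᶜ).image (Fintype.equivFin V)).card := by rw [hcard]; exact h
  set c := (Tᶜ).image (Fintype.equivFin V) with hc
  set x' := c.min' (Finset.card_pos.1 (lt_of_lt_of_le two_pos h')) with hx'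
  have hx'mem : x' ∈ c := Finset.min'_mem _ _
  have hyne : ((c.erase x')).Nonempty := Finset.card_pos.1 (by
    rw [Finset.card_erase_of_mem hx'mem]; omega)
  set y' := (c.erase x').min' hyne with hy'
  have hy'mem : y' ∈ c.erase x' := Finset.min'_mem _ _
  have hmemV : ∀ z' ∈ c, (Fintype.equivFin V).symm z' ∈ Tᶜ := by
    intro z' hz'
    obtain ⟨a, ha, rfl⟩ := Finset.mem_image.1 hz'
    simpa using ha
  refine ⟨(Fintype.equivFin V).symm x', (Fintype.equivFin V).symm y',
    hmemV _ hx'mem, hmemV _ (Finset.mem_of_mem_erase hy'mem), ?_, ?_⟩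
  · intro hxy
    have : x' = y' := by
      have := congrArg (Fintype.equivFin V) hxy
      simpa using this
    exact (Finset.mem_erase.1 hy'mem).1 this.symm
  · unfold swp
    rw [dif_pos h']

lemma sgnW_univ (σ : Equiv.Perm V) :
    sgnW σ Finset.univ = ((Equiv.Perm.sign σ : ℤˣ) : ℤ) := by
  unfold sgnW
  rw [Finset.filter_true_of_mem (fun O _ => Finset.subset_univ O)]
  exact prod_neg_one_pow_card_sub_one σ

lemma step4 :
    (∑ p ∈ (s3Set : Finset (Equiv.Perm V × Finset V)), w3 A p) =
    ∑ p ∈ (s3Set : Finset (Equiv.Perm V × Finset V)).filter (fun p => (p.2ᶜ).card ≤ 1),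
      w3 A p := by
  rw [← Finset.sum_filter_add_sum_filter_not (s3Set : Finset (Equiv.Perm V × Finset V))
    (fun p => (p.2ᶜ).card ≤ 1) (w3 A)]
  have hzero : (∑ p ∈ (s3Set : Finset (Equiv.Perm V × Finset V)).filter
      (fun p => ¬((p.2ᶜ).card ≤ 1)), w3 A p) = 0 := by
    have hmemdata : ∀ p ∈ (s3Set : Finset (Equiv.Perm V × Finset V)).filter
        (fun p => ¬((p.2ᶜ).card ≤ 1)), NoCyc p.1 p.2 ∧ 2 ≤ ((p.2)ᶜ).card := by
      intro p hp
      obtain ⟨hp1, hp2⟩ := Finset.mem_filter.1 hp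
      exact ⟨(Finset.mem_filter.1 hp1).2, by omega⟩
    apply Finset.sum_involution (g := fun p _ => (p.1 * swp p.2, p.2))
    · -- weights cancel
      rintro ⟨σ, T⟩ hp
      obtain ⟨hNC, hcard⟩ := hmemdata _ hp
      obtain ⟨x, y, hx, hy, hxy, hswp⟩ := swp_spec hcard
      simp only at hswp ⊢
      unfold w3
      simp only
      have hprod : (∏ u ∈ T, bf A u ((σ * swp T) u)) = ∏ u ∈ T, bf A u (σ u) := by
        apply Finset.prod_congr rfl
        intro u hu
        have hux : u ≠ x := fun h => (Finset.mem_compl.1 hx) (h ▸ hu)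
        have huy : u ≠ y := fun h => (Finset.mem_compl.1 hy) (h ▸ hu)
        rw [hswp, Equiv.Perm.mul_apply, Equiv.swap_apply_of_ne_of_ne hux huy]
      have hsgn : sgnW (σ * swp T) Finset.univ = - sgnW σ Finset.univ := by
        rw [sgnW_univ, sgnW_univ, hswp, Equiv.Perm.sign_mul,
          Equiv.Perm.sign_swap hxy]
        simp
      rw [hprod, hsgn]
      ring
    · -- g p ≠ p
      rintro ⟨σ, T⟩ hp -
      obtain ⟨hNC, hcard⟩ := hmemdata _ hp
      obtain ⟨x, y, hx, hy, hxy, hswp⟩ := swp_spec hcard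
      intro h
      have h1 : σ * swp T = σ := congrArg Prod.fst h
      have : swp T = 1 := mul_left_cancel (a := σ) (by rw [mul_one]; exact h1)
      rw [hswp] at this
      exact hxy (Equiv.swap_eq_one_iff.1 this)
    · -- involutive
      rintro ⟨σ, T⟩ hp
      have h1 : σ * swp T * swp T = σ := by rw [mul_assoc, swp_invol, mul_one]
      simp [h1]
    · -- g maps into the set
      rintro ⟨σ, T⟩ hp
      obtain ⟨hNC, hcard⟩ := hmemdata _ hp
      refine Finset.mem_filter.2 ⟨Finset.mem_filter.2 ⟨Finset.mem_univ _, ?_⟩, by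
        simp at hcard ⊢; omega⟩
      intro O hO hOT
      refine hNC O ?_ hOT
      apply mem_cyclesOf_of_agree hO
      intro u hu
      obtain ⟨x, y, hx, hy, hxy, hswp⟩ := swp_spec hcard
      have hux : u ≠ x := fun h => (Finset.mem_compl.1 hx) (h ▸ hOT hu)
      have huy : u ≠ y := fun h => (Finset.mem_compl.1 hy) (h ▸ hOT hu)
      rw [hswp, Equiv.Perm.mul_apply, Equiv.swap_apply_of_ne_of_ne hux huy]
  rw [hzero, add_zero]


def sigE {n : ℕ} (e : Fin n ≃ V) : Equiv.Perm V := (e.symm.trans (finRotate n)).trans e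

def TE {n : ℕ} (e : Fin n ≃ V) : Finset V := (nonlast n).image e

lemma sigE_apply {n : ℕ} (e : Fin n ≃ V) (i : Fin n) : sigE e (e i) = e (finRotate n i) := by
  simp [sigE]

lemma fr_lt {n : ℕ} {i : Fin n} (h : (i : ℕ) + 1 < n) : finRotate n i = ⟨(i : ℕ) + 1, h⟩ := by
  cases n with
  | zero => exact i.elim0
  | succ m =>
    have h' : (i : ℕ) < m := by omega
    have heq : (⟨(i : ℕ), lt_of_lt_of_le h' m.le_succ⟩ : Fin (m + 1)) = i := Fin.ext rfl
    have := finRotate_of_lt (n := m) h'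
    rw [heq] at this
    rw [this]

lemma fr_last {n : ℕ} {i : Fin n} (h : ¬ ((i : ℕ) + 1 < n)) :
    finRotate n i = ⟨0, lt_of_le_of_lt (Nat.zero_le _) i.isLt⟩ := by
  cases n with
  | zero => exact i.elim0
  | succ m =>
    have hi : (i : ℕ) = m := by have := i.isLt; omega
    have heq : (⟨m, by omega⟩ : Fin (m + 1)) = i := Fin.ext hi.symm
    have := finRotate_last' (n := m)
    rw [heq] at this
    rw [this]

lemma nonlast_card (n : ℕ) : (nonlast n).card = n - 1 := by
  cases n with
  | zero => simp [nonlast]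
  | succ m =>
    have : nonlast (m + 1) = Finset.univ.erase (Fin.last m) := by
      ext i
      simp only [nonlast, Finset.mem_filter, Finset.mem_univ, true_and, Finset.mem_erase,
        and_true]
      constructor
      · intro h heq
        rw [heq] at h
        simp [Fin.last] at h
      · intro h
        have hne : (i : ℕ) ≠ m := fun hh => h (Fin.ext hh)
        have := i.isLt
        omega
    rw [this, Finset.card_erase_of_mem (Finset.mem_univ _), Finset.card_univ, Fintype.card_fin]

lemma nonlast_eq_erase_last (hn : 0 < Fintype.card V) :
    nonlast (Fintype.card V) =
      Finset.univ.erase (⟨Fintype.card V - 1, by omega⟩ : Fin (Fintype.card V)) := by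
  ext i
  simp only [nonlast, Finset.mem_filter, Finset.mem_univ, true_and, Finset.mem_erase, and_true]
  constructor
  · intro h heq
    rw [heq] at h
    simp at h
    omega
  · intro h
    have hne : (i : ℕ) ≠ Fintype.card V - 1 := fun hh => h (Fin.ext hh)
    have := i.isLt
    omega

lemma TE_eq_erase (hn : 0 < Fintype.card V) (e : Fin (Fintype.card V) ≃ V) :
    TE e = Finset.univ.erase (e ⟨Fintype.card V - 1, by omega⟩) := by
  rw [TE, nonlast_eq_erase_last hn, Finset.image_erase e.injective,
    Finset.image_univ_equiv]

lemma erase_univ_inj {a b : V} (h : Finset.univ.erase a = Finset.univ.erase b) : a = b := by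
  by_contra hne
  have ha : a ∈ Finset.univ.erase b := Finset.mem_erase.2 ⟨hne, Finset.mem_univ a⟩
  rw [← h] at ha
  exact (Finset.mem_erase.1 ha).1 rfl

lemma sameCycle_sigE {n : ℕ} (e : Fin n ≃ V) (hn : 0 < n) (v u : V) :
    (sigE e).SameCycle v u := by
  have hub : ∀ m (hm : m < n), (sigE e).SameCycle (e ⟨0, hn⟩) (e ⟨m, hm⟩) := by
    intro m
    induction m with
    | zero => intro hm; exact Equiv.Perm.SameCycle.refl _ _
    | succ k ih =>
      intro hm
      have hk : k < n := by omega
      have hstep : sigE e (e ⟨k, hk⟩) = e ⟨k + 1, hm⟩ := by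
        rw [sigE_apply, fr_lt (i := ⟨k, hk⟩) hm]
      have h2 : (sigE e).SameCycle (e ⟨k, hk⟩) (e ⟨k + 1, hm⟩) := by
        rw [← hstep]
        exact Equiv.Perm.sameCycle_apply_right.2 (Equiv.Perm.SameCycle.refl _ _)
      exact (ih hk).trans h2
  have hv := hub (e.symm v) (e.symm v).isLt
  have hu := hub (e.symm u) (e.symm u).isLt
  simp only [Fin.eta, Equiv.apply_symm_apply] at hv hu
  exact hv.symm.trans hu

lemma cyclesOf_sigE {e : Fin (Fintype.card V) ≃ V} (hn : 0 < Fintype.card V) :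
    cyclesOf (sigE e) = {Finset.univ} := by
  have hall := sameCycle_sigE e hn
  ext O
  rw [mem_cyclesOf_iff, Finset.mem_singleton]
  constructor
  · rintro ⟨v, rfl⟩
    apply Finset.eq_univ_of_forall
    intro u
    exact mem_orbit_iff.2 (hall v u)
  · rintro rfl
    obtain ⟨v⟩ := Fintype.card_pos_iff.1 hn
    exact ⟨v, (Finset.eq_univ_of_forall (fun u => mem_orbit_iff.2 (hall v u))).symm⟩

lemma TE_card (hn : 0 < Fintype.card V) (e : Fin (Fintype.card V) ≃ V) :
    (TE e).card = Fintype.card V - 1 := by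
  rw [TE, Finset.card_image_of_injective _ e.injective, nonlast_card]

lemma noCyc_sigE (e : Fin (Fintype.card V) ≃ V) : NoCyc (sigE e) (TE e) := by
  intro O hO hsub
  rcases Nat.eq_zero_or_pos (Fintype.card V) with h0 | hn
  · obtain ⟨v, -⟩ := cyclesOf_nonempty hO
    have := Fintype.card_pos_iff.2 ⟨v⟩
    omega
  · rw [cyclesOf_sigE hn, Finset.mem_singleton] at hO
    subst hO
    have h1 : Fintype.card V ≤ (TE e).card := by
      calc Fintype.card V = Finset.univ.card := Finset.card_univ.symm
      _ ≤ _ := Finset.card_le_card hsub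
    rw [TE_card hn] at h1
    omega

lemma TE_compl_card (e : Fin (Fintype.card V) ≃ V) : ((TE e)ᶜ).card ≤ 1 := by
  rcases Nat.eq_zero_or_pos (Fintype.card V) with h0 | hn
  · calc ((TE e)ᶜ).card ≤ Finset.univ.card := Finset.card_le_card (Finset.subset_univ _)
    _ ≤ 1 := by rw [Finset.card_univ]; omega
  · rw [Finset.card_compl, TE_card hn]
    omega

lemma weight_one (e : Fin (Fintype.card V) ≃ V) :
    sgnW (sigE e) Finset.univ * (-1 : ℤ) ^ (TE e).card = 1 := by
  rcases Nat.eq_zero_or_pos (Fintype.card V) with h0 | hn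
  · haveI : IsEmpty V := Fintype.card_eq_zero_iff.1 h0
    have h1 : cyclesOf (sigE e) = ∅ := by
      simp [cyclesOf, Finset.univ_eq_empty]
    have h2 : (TE e).card = 0 := by
      have : TE e ⊆ Finset.univ := Finset.subset_univ _
      rw [Finset.univ_eq_empty] at this
      simp [Finset.subset_empty.1 this]
    rw [h2, sgnW, h1]
    simp
  · have h1 : sgnW (sigE e) Finset.univ = (-1 : ℤ) ^ (Fintype.card V - 1) := by
      rw [sgnW, cyclesOf_sigE hn]
      rw [Finset.filter_true_of_mem (fun O _ => Finset.subset_univ O)]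
      rw [Finset.prod_singleton, Finset.card_univ]
    rw [h1, TE_card hn, ← mul_pow]
    norm_num

lemma w3_eq_Pw (e : Fin (Fintype.card V) ≃ V) : w3 A (sigE e, TE e) = Pw A e := by
  unfold w3 Pw
  simp only
  have hprod : (∏ u ∈ TE e, bf A u (sigE e u)) =
      ∏ i ∈ nonlast (Fintype.card V), bf A (e i) (e (finRotate (Fintype.card V) i)) := by
    rw [TE, Finset.prod_image (fun i _ j _ h => e.injective h)]
    exact Finset.prod_congr rfl (fun i _ => by rw [sigE_apply])
  rw [hprod, weight_one, one_mul]

lemma sig_TE_inj (e e' : Fin (Fintype.card V) ≃ V) (hs : sigE e = sigE e')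
    (hT : TE e = TE e') : e = e' := by
  rcases Nat.eq_zero_or_pos (Fintype.card V) with h0 | hn
  · apply Equiv.ext
    intro i
    exact absurd i.isLt (by omega)
  · set l : Fin (Fintype.card V) := ⟨Fintype.card V - 1, by omega⟩ with hl
    have hlast : e l = e' l := by
      apply erase_univ_inj
      rw [← TE_eq_erase hn, ← TE_eq_erase hn, hT]
    have hlne : ¬ ((l : ℕ) + 1 < Fintype.card V) := by
      rw [hl]; simp; omega
    have hkey : ∀ m (hm : m < Fintype.card V), e ⟨m, hm⟩ = e' ⟨m, hm⟩ := by
      intro m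
      induction m with
      | zero =>
        intro hm
        have h1 : e ⟨0, hm⟩ = sigE e (e l) := by
          rw [sigE_apply, fr_last hlne]
        have h2 : e' ⟨0, hm⟩ = sigE e' (e' l) := by
          rw [sigE_apply, fr_last hlne]
        rw [h1, h2, hs, hlast]
      | succ k ih =>
        intro hm
        have hk : k < Fintype.card V := by omega
        have h1 : e ⟨k + 1, hm⟩ = sigE e (e ⟨k, hk⟩) := by
          rw [sigE_apply, fr_lt (i := ⟨k, hk⟩) hm]
        have h2 : e' ⟨k + 1, hm⟩ = sigE e' (e' ⟨k, hk⟩) := by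
          rw [sigE_apply, fr_lt (i := ⟨k, hk⟩) hm]
        rw [h1, h2, hs, ih hk]
    apply Equiv.ext
    intro i
    have := hkey (i : ℕ) i.isLt
    simpa [Fin.eta] using this

lemma pow_sub_fix {σ : Equiv.Perm V} {x : V} {a b : ℕ} (hab : a ≤ b)
    (h : (σ ^ a) x = (σ ^ b) x) : (σ ^ (b - a)) x = x := by
  apply (σ ^ a).injective
  rw [← Equiv.Perm.mul_apply, ← pow_add]
  rw [Nat.add_sub_cancel' hab]
  exact h.symm

lemma orbit_univ_period {σ : Equiv.Perm V} {x : V} (horb : orbit σ x = Finset.univ) :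
    (σ ^ (Fintype.card V)) x = x ∧
      ∀ k, 0 < k → k < Fintype.card V → (σ ^ k) x ≠ x := by
  have hmod : ∀ k, 0 < k → (σ ^ k) x = x → ∀ m, (σ ^ m) x = (σ ^ (m % k)) x := by
    intro k hk hfix m
    induction m using Nat.strong_induction_on with
    | _ m ih =>
      by_cases hmk : m < k
      · rw [Nat.mod_eq_of_lt hmk]
      · push_neg at hmk
        have h1 : m = (m - k) + k := by omega
        have h2 : (σ ^ m) x = (σ ^ (m - k)) x := by
          conv_lhs => rw [h1]
          rw [pow_add, Equiv.Perm.mul_apply, hfix]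
        rw [h2, ih (m - k) (by omega), Nat.mod_eq_sub_mod hmk]
  have hlarge : ∀ k, 0 < k → (σ ^ k) x = x → Fintype.card V ≤ k := by
    intro k hk hfix
    have hsub : Finset.univ ⊆ (Finset.range k).image (fun j => (σ ^ j) x) := by
      intro u _
      have hu : u ∈ orbit σ x := by rw [horb]; exact Finset.mem_univ u
      obtain ⟨m, hm⟩ := exists_pow_of_mem_orbit hu
      refine Finset.mem_image.2 ⟨m % k, Finset.mem_range.2 (Nat.mod_lt m hk), ?_⟩
      rw [← hmod k hk hfix m, hm]
    calc Fintype.card V = Finset.univ.card := Finset.card_univ.symm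
    _ ≤ _ := Finset.card_le_card hsub
    _ ≤ k := le_trans Finset.card_image_le (le_of_eq (Finset.card_range k))
  have hper : ∀ k, 0 < k → k < Fintype.card V → (σ ^ k) x ≠ x := by
    intro k h1 h2 hfix
    have := hlarge k h1 hfix
    omega
  refine ⟨?_, hper⟩
  have hex : ∃ d, 0 < d ∧ (σ ^ d) x = x :=
    ⟨orderOf σ, orderOf_pos σ, by rw [pow_orderOf_eq_one]; rfl⟩
  set d := Nat.find hex with hd
  obtain ⟨hd0, hdfix⟩ := Nat.find_spec hex
  have hmin : ∀ c, 0 < c → c < d → (σ ^ c) x ≠ x := by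
    intro c h1 h2 hfix
    exact Nat.find_min hex h2 ⟨h1, hfix⟩
  have hinj : Set.InjOn (fun j => (σ ^ j) x) (Finset.range d) := by
    intro a ha b hb hab'
    simp only [Finset.coe_range, Set.mem_Iio] at ha hb
    by_contra hne
    rcases Nat.lt_or_ge a b with h | h
    · exact hmin (b - a) (by omega) (by omega) (pow_sub_fix (le_of_lt h) hab')
    · have h' : b < a := by omega
      exact hmin (a - b) (by omega) (by omega) (pow_sub_fix (le_of_lt h') hab'.symm)
  have hdn : d ≤ Fintype.card V := by
    have hc : ((Finset.range d).image (fun j => (σ ^ j) x)).card = d := by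
      rw [Finset.card_image_of_injOn hinj, Finset.card_range]
    calc d = _ := hc.symm
    _ ≤ Finset.univ.card := Finset.card_le_card (Finset.subset_univ _)
    _ = Fintype.card V := Finset.card_univ
  have hfin : d = Fintype.card V := le_antisymm hdn (hlarge d hd0 hdfix)
  rw [← hfin]
  exact hdfix

lemma surj_aux {σ : Equiv.Perm V} {T : Finset V} (hNC : NoCyc σ T) (hc : (Tᶜ).card ≤ 1) :
    ∃ e : Fin (Fintype.card V) ≃ V, sigE e = σ ∧ TE e = T := by
  rcases Nat.eq_zero_or_pos (Fintype.card V) with h0 | hn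
  · haveI hempty : IsEmpty V := Fintype.card_eq_zero_iff.1 h0
    haveI : IsEmpty (Fin (Fintype.card V)) := ⟨fun i => by have := i.isLt; omega⟩
    refine ⟨Equiv.equivOfIsEmpty _ _, ?_, ?_⟩
    · apply Equiv.ext
      intro v
      exact hempty.elim v
    · ext v
      exact hempty.elim v
  · have hTne : T ≠ Finset.univ := by
      rintro rfl
      obtain ⟨v⟩ := Fintype.card_pos_iff.1 hn
      exact hNC (orbit σ v) (orbit_mem_cyclesOf σ v) (Finset.subset_univ _)
    have hTc : (Tᶜ).Nonempty := by
      rw [Finset.nonempty_iff_ne_empty]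
      intro h
      exact hTne (by rwa [Finset.compl_eq_empty_iff] at h)
    obtain ⟨x, hx⟩ := hTc
    have hTcx : Tᶜ = {x} := by
      apply Finset.eq_singleton_iff_unique_mem.2
      exact ⟨hx, fun y hy => Finset.card_le_one.1 hc y hy x hx⟩
    have hT : T = Finset.univ.erase x := by
      have h1 : Tᶜᶜ = ({x} : Finset V)ᶜ := by rw [hTcx]
      rw [compl_compl] at h1
      rw [h1, Finset.compl_singleton]
    have hxall : ∀ O ∈ cyclesOf σ, x ∈ O := by
      intro O hO
      obtain ⟨u, huO, huT⟩ := Finset.not_subset.1 (hNC O hO)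
      have hu : u ∈ Tᶜ := Finset.mem_compl.2 huT
      rw [hTcx, Finset.mem_singleton] at hu
      exact hu ▸ huO
    have horb : orbit σ x = Finset.univ := by
      apply Finset.eq_univ_of_forall
      intro v
      have hxv : x ∈ orbit σ v := hxall _ (orbit_mem_cyclesOf σ v)
      rw [← orbit_eq_of_mem hxv]
      exact self_mem_orbit σ v
    obtain ⟨hfixn, hper⟩ := orbit_univ_period horb
    have hinj : Function.Injective
        (fun i : Fin (Fintype.card V) => (σ ^ ((i : ℕ) + 1)) x) := by
      have key : ∀ a b : Fin (Fintype.card V), (a : ℕ) ≤ (b : ℕ) →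
          (σ ^ ((a : ℕ) + 1)) x = (σ ^ ((b : ℕ) + 1)) x → a = b := by
        intro a b hle h
        have hfix := pow_sub_fix (a := (a : ℕ) + 1) (b := (b : ℕ) + 1) (by omega) h
        by_cases hz : (b : ℕ) = (a : ℕ)
        · exact Fin.ext hz.symm
        · have hlt : (b : ℕ) + 1 - ((a : ℕ) + 1) < Fintype.card V := by
            have := b.isLt; omega
          exact absurd hfix (hper _ (by omega) hlt)
      intro a b hab
      simp only at hab
      rcases le_total (a : ℕ) (b : ℕ) with h | h
      · exact key a b h hab
      · exact (key b a h hab.symm).symm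
    have hbij : Function.Bijective
        (fun i : Fin (Fintype.card V) => (σ ^ ((i : ℕ) + 1)) x) :=
      (Fintype.bijective_iff_injective_and_card _).2 ⟨hinj, by rw [Fintype.card_fin]⟩
    set e := Equiv.ofBijective _ hbij with he
    have heval : ∀ i : Fin (Fintype.card V), e i = (σ ^ ((i : ℕ) + 1)) x := fun i => rfl
    have hsig : sigE e = σ := by
      apply Equiv.ext
      intro v
      obtain ⟨i, rfl⟩ := e.surjective v
      rw [sigE_apply]
      by_cases hi : (i : ℕ) + 1 < Fintype.card V
      · rw [fr_lt hi, heval, heval]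
        show (σ ^ ((i : ℕ) + 1 + 1)) x = σ ((σ ^ ((i : ℕ) + 1)) x)
        rw [pow_succ', Equiv.Perm.mul_apply]
      · rw [fr_last hi, heval, heval]
        show (σ ^ (0 + 1)) x = σ ((σ ^ ((i : ℕ) + 1)) x)
        have hieq : (i : ℕ) + 1 = Fintype.card V := by have := i.isLt; omega
        rw [hieq, hfixn, pow_one]
    have hTE : TE e = T := by
      rw [hT]
      have hsub : TE e ⊆ Finset.univ.erase x := by
        intro u hu
        obtain ⟨i, hi, rfl⟩ := Finset.mem_image.1 hu
        refine Finset.mem_erase.2 ⟨?_, Finset.mem_univ _⟩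
        rw [heval]
        have hilt : (i : ℕ) + 1 < Fintype.card V := by
          have := (Finset.mem_filter.1 hi).2
          exact this
        exact hper _ (by omega) hilt
      apply Finset.eq_of_subset_of_card_le hsub
      rw [Finset.card_erase_of_mem (Finset.mem_univ _), Finset.card_univ, TE_card hn]
    exact ⟨e, hsig, hTE⟩

lemma step5 :
    (∑ p ∈ (s3Set : Finset (Equiv.Perm V × Finset V)).filter (fun p => (p.2ᶜ).card ≤ 1),
      w3 A p) = ∑ e : Fin (Fintype.card V) ≃ V, Pw A e := by
  rw [eq_comm]
  apply Finset.sum_bij (i := fun e _ => (sigE e, TE e))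
  · intro e _
    refine Finset.mem_filter.2 ⟨Finset.mem_filter.2 ⟨Finset.mem_univ _, noCyc_sigE e⟩, ?_⟩
    exact TE_compl_card e
  · intro e _ e' _ h
    exact sig_TE_inj e e' (congrArg Prod.fst h) (congrArg Prod.snd h)
  · rintro ⟨σ0, T0⟩ hp
    obtain ⟨hp1, hp2⟩ := Finset.mem_filter.1 hp
    have hNC := (Finset.mem_filter.1 hp1).2
    obtain ⟨e, hs, hT⟩ := surj_aux hNC hp2
    refine ⟨e, Finset.mem_univ _, ?_⟩
    rw [hs, hT]
  · intro e _
    exact (w3_eq_Pw A e).symm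

lemma Pw_eq_indicator (e : Fin (Fintype.card V) ≃ V) :
    Pw A e = if (∀ i ∈ nonlast (Fintype.card V),
      (e i, e (finRotate (Fintype.card V) i)) ∈ Aᶜ) then 1 else 0 := by
  split_ifs with h
  · apply Finset.prod_eq_one
    intro i hi
    unfold bf
    rw [if_neg]
    exact Set.notMem_of_mem_compl (h i hi)
  · push_neg at h
    obtain ⟨i, hi, hmem⟩ := h
    apply Finset.prod_eq_zero hi
    unfold bf
    rw [if_pos]
    rwa [Set.notMem_compl_iff] at hmem

lemma step0 : (hampCount V Aᶜ : ℤ) = ∑ e : Fin (Fintype.card V) ≃ V, Pw A e := by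
  classical
  set He : (Fin (Fintype.card V) ≃ V) → Prop := fun e => ∀ i ∈ nonlast (Fintype.card V),
    (e i, e (finRotate (Fintype.card V) i)) ∈ Aᶜ with hHe
  have hset : {w : List V | w.Nodup ∧ (∀ x : V, x ∈ w) ∧ w.Chain' fun a b => (a, b) ∈ Aᶜ} =
      ↑((Finset.univ.filter He).image (fun e : Fin (Fintype.card V) ≃ V => List.ofFn e)) := by
    ext w
    simp only [Set.mem_setOf_eq, Finset.coe_image, Set.mem_image, Finset.mem_coe,
      Finset.mem_filter, Finset.mem_univ, true_and]
    constructor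
    · rintro ⟨hnd, hmem, hch⟩
      have hinj : Function.Injective w.get := List.nodup_iff_injective_get.1 hnd
      have hsurj : Function.Surjective w.get := fun x => by
        obtain ⟨i, hi⟩ := List.mem_iff_get.1 (hmem x)
        exact ⟨i, hi⟩
      have hbij : Function.Bijective w.get := ⟨hinj, hsurj⟩
      set eqv : Fin w.length ≃ V := Equiv.ofBijective w.get hbij with heqv
      have hlen : w.length = Fintype.card V :=
        (Fintype.card_fin _).symm.trans (Fintype.card_congr eqv)
      set e : Fin (Fintype.card V) ≃ V := (finCongr hlen.symm).trans eqv with he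
      have heval : ∀ i : Fin (Fintype.card V), e i = w.get ⟨(i : ℕ), by omega⟩ := by
        intro i
        rfl
      refine ⟨e, ?_, ?_⟩
      · intro i hi
        have hilt : (i : ℕ) + 1 < Fintype.card V := (Finset.mem_filter.1 hi).2
        have hR := List.isChain_iff_getElem.1 hch (i : ℕ) (by omega)
        rw [fr_lt hilt, heval, heval]
        exact hR
      · apply List.ext_get (by rw [List.length_ofFn, hlen])
        intro j h1 h2
        rw [List.get_ofFn]
        rw [heval]
        congr 1
    · rintro ⟨e, hHee, rfl⟩
      refine ⟨List.nodup_ofFn.2 e.injective, ?_, ?_⟩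
      · intro x
        rw [List.mem_ofFn]
        exact ⟨e.symm x, e.apply_symm_apply x⟩
      · refine List.isChain_iff_getElem.2 ?_
        intro j hj
        rw [List.length_ofFn] at hj
        have hjlt : j < Fintype.card V := by omega
        have hjlt2 : j + 1 < Fintype.card V := by omega
        have hmem : (⟨j, hjlt⟩ : Fin (Fintype.card V)) ∈ nonlast (Fintype.card V) :=
          Finset.mem_filter.2 ⟨Finset.mem_univ _, hjlt2⟩
        have := hHee _ hmem
        rw [fr_lt (i := (⟨j, hjlt⟩ : Fin (Fintype.card V))) hjlt2] at this
        simp only [List.getElem_ofFn]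
        convert this using 3 <;> exact Fin.ext rfl
  have hinjOn : ∀ e ∈ Finset.univ.filter He, ∀ e' ∈ Finset.univ.filter He,
      List.ofFn ⇑e = List.ofFn ⇑e' → e = e' := by
    intro e _ e' _ h
    have := List.ofFn_injective h
    exact Equiv.coe_fn_injective this
  have h1 : (hampCount V Aᶜ : ℤ) = ((Finset.univ.filter He).card : ℤ) := by
    rw [hampCount, hset, Set.ncard_coe_finset, Finset.card_image_of_injOn hinjOn]
  rw [h1, Finset.card_filter]
  push_cast
  apply Finset.sum_congr rfl
  intro e _
  rw [Pw_eq_indicator]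

end Main

end RBaux
end RBauxSec

/-- **Theorem (Grinberg–Stanley, Theorem 5.4 (a)).**
`#hamps(D̄) = ∑_{σ ∈ S_V(D,D̄)} (-1)^{φ(σ)}`. -/
theorem hampCount_compl_eq_signed_sum (V : Type) [Fintype V] [DecidableEq V]
    (A : Set (V × V)) :
    (hampCount V Aᶜ : ℤ) =
      ∑ σ ∈ Finset.univ.filter (fun σ : Equiv.Perm V => memSVDDbar A σ),
        (-1 : ℤ) ^ phi A σ := by
  rw [RBaux.step0 A]
  exact ((RBaux.step1 A).trans ((RBaux.step2 A).trans ((RBaux.step3 A).trans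
    ((RBaux.step4 A).trans (RBaux.step5 A))))).symm
end
end

section
/- Let D=(V,A) be a digraph. Then the number of Hamiltonian paths of the complement D̄ is congruent modulo 2 to the cardinality of S_V(D,D̄), the set of permutations of V each of whose cycles is a D-cycle or a D̄-cycle. -/
open scoped Classical

noncomputable section

namespace RBproof

open Finset Equiv Equiv.Perm
set_option linter.unusedSectionVars false

variable {V : Type} [Fintype V] [DecidableEq V] [LinearOrder V]

/-- Instance-free form of `memSVDDbar`. -/
def SV (A : Set (V × V)) (σ : Perm V) : Prop :=
  ∀ v : V, (∀ u, σ.SameCycle v u → (u, σ u) ∈ A) ∨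
    (∀ u, σ.SameCycle v u → (u, σ u) ∉ A)

/-- The cycle of `v` as a finset. -/
def Cyc (σ : Perm V) (v : V) : Finset V := univ.filter (σ.SameCycle v ·)

/-- The vertices of the cycle of `v` whose outgoing arc is in `A`. -/
def Mset (A : Set (V × V)) (σ : Perm V) (v : V) : Finset V :=
  (Cyc σ v).filter (fun u => (u, σ u) ∈ A)

/-- The master set `W`: pairs `(σ, S)` with all arcs from `S` in `A`,
and no cycle of `σ` contained in `S`. -/
def Wset (A : Set (V × V)) : Finset (Perm V × Finset V) :=
  univ.filter (fun x => (∀ v ∈ x.2, (v, x.1 v) ∈ A) ∧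
    ∀ v : V, ∃ u, x.1.SameCycle v u ∧ u ∉ x.2)

def good (A : Set (V × V)) (σ : Perm V) (S : Finset V) (v : V) : Prop :=
  (Mset A σ v = Cyc σ v ∧
      ∀ u, u ∈ S ∩ Cyc σ v ↔ u ∈ Cyc σ v ∧ ∃ w ∈ Cyc σ v, u < w) ∨
    (Mset A σ v = ∅ ∧ S ∩ Cyc σ v = ∅)

def Fix1 (A : Set (V × V)) : Finset (Perm V × Finset V) :=
  (Wset A).filter (fun x => ∀ v, good A x.1 x.2 v)

def Fix2 (A : Set (V × V)) : Finset (Perm V × Finset V) :=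
  (Wset A).filter (fun x => (univ \ x.2).card ≤ 1)

/-- Parity helper: a fixed-point-free involution on the complement of `filter p`
shows `#s ≡ #(filter p) (mod 2)`. -/
lemma card_modeq_filter {α : Type*} (s : Finset α) (p : α → Prop) [DecidablePred p]
    (g : ∀ x ∈ s.filter (fun x => ¬ p x), α)
    (hmem : ∀ x hx, g x hx ∈ s.filter (fun x => ¬ p x))
    (hne : ∀ x hx, g x hx ≠ x)
    (hinv : ∀ x hx, g (g x hx) (hmem x hx) = x) :
    (s.card : ZMod 2) = ((s.filter p).card : ZMod 2) := by
  classical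
  have hsplit := Finset.card_filter_add_card_filter_not (s := s) (p := p)
  have hzero : (((s.filter (fun x => ¬ p x)).card : ZMod 2)) = 0 := by
    have := Finset.sum_involution (f := fun _ => (1 : ZMod 2)) g
      (fun a ha => by show (1 : ZMod 2) + 1 = 0; decide) (fun a ha _ => hne a ha) hmem hinv
    rwa [Finset.sum_const, nsmul_eq_mul, mul_one] at this
  have : ((s.filter p).card + (s.filter (fun x => ¬ p x)).card : ZMod 2)
      = ((s.card : ℕ) : ZMod 2) := by exact_mod_cast congrArg _ hsplit
  rw [← this, hzero, add_zero]


lemma mem_Cyc {σ : Perm V} {v u : V} : u ∈ Cyc σ v ↔ σ.SameCycle v u := by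
  simp [Cyc]

lemma self_mem_Cyc (σ : Perm V) (v : V) : v ∈ Cyc σ v :=
  mem_Cyc.mpr (Equiv.Perm.SameCycle.refl σ v)

lemma Cyc_eq_of_sameCycle {σ : Perm V} {v u : V} (h : σ.SameCycle v u) :
    Cyc σ v = Cyc σ u := by
  ext w
  simp only [mem_Cyc]
  exact ⟨fun h' => h.symm.trans h', fun h' => h.trans h'⟩

lemma mem_Mset {A : Set (V × V)} {σ : Perm V} {v u : V} :
    u ∈ Mset A σ v ↔ σ.SameCycle v u ∧ (u, σ u) ∈ A := by
  simp [Mset, mem_Cyc, Finset.mem_filter]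

lemma mem_Wset {A : Set (V × V)} {x : Perm V × Finset V} :
    x ∈ Wset A ↔ (∀ v ∈ x.2, (v, x.1 v) ∈ A) ∧
      ∀ v : V, ∃ u, x.1.SameCycle v u ∧ u ∉ x.2 := by
  simp [Wset]

lemma sameCycle_of_pow {σ : Perm V} {v u : V} {k : ℕ} (h : (σ ^ k) v = u) :
    σ.SameCycle v u := ⟨(k : ℤ), by rw [zpow_natCast]; exact h⟩

/-- powers of `σ * swap a b` agree with powers of `σ` on points whose
`σ * swap a b`-cycle avoids `a` and `b`. -/
lemma pow_mul_swap_eq {σ : Perm V} {a b v : V}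
    (hva : ¬ (σ * Equiv.swap a b).SameCycle v a)
    (hvb : ¬ (σ * Equiv.swap a b).SameCycle v b)
    (k : ℕ) : ((σ * Equiv.swap a b) ^ k) v = (σ ^ k) v := by
  induction k with
  | zero => rfl
  | succ k ih =>
    have hne_a : ((σ * Equiv.swap a b) ^ k) v ≠ a := fun h => hva (sameCycle_of_pow h)
    have hne_b : ((σ * Equiv.swap a b) ^ k) v ≠ b := fun h => hvb (sameCycle_of_pow h)
    rw [ih] at hne_a hne_b
    rw [pow_succ', pow_succ', Equiv.Perm.mul_apply, Equiv.Perm.mul_apply, ih,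
      Equiv.Perm.mul_apply, Equiv.swap_apply_of_ne_of_ne hne_a hne_b]

/-- the first of the two smallest elements of a finset with at least 2 elements. -/
def aV (T : Finset V) (h : 2 ≤ T.card) : V := T.min' (Finset.card_pos.mp (by omega))

def bV (T : Finset V) (h : 2 ≤ T.card) : V :=
  (T.erase (aV T h)).min' (Finset.card_pos.mp
    (by have := Finset.card_erase_of_mem (show aV T h ∈ T from Finset.min'_mem _ _); omega))

lemma aV_mem (T : Finset V) (h : 2 ≤ T.card) : aV T h ∈ T := Finset.min'_mem _ _

lemma bV_mem (T : Finset V) (h : 2 ≤ T.card) : bV T h ∈ T :=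
  Finset.mem_of_mem_erase (Finset.min'_mem _ _)

lemma bV_ne_aV (T : Finset V) (h : 2 ≤ T.card) : bV T h ≠ aV T h :=
  Finset.ne_of_mem_erase (Finset.min'_mem _ _)

/-- the swapping involution -/
def swp (x : Perm V × Finset V) : Perm V × Finset V :=
  if h : 2 ≤ (Finset.univ \ x.2).card then
    (x.1 * Equiv.swap (aV _ h) (bV _ h), x.2)
  else x

lemma card_W_eq_fix2 (A : Set (V × V)) :
    (((Wset A).card : ZMod 2)) = ((Fix2 A).card : ZMod 2) := by
  unfold Fix2
  apply card_modeq_filter (Wset A) (fun x => (univ \ x.2).card ≤ 1) (fun x _ => swp x)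
  · -- membership
    intro x hx
    rw [Finset.mem_filter] at hx
    obtain ⟨hW, hcard⟩ := hx
    have h2 : 2 ≤ (Finset.univ \ x.2).card := by omega
    rw [mem_Wset] at hW
    obtain ⟨harc, hacyc⟩ := hW
    set T := Finset.univ \ x.2 with hT
    set a := aV T h2 with ha
    set b := bV T h2 with hb
    have haS : a ∉ x.2 := (Finset.mem_sdiff.mp (aV_mem T h2)).2
    have hbS : b ∉ x.2 := (Finset.mem_sdiff.mp (bV_mem T h2)).2
    have hswp : swp x = (x.1 * Equiv.swap a b, x.2) := by
      rw [swp, dif_pos h2]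
    rw [hswp, Finset.mem_filter, mem_Wset]
    refine ⟨⟨?_, ?_⟩, by simpa using hcard⟩
    · intro v hv
      have hvna : v ≠ a := fun h => haS (h ▸ hv)
      have hvnb : v ≠ b := fun h => hbS (h ▸ hv)
      have : (x.1 * Equiv.swap a b) v = x.1 v := by
        rw [Equiv.Perm.mul_apply, Equiv.swap_apply_of_ne_of_ne hvna hvnb]
      rw [this]
      exact harc v hv
    · intro v
      by_cases hca : (x.1 * Equiv.swap a b).SameCycle v a
      · exact ⟨a, hca, haS⟩
      by_cases hcb : (x.1 * Equiv.swap a b).SameCycle v b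
      · exact ⟨b, hcb, hbS⟩
      obtain ⟨u, hu, huS⟩ := hacyc v
      obtain ⟨k, -, hk⟩ := hu.exists_pow_eq'
      exact ⟨u, sameCycle_of_pow ((pow_mul_swap_eq hca hcb k).trans hk), huS⟩
  · -- no fixed points
    intro x hx hne
    rw [Finset.mem_filter] at hx
    have h2 : 2 ≤ (Finset.univ \ x.2).card := by omega
    rw [swp, dif_pos h2] at hne
    have := congrArg (fun y => y.1 (aV _ h2)) hne
    simp only [Equiv.Perm.mul_apply, Equiv.swap_apply_left] at this
    exact bV_ne_aV _ h2 (x.1.injective this)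
  · -- involution
    intro x hx
    rw [Finset.mem_filter] at hx
    have h2 : 2 ≤ (Finset.univ \ x.2).card := by omega
    have hswp : swp x = (x.1 * Equiv.swap (aV _ h2) (bV _ h2), x.2) := by
      rw [swp, dif_pos h2]
    rw [hswp]
    rw [swp]
    rw [dif_pos (by exact h2)]
    ext v <;> simp [mul_assoc]

lemma Mset_subset_Cyc {A : Set (V × V)} {σ : Perm V} {v : V} :
    Mset A σ v ⊆ Cyc σ v := Finset.filter_subset _ _

def badSet (A : Set (V × V)) (σ : Perm V) (S : Finset V) : Finset V :=
  univ.filter (fun v => ¬ good A σ S v)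

lemma mem_badSet {A : Set (V × V)} {σ : Perm V} {S : Finset V} {v : V} :
    v ∈ badSet A σ S ↔ ¬ good A σ S v := by simp [badSet]

lemma good_congr {A : Set (V × V)} {σ : Perm V} {S S' : Finset V} {v v' : V}
    (hC : Cyc σ v = Cyc σ v') (hS : S ∩ Cyc σ v = S' ∩ Cyc σ v') :
    good A σ S v ↔ good A σ S' v' := by
  have hS2 : S ∩ Cyc σ v' = S' ∩ Cyc σ v' := by rw [← hC, hS, hC]
  unfold good Mset
  rw [hC]
  simp only [hS2]

lemma inter_eq_erase_iff {σ : Perm V} {S : Finset V} {v : V} :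
    (∀ u, u ∈ S ∩ Cyc σ v ↔ u ∈ Cyc σ v ∧ ∃ w ∈ Cyc σ v, u < w) ↔
      S ∩ Cyc σ v = (Cyc σ v).erase ((Cyc σ v).max' ⟨v, self_mem_Cyc σ v⟩) := by
  have hmax := Finset.max'_mem (Cyc σ v) ⟨v, self_mem_Cyc σ v⟩
  have key : ∀ u, (u ∈ Cyc σ v ∧ ∃ w ∈ Cyc σ v, u < w) ↔
      u ∈ (Cyc σ v).erase ((Cyc σ v).max' ⟨v, self_mem_Cyc σ v⟩) := by
    intro u
    rw [Finset.mem_erase]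
    constructor
    · rintro ⟨hu, w, hw, hlt⟩
      refine ⟨?_, hu⟩
      rintro rfl
      exact absurd hlt (not_lt.mpr (Finset.le_max' _ _ hw))
    · rintro ⟨hne, hu⟩
      exact ⟨hu, _, hmax, lt_of_le_of_ne (Finset.le_max' _ _ hu) hne⟩
  constructor
  · intro h
    ext u
    rw [h u, key u]
  · intro h u
    rw [h, ← key u]

/-- the toggling involution for the canonical-form argument -/
def tog (A : Set (V × V)) (x : Perm V × Finset V) : Perm V × Finset V :=
  if hB : (badSet A x.1 x.2).Nonempty then
    if hM : (Mset A x.1 ((badSet A x.1 x.2).min' hB)).Nonempty then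
      (x.1,
        if (Mset A x.1 ((badSet A x.1 x.2).min' hB)).max' hM ∈ x.2
        then x.2.erase ((Mset A x.1 ((badSet A x.1 x.2).min' hB)).max' hM)
        else insert ((Mset A x.1 ((badSet A x.1 x.2).min' hB)).max' hM) x.2)
    else x
  else x

set_option maxHeartbeats 1600000 in
lemma tog_spec (A : Set (V × V)) (x : Perm V × Finset V) (hW : x ∈ Wset A)
    (hbad : ¬ ∀ v, good A x.1 x.2 v) :
    tog A x ∈ Wset A ∧ ¬ (∀ v, good A (tog A x).1 (tog A x).2 v) ∧
      tog A (tog A x) = x ∧ tog A x ≠ x := by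
  obtain ⟨harc, hacyc⟩ := mem_Wset.mp hW
  set σ := x.1 with hσ
  set S := x.2 with hSdef
  obtain ⟨vb, hvb⟩ := not_forall.mp hbad
  have hB : (badSet A σ S).Nonempty := ⟨vb, mem_badSet.mpr hvb⟩
  set v0 := (badSet A σ S).min' hB with hv0def
  have hv0 : ¬ good A σ S v0 := mem_badSet.mp (Finset.min'_mem _ _)
  have hSM : ∀ v : V, S ∩ Cyc σ v ⊆ Mset A σ v := by
    intro v u hu
    rw [Finset.mem_inter] at hu
    exact Finset.mem_filter.mpr ⟨hu.2, harc u hu.1⟩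
  have hM : (Mset A σ v0).Nonempty := by
    by_contra hM
    rw [Finset.not_nonempty_iff_eq_empty] at hM
    exact hv0 (Or.inr ⟨hM, Finset.subset_empty.mp (hM ▸ hSM v0)⟩)
  set w := (Mset A σ v0).max' hM with hwdef
  have hwM : w ∈ Mset A σ v0 := Finset.max'_mem _ _
  have hwC : w ∈ Cyc σ v0 := Mset_subset_Cyc hwM
  have hwA : (w, σ w) ∈ A := (mem_Mset.mp hwM).2
  set S' := if w ∈ S then S.erase w else insert w S with hS'def
  have htog : tog A x = (σ, S') := by
    rw [tog, dif_pos hB, dif_pos hM]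
  -- no cycle of σ is inside S
  have hnotsub : ∀ v : V, S ∩ Cyc σ v ≠ Cyc σ v := by
    intro v h
    obtain ⟨u, hu, huS⟩ := hacyc v
    have : u ∈ Cyc σ v := mem_Cyc.mpr hu
    rw [← h, Finset.mem_inter] at this
    exact huS this.1
  -- computation of S' ∩ Cyc for cycles not containing v0
  have hS'other : ∀ v : V, ¬ σ.SameCycle v0 v → S' ∩ Cyc σ v = S ∩ Cyc σ v := by
    intro v hv
    have hwv : w ∉ Cyc σ v := by
      intro hwv
      exact hv ((mem_Cyc.mp hwC).trans (mem_Cyc.mp hwv).symm)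
    ext u
    simp only [Finset.mem_inter, hS'def]
    constructor
    · rintro ⟨hu1, hu2⟩
      refine ⟨?_, hu2⟩
      split at hu1
      · exact Finset.mem_of_mem_erase hu1
      · rcases Finset.mem_insert.mp hu1 with rfl | h
        · exact absurd hu2 hwv
        · exact h
    · rintro ⟨hu1, hu2⟩
      have hune : u ≠ w := fun h => hwv (h ▸ hu2)
      refine ⟨?_, hu2⟩
      split
      · exact Finset.mem_erase.mpr ⟨hune, hu1⟩
      · exact Finset.mem_insert_of_mem hu1
  -- computation of S' ∩ Cyc σ v0
  have hS'v0 : S' ∩ Cyc σ v0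
      = if w ∈ S then (S ∩ Cyc σ v0).erase w else insert w (S ∩ Cyc σ v0) := by
    rw [hS'def]
    split
    · ext u
      simp only [Finset.mem_inter, Finset.mem_erase]
      tauto
    · ext u
      simp only [Finset.mem_inter, Finset.mem_insert]
      constructor
      · rintro ⟨rfl | h, hu2⟩
        · exact Or.inl rfl
        · exact Or.inr ⟨h, hu2⟩
      · rintro (rfl | ⟨h1, h2⟩)
        · exact ⟨Or.inl rfl, hwC⟩
        · exact ⟨Or.inr h1, h2⟩
  -- key dichotomy facts
  have hMne : Mset A σ v0 ≠ ∅ := Finset.nonempty_iff_ne_empty.mp hM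
  have hstillbad : ¬ good A σ S' v0 ∧ S' ∩ Cyc σ v0 ≠ Cyc σ v0 := by
    by_cases hMC : Mset A σ v0 = Cyc σ v0
    · -- the cycle of v0 is an A-cycle; w is its largest element
      have hwmax : w = (Cyc σ v0).max' ⟨v0, self_mem_Cyc σ v0⟩ := by
        have haux : ∀ (s t : Finset V) (hs : s.Nonempty) (ht : t.Nonempty), s = t →
            s.max' hs = t.max' ht := by
          rintro s t hs ht rfl
          rfl
        exact hwdef.trans (haux _ _ hM ⟨v0, self_mem_Cyc σ v0⟩ hMC)
      have hnotcanon : S ∩ Cyc σ v0 ≠ (Cyc σ v0).erase ((Cyc σ v0).max' ⟨v0, self_mem_Cyc σ v0⟩) := by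
        intro h
        exact hv0 (Or.inl ⟨hMC, inter_eq_erase_iff.mpr h⟩)
      by_cases hwS : w ∈ S
      · have hcalc : S' ∩ Cyc σ v0 = (S ∩ Cyc σ v0).erase w := by rw [hS'v0, if_pos hwS]
        constructor
        · intro hgood
          rcases hgood with ⟨-, hiff⟩ | ⟨hM0, -⟩
          · have := inter_eq_erase_iff.mp hiff
            rw [hcalc, ← hwmax] at this
            have hSC : S ∩ Cyc σ v0 = Cyc σ v0 := by
              have h1 : insert w ((S ∩ Cyc σ v0).erase w) = insert w ((Cyc σ v0).erase w) := by
                rw [this]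
              rwa [Finset.insert_erase (Finset.mem_inter.mpr ⟨hwS, hwC⟩),
                Finset.insert_erase hwC] at h1
            exact hnotsub v0 hSC
          · exact hMne hM0
        · intro h
          rw [hcalc] at h
          have : w ∈ (S ∩ Cyc σ v0).erase w := h.symm ▸ hwC
          exact (Finset.notMem_erase _ _) this
      · have hcalc : S' ∩ Cyc σ v0 = insert w (S ∩ Cyc σ v0) := by rw [hS'v0, if_neg hwS]
        constructor
        · intro hgood
          rcases hgood with ⟨-, hiff⟩ | ⟨hM0, -⟩
          · have := inter_eq_erase_iff.mp hiff
            rw [hcalc, ← hwmax] at this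
            have : w ∈ (Cyc σ v0).erase w := this ▸ Finset.mem_insert_self w _
            exact (Finset.notMem_erase _ _) this
          · exact hMne hM0
        · intro h
          rw [hcalc] at h
          have hS0 : S ∩ Cyc σ v0 = (Cyc σ v0).erase w := by
            have hwnot : w ∉ S ∩ Cyc σ v0 := fun hc => hwS (Finset.mem_inter.mp hc).1
            rw [← Finset.erase_insert hwnot, h, hwmax]
          exact hnotcanon (hwmax ▸ hS0)
    · -- the cycle of v0 is neither: always bad, and S' ∩ C0 ⊆ M0 ⊊ C0
      have hsub : S' ∩ Cyc σ v0 ⊆ Mset A σ v0 := by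
        intro u hu
        rw [Finset.mem_inter] at hu
        rcases hu with ⟨hu1, hu2⟩
        rw [hS'def] at hu1
        split at hu1
        · exact hSM v0 (Finset.mem_inter.mpr ⟨Finset.mem_of_mem_erase hu1, hu2⟩)
        · rcases Finset.mem_insert.mp hu1 with rfl | h
          · exact hwM
          · exact hSM v0 (Finset.mem_inter.mpr ⟨h, hu2⟩)
      constructor
      · intro hgood
        rcases hgood with ⟨hMC', -⟩ | ⟨hM0, -⟩
        · exact hMC hMC'
        · exact hMne hM0
      · intro h
        rw [h] at hsub
        exact hMC (Finset.Subset.antisymm Mset_subset_Cyc hsub)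
  -- (σ, S') is in Wset
  have hW' : (σ, S') ∈ Wset A := by
    rw [mem_Wset]
    constructor
    · intro v hv
      rw [hS'def] at hv
      split at hv
      · exact harc v (Finset.mem_of_mem_erase hv)
      · rcases Finset.mem_insert.mp hv with rfl | h
        · exact hwA
        · exact harc v h
    · intro v
      by_cases hvc : σ.SameCycle v0 v
      · have hne := hstillbad.2
        have hssub : S' ∩ Cyc σ v0 ⊂ Cyc σ v0 :=
          lt_of_le_of_ne (Finset.inter_subset_right) hne
        obtain ⟨u, hu, hunot⟩ := Finset.exists_of_ssubset hssub
        refine ⟨u, hvc.symm.trans (mem_Cyc.mp hu), ?_⟩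
        intro huS'
        exact hunot (Finset.mem_inter.mpr ⟨huS', hu⟩)
      · obtain ⟨u, hu, huS⟩ := hacyc v
        have huC : u ∈ Cyc σ v := mem_Cyc.mpr hu
        have hune : u ≠ w := by
          rintro rfl
          exact hvc ((mem_Cyc.mp hwC).trans hu.symm)
        refine ⟨u, hu, ?_⟩
        rw [hS'def]
        split
        · exact fun hc => huS (Finset.mem_of_mem_erase hc)
        · intro hc
          rcases Finset.mem_insert.mp hc with rfl | h
          · exact hune rfl
          · exact huS h
  -- good statuses are unchanged
  have hgoodeq : ∀ v, (good A σ S' v ↔ good A σ S v) := by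
    intro v
    by_cases hvc : σ.SameCycle v0 v
    · have hCeq : Cyc σ v = Cyc σ v0 := (Cyc_eq_of_sameCycle hvc).symm
      constructor
      · intro hg
        exact absurd ((good_congr hCeq (by rw [hCeq])).mp hg) hstillbad.1
      · intro hg
        exact absurd ((good_congr hCeq (by rw [hCeq])).mp hg) hv0
    · exact good_congr rfl (hS'other v hvc)
  have hbadeq : badSet A σ S' = badSet A σ S := by
    ext v
    rw [mem_badSet, mem_badSet, hgoodeq v]
  have hB' : (badSet A σ S').Nonempty := by rw [hbadeq]; exact hB
  have hmin'eq : (badSet A σ S').min' hB' = v0 := by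
    rw [hv0def]
    congr 1
  -- now compute tog (tog x)
  have htogtog : tog A (σ, S') = x := by
    rw [tog]
    rw [dif_pos (show (badSet A (σ, S').1 (σ, S').2).Nonempty from hB')]
    have hmin : (badSet A (σ, S').1 (σ, S').2).min' hB' = v0 := hmin'eq
    rw [show ((badSet A (σ, S').1 (σ, S').2).min' hB') = v0 from hmin'eq]
    rw [dif_pos (show (Mset A (σ, S').1 v0).Nonempty from hM)]
    have hwe : (Mset A (σ, S').1 v0).max' hM = w := rfl
    rw [hwe]
    have : x = (σ, S) := rfl
    rw [this]
    by_cases hwS : w ∈ S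
    · have hwS' : w ∉ S' := by rw [hS'def, if_pos hwS]; exact Finset.notMem_erase _ _
      rw [if_neg hwS']
      have : insert w S' = S := by
        rw [hS'def, if_pos hwS]
        exact Finset.insert_erase hwS
      rw [this]
    · have hwS' : w ∈ S' := by rw [hS'def, if_neg hwS]; exact Finset.mem_insert_self _ _
      rw [if_pos hwS']
      have : S'.erase w = S := by
        rw [hS'def, if_neg hwS]
        exact Finset.erase_insert hwS
      rw [this]
  have hSS' : S' ≠ S := by
    rw [hS'def]
    split
    · intro h
      rw [Finset.erase_eq_self] at h
      exact h ‹w ∈ S›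
    · intro h
      rw [Finset.insert_eq_self] at h
      exact ‹w ∉ S› h
  refine ⟨htog ▸ hW', ?_, ?_, ?_⟩
  · rw [htog]
    intro hall
    exact hstillbad.1 (hall v0)
  · rw [htog, htogtog]
  · rw [htog]
    intro h
    exact hSS' (congrArg Prod.snd h)

lemma card_W_eq_fix1 (A : Set (V × V)) :
    (((Wset A).card : ZMod 2)) = ((Fix1 A).card : ZMod 2) := by
  unfold Fix1
  apply card_modeq_filter (Wset A) (fun x => ∀ v, good A x.1 x.2 v) (fun x _ => tog A x)
  · intro x hx
    rw [Finset.mem_filter] at hx ⊢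
    obtain ⟨h1, h2⟩ := hx
    obtain ⟨hW, hb, -, -⟩ := tog_spec A x h1 h2
    exact ⟨hW, hb⟩
  · intro x hx hne
    rw [Finset.mem_filter] at hx
    exact (tog_spec A x hx.1 hx.2).2.2.2 hne
  · intro x hx
    rw [Finset.mem_filter] at hx
    exact (tog_spec A x hx.1 hx.2).2.2.1

def canonS (A : Set (V × V)) (σ : Perm V) : Finset V :=
  univ.filter (fun v => (v, σ v) ∈ A ∧ ∃ u, σ.SameCycle v u ∧ v < u)

lemma mem_canonS {A : Set (V × V)} {σ : Perm V} {v : V} :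
    v ∈ canonS A σ ↔ (v, σ v) ∈ A ∧ ∃ u, σ.SameCycle v u ∧ v < u := by
  simp [canonS]

lemma fix1_mem_SV {A : Set (V × V)} {x : Perm V × Finset V} (hx : x ∈ Fix1 A) :
    SV A x.1 := by
  rw [Fix1, Finset.mem_filter] at hx
  intro v
  rcases hx.2 v with ⟨hMC, -⟩ | ⟨hM0, -⟩
  · left
    intro u hu
    have : u ∈ Mset A x.1 v := hMC ▸ mem_Cyc.mpr hu
    exact (mem_Mset.mp this).2
  · right
    intro u hu hA
    have : u ∈ Mset A x.1 v := mem_Mset.mpr ⟨hu, hA⟩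
    rw [hM0] at this
    exact absurd this (Finset.notMem_empty u)

lemma canonS_mem_fix1 {A : Set (V × V)} {σ : Perm V} (hσ : SV A σ) :
    (σ, canonS A σ) ∈ Fix1 A := by
  rw [Fix1, Finset.mem_filter, mem_Wset]
  refine ⟨⟨?_, ?_⟩, ?_⟩
  · intro v hv
    exact (mem_canonS.mp hv).1
  · intro v
    refine ⟨(Cyc σ v).max' ⟨v, self_mem_Cyc σ v⟩,
      mem_Cyc.mp (Finset.max'_mem _ _), ?_⟩
    intro hc
    obtain ⟨-, u, hu, hlt⟩ := mem_canonS.mp hc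
    have huC : u ∈ Cyc σ v := by
      rw [mem_Cyc]
      exact (mem_Cyc.mp (Finset.max'_mem (Cyc σ v) ⟨v, self_mem_Cyc σ v⟩)).trans hu
    exact absurd hlt (not_lt.mpr (Finset.le_max' _ _ huC))
  · intro v
    rcases hσ v with hall | hnone
    · left
      constructor
      · ext u
        rw [mem_Mset, mem_Cyc]
        exact ⟨fun h => h.1, fun h => ⟨h, hall u h⟩⟩
      · intro u
        rw [Finset.mem_inter, mem_canonS, mem_Cyc]
        constructor
        · rintro ⟨⟨-, z, hz, hlt⟩, hu⟩
          exact ⟨hu, ⟨z, mem_Cyc.mpr (hu.trans hz), hlt⟩⟩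
        · rintro ⟨hu, z, hzC, hlt⟩
          exact ⟨⟨hall u hu, ⟨z, hu.symm.trans (mem_Cyc.mp hzC), hlt⟩⟩, hu⟩
    · right
      constructor
      · ext u
        rw [mem_Mset]
        simp only [Finset.notMem_empty, iff_false]
        rintro ⟨hu, hA⟩
        exact hnone u hu hA
      · ext u
        rw [Finset.mem_inter, mem_canonS]
        simp only [Finset.notMem_empty, iff_false]
        rintro ⟨⟨hA, -⟩, hu⟩
        exact hnone u (mem_Cyc.mp hu) hA

lemma fix1_snd_eq_canonS {A : Set (V × V)} {x : Perm V × Finset V} (hx : x ∈ Fix1 A) :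
    x.2 = canonS A x.1 := by
  rw [Fix1, Finset.mem_filter] at hx
  ext u
  have hu : u ∈ Cyc x.1 u := self_mem_Cyc _ _
  rw [mem_canonS]
  rcases hx.2 u with ⟨hMC, hiff⟩ | ⟨hM0, hempty⟩
  · have harc : (u, x.1 u) ∈ A := by
      have : u ∈ Mset A x.1 u := hMC ▸ hu
      exact (mem_Mset.mp this).2
    constructor
    · intro huS
      have := (hiff u).mp (Finset.mem_inter.mpr ⟨huS, hu⟩)
      obtain ⟨-, z, hzC, hlt⟩ := this
      exact ⟨harc, z, mem_Cyc.mp hzC, hlt⟩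
    · rintro ⟨-, z, hz, hlt⟩
      have := (hiff u).mpr ⟨hu, z, mem_Cyc.mpr hz, hlt⟩
      exact (Finset.mem_inter.mp this).1
  · constructor
    · intro huS
      have : u ∈ x.2 ∩ Cyc x.1 u := Finset.mem_inter.mpr ⟨huS, hu⟩
      rw [hempty] at this
      exact absurd this (Finset.notMem_empty u)
    · rintro ⟨hA, -⟩
      have : u ∈ Mset A x.1 u := mem_Mset.mpr ⟨Equiv.Perm.SameCycle.refl _ _, hA⟩
      rw [hM0] at this
      exact absurd this (Finset.notMem_empty u)

lemma fix1_card (A : Set (V × V)) :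
    (Fix1 A).card = (univ.filter (fun σ : Perm V => SV A σ)).card := by
  apply Finset.card_bij' (fun x _ => x.1) (fun σ _ => (σ, canonS A σ))
  · intro x hx
    exact Finset.mem_filter.mpr ⟨Finset.mem_univ _, fix1_mem_SV hx⟩
  · intro σ hσ
    exact canonS_mem_fix1 ((Finset.mem_filter.mp hσ).2)
  · intro x hx
    exact Prod.ext rfl (fix1_snd_eq_canonS hx).symm
  · intro σ hσ
    rfl

def zpt [Nonempty V] (x : Perm V × Finset V) : V :=
  if h : (Finset.univ \ x.2).Nonempty then (Finset.univ \ x.2).min' h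
  else Classical.arbitrary V

def listOf [Nonempty V] (x : Perm V × Finset V) : List V :=
  List.ofFn (fun i : Fin (Fintype.card V) => (x.1 ^ ((i : ℕ) + 1)) (zpt x))

lemma min'_congr (s t : Finset V) (hs : s.Nonempty) (ht : t.Nonempty) (h : s = t) :
    s.min' hs = t.min' ht := by
  subst h
  rfl

lemma pow_eq_iterate (σ : Perm V) (k : ℕ) (z : V) : (σ ^ k) z = (⇑σ)^[k] z := by
  rw [← Equiv.Perm.coe_pow]

section NonemptyPart

variable [Nonempty V]

/-- basic structure of elements of `Fix2`. -/
lemma fix2_z {A : Set (V × V)} {x : Perm V × Finset V} (hx : x ∈ Fix2 A) :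
    Finset.univ \ x.2 = {zpt x} := by
  rw [Fix2, Finset.mem_filter] at hx
  obtain ⟨hW, hcard⟩ := hx
  obtain ⟨-, hacyc⟩ := mem_Wset.mp hW
  obtain ⟨u, -, hu⟩ := hacyc (Classical.arbitrary V)
  have hne : (Finset.univ \ x.2).Nonempty := ⟨u, Finset.mem_sdiff.mpr ⟨Finset.mem_univ _, hu⟩⟩
  have h1 : (Finset.univ \ x.2).card = 1 :=
    le_antisymm hcard (Finset.card_pos.mpr hne)
  obtain ⟨z, hz⟩ := Finset.card_eq_one.mp h1
  have : zpt x = z := by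
    rw [zpt, dif_pos hne]
    exact (min'_congr _ _ hne ⟨z, Finset.mem_singleton_self z⟩ hz).trans
      (Finset.min'_singleton z)
  rw [hz, this]

lemma fix2_mem_snd {A : Set (V × V)} {x : Perm V × Finset V} (hx : x ∈ Fix2 A) (v : V) :
    v ∈ x.2 ↔ v ≠ zpt x := by
  have hz := fix2_z hx
  constructor
  · intro hv h
    rw [h] at hv
    have : zpt x ∈ Finset.univ \ x.2 := hz ▸ Finset.mem_singleton_self _
    exact (Finset.mem_sdiff.mp this).2 hv
  · intro hv
    by_contra hc
    have : v ∈ Finset.univ \ x.2 := Finset.mem_sdiff.mpr ⟨Finset.mem_univ _, hc⟩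
    rw [hz, Finset.mem_singleton] at this
    exact hv this

/-- For `x ∈ Fix2`, all cycles of `x.1` contain `zpt x`. -/
lemma fix2_sameCycle {A : Set (V × V)} {x : Perm V × Finset V} (hx : x ∈ Fix2 A) (v : V) :
    x.1.SameCycle v (zpt x) := by
  have hx' := hx
  rw [Fix2, Finset.mem_filter] at hx'
  obtain ⟨-, hacyc⟩ := mem_Wset.mp hx'.1
  obtain ⟨u, hu, huS⟩ := hacyc v
  have : u = zpt x := by
    by_contra hne
    exact huS ((fix2_mem_snd hx u).mpr hne)
  exact this ▸ hu

/-- the enumeration map of an element of `Fix2`. -/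
def gmap (x : Perm V × Finset V) (i : Fin (Fintype.card V)) : V :=
  (x.1 ^ ((i : ℕ) + 1)) (zpt x)

lemma listOf_eq_ofFn (x : Perm V × Finset V) : listOf x = List.ofFn (gmap x) := rfl

lemma fix2_gmap_surj {A : Set (V × V)} {x : Perm V × Finset V} (hx : x ∈ Fix2 A) :
    Function.Surjective (gmap x) := by
  classical
  set σ := x.1
  set z := zpt x
  set n := Fintype.card V with hn
  set m := Function.minimalPeriod ⇑σ z with hm
  have hper : Function.IsPeriodicPt ⇑σ (orderOf σ) z := by
    show (⇑σ)^[orderOf σ] z = z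
    rw [← Equiv.Perm.coe_pow, pow_orderOf_eq_one]
    rfl
  have hzper : z ∈ Function.periodicPts ⇑σ := ⟨orderOf σ, orderOf_pos σ, hper⟩
  have hm_pos : 0 < m := Function.minimalPeriod_pos_of_mem_periodicPts hzper
  have hm_per : (⇑σ)^[m] z = z := Function.isPeriodicPt_minimalPeriod ⇑σ z
  have hm_le : m ≤ n := by
    have hinj : Set.InjOn (fun k => (⇑σ)^[k] z) (Set.Iio m) :=
      Function.iterate_injOn_Iio_minimalPeriod
    have := Finset.card_le_card_of_injOn (fun k => (⇑σ)^[k] z)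
      (fun a _ => Finset.mem_univ _)
      (by
        intro a ha b hb hab
        rw [Finset.coe_range] at ha hb
        exact hinj ha hb hab)
      (s := Finset.range m) (t := Finset.univ)
    simpa using this
  intro v
  obtain ⟨i, -, hi⟩ := ((fix2_sameCycle hx v).symm).exists_pow_eq'
  have hi' : (⇑σ)^[i % m] z = v := by
    rw [Function.iterate_mod_minimalPeriod_eq]
    rw [← pow_eq_iterate]
    exact hi
  by_cases h0 : i % m = 0
  · rw [h0] at hi'
    refine ⟨⟨m - 1, by omega⟩, ?_⟩
    show (σ ^ ((m - 1) + 1)) z = v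
    rw [show (m - 1) + 1 = m by omega, pow_eq_iterate, hm_per]
    exact hi'
  · refine ⟨⟨(i % m) - 1, by have := Nat.mod_lt i hm_pos; omega⟩, ?_⟩
    show (σ ^ (((i % m) - 1) + 1)) z = v
    rw [show ((i % m) - 1) + 1 = i % m by omega, pow_eq_iterate]
    exact hi'

lemma fix2_gmap_bij {A : Set (V × V)} {x : Perm V × Finset V} (hx : x ∈ Fix2 A) :
    Function.Bijective (gmap x) :=
  (Fintype.bijective_iff_surjective_and_card _).mpr ⟨fix2_gmap_surj hx, by simp⟩

lemma fix2_pow_card {A : Set (V × V)} {x : Perm V × Finset V} (hx : x ∈ Fix2 A) :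
    (x.1 ^ (Fintype.card V)) (zpt x) = zpt x := by
  classical
  set σ := x.1
  set z := zpt x
  set n := Fintype.card V with hn
  have hnpos : 0 < n := Fintype.card_pos
  set m := Function.minimalPeriod ⇑σ z with hm
  have hper : Function.IsPeriodicPt ⇑σ (orderOf σ) z := by
    show (⇑σ)^[orderOf σ] z = z
    rw [← Equiv.Perm.coe_pow, pow_orderOf_eq_one]
    rfl
  have hzper : z ∈ Function.periodicPts ⇑σ := ⟨orderOf σ, orderOf_pos σ, hper⟩
  have hm_pos : 0 < m := Function.minimalPeriod_pos_of_mem_periodicPts hzper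
  have hm_per : (⇑σ)^[m] z = z := Function.isPeriodicPt_minimalPeriod ⇑σ z
  -- m = n
  have hmn : m = n := by
    by_contra hne
    have hm_lt : m < n := by
      rcases lt_or_ge m n with h | h
      · exact h
      · -- if n ≤ m then by injectivity of gmap... we only need m ≤ n:
        exfalso
        -- injectivity of iterates on Iio m mapped into V gives m ≤ n
        have hinj : Set.InjOn (fun k => (⇑σ)^[k] z) (Set.Iio m) :=
          Function.iterate_injOn_Iio_minimalPeriod
        have hle := Finset.card_le_card_of_injOn (fun k => (⇑σ)^[k] z)
          (fun a _ => Finset.mem_univ _)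
          (by
            intro a ha b hb hab
            rw [Finset.coe_range] at ha hb
            exact hinj ha hb hab)
          (s := Finset.range m) (t := Finset.univ)
        simp only [Finset.card_range, Finset.card_univ] at hle
        omega
    have h1 : gmap x ⟨m, hm_lt⟩ = gmap x ⟨0, hnpos⟩ := by
      show (σ ^ (m + 1)) z = (σ ^ (0 + 1)) z
      rw [pow_succ', Equiv.Perm.mul_apply, pow_eq_iterate, hm_per, zero_add, pow_one]
    have := (fix2_gmap_bij hx).injective h1
    rw [Fin.mk.injEq] at this
    omega
  rw [pow_eq_iterate, ← hmn]
  exact hm_per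

lemma fix2_gmap_last {A : Set (V × V)} {x : Perm V × Finset V} (hx : x ∈ Fix2 A)
    (i : Fin (Fintype.card V)) : gmap x i = zpt x ↔ (i : ℕ) = Fintype.card V - 1 := by
  have hnpos : 0 < Fintype.card V := Fintype.card_pos
  constructor
  · intro h
    have hlast : gmap x ⟨Fintype.card V - 1, by omega⟩ = zpt x := by
      show (x.1 ^ ((Fintype.card V - 1) + 1)) (zpt x) = zpt x
      rw [show (Fintype.card V - 1) + 1 = Fintype.card V by omega]
      exact fix2_pow_card hx
    have := (fix2_gmap_bij hx).injective (h.trans hlast.symm)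
    rw [Fin.mk.injEq (n := Fintype.card V)] at this
    · exact this
  · intro h
    have : i = ⟨Fintype.card V - 1, by omega⟩ := Fin.ext h
    rw [this]
    show (x.1 ^ ((Fintype.card V - 1) + 1)) (zpt x) = zpt x
    rw [show (Fintype.card V - 1) + 1 = Fintype.card V by omega]
    exact fix2_pow_card hx

lemma fix2_gmap_succ (x : Perm V × Finset V)
    (i j : Fin (Fintype.card V)) (hij : (j : ℕ) = (i : ℕ) + 1) :
    gmap x j = x.1 (gmap x i) := by
  show (x.1 ^ ((j : ℕ) + 1)) (zpt x) = x.1 ((x.1 ^ ((i : ℕ) + 1)) (zpt x))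
  rw [hij, pow_succ', Equiv.Perm.mul_apply]

/-- `listOf x` is a Hamiltonian path of `(V, A)` for `x ∈ Fix2 A`. -/
lemma listOf_mem {A : Set (V × V)} {x : Perm V × Finset V} (hx : x ∈ Fix2 A) :
    (listOf x).Nodup ∧ (∀ v : V, v ∈ listOf x) ∧
      (listOf x).Chain' (fun a b => (a, b) ∈ A) := by
  have hbij := fix2_gmap_bij hx
  refine ⟨List.nodup_ofFn.mpr hbij.injective, ?_, ?_⟩
  · intro v
    rw [listOf_eq_ofFn, List.mem_ofFn]
    exact (fix2_gmap_surj hx) v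
  · rw [listOf_eq_ofFn, List.Chain', List.isChain_iff_getElem]
    intro i hi
    rw [List.length_ofFn] at hi
    have hi1 : i < Fintype.card V := by omega
    have hi2 : i + 1 < Fintype.card V := by omega
    have e1 : (List.ofFn (gmap x)).get ⟨i, by rw [List.length_ofFn]; omega⟩
        = gmap x ⟨i, hi1⟩ := by
      simp [List.get_ofFn]
    have e2 : (List.ofFn (gmap x)).get ⟨i + 1, by rw [List.length_ofFn]; omega⟩
        = gmap x ⟨i + 1, hi2⟩ := by
      simp [List.get_ofFn]
    simp only [List.getElem_ofFn]
    have hsucc : gmap x ⟨i + 1, hi2⟩ = x.1 (gmap x ⟨i, hi1⟩) :=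
      fix2_gmap_succ x ⟨i, hi1⟩ ⟨i + 1, hi2⟩ rfl
    rw [hsucc]
    -- the arc from gmap x i is in A since gmap x i ∈ x.2
    have hmem : gmap x ⟨i, hi1⟩ ∈ x.2 := by
      rw [fix2_mem_snd hx]
      intro hz
      have := (fix2_gmap_last hx ⟨i, hi1⟩).mp hz
      simp only at this
      omega
    have hx' := hx
    rw [Fix2, Finset.mem_filter] at hx'
    exact (mem_Wset.mp hx'.1).1 _ hmem

lemma listOf_injOn (A : Set (V × V)) :
    Set.InjOn listOf ((Fix2 A) : Set (Perm V × Finset V)) := by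
  intro x hx y hy hxy
  rw [Finset.mem_coe] at hx hy
  have hnpos : 0 < Fintype.card V := Fintype.card_pos
  rw [listOf_eq_ofFn, listOf_eq_ofFn] at hxy
  have hg : gmap x = gmap y := List.ofFn_inj.mp hxy
  have hz : zpt x = zpt y := by
    have h1 : gmap x ⟨Fintype.card V - 1, by omega⟩ = zpt x :=
      (fix2_gmap_last hx _).mpr rfl
    have h2 : gmap y ⟨Fintype.card V - 1, by omega⟩ = zpt y :=
      (fix2_gmap_last hy _).mpr rfl
    rw [← h1, ← h2, hg]
  have hS : x.2 = y.2 := by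
    ext v
    rw [fix2_mem_snd hx, fix2_mem_snd hy, hz]
  have hperm : x.1 = y.1 := by
    apply Equiv.ext
    intro v
    obtain ⟨i, rfl⟩ := fix2_gmap_surj hx v
    by_cases hi : (i : ℕ) + 1 < Fintype.card V
    · have e1 : x.1 (gmap x i) = gmap x ⟨(i : ℕ) + 1, hi⟩ :=
        (fix2_gmap_succ x i ⟨(i : ℕ) + 1, hi⟩ rfl).symm
      have e2 : y.1 (gmap y i) = gmap y ⟨(i : ℕ) + 1, hi⟩ :=
        (fix2_gmap_succ y i ⟨(i : ℕ) + 1, hi⟩ rfl).symm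
      calc x.1 (gmap x i) = gmap x ⟨(i : ℕ) + 1, hi⟩ := e1
        _ = gmap y ⟨(i : ℕ) + 1, hi⟩ := by rw [hg]
        _ = y.1 (gmap y i) := e2.symm
        _ = y.1 (gmap x i) := by rw [hg]
    · have hieq : (i : ℕ) = Fintype.card V - 1 := by
        have := i.isLt
        omega
      have hzi : gmap x i = zpt x := (fix2_gmap_last hx i).mpr hieq
      have hzi' : gmap y i = zpt y := (fix2_gmap_last hy i).mpr hieq
      have e1 : x.1 (gmap x i) = gmap x ⟨0, hnpos⟩ := by
        rw [hzi]
        show x.1 (zpt x) = (x.1 ^ (0 + 1)) (zpt x)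
        rw [pow_one]
      have e2 : y.1 (gmap y i) = gmap y ⟨0, hnpos⟩ := by
        rw [hzi']
        show y.1 (zpt y) = (y.1 ^ (0 + 1)) (zpt y)
        rw [pow_one]
      calc x.1 (gmap x i) = gmap x ⟨0, hnpos⟩ := e1
        _ = gmap y ⟨0, hnpos⟩ := by rw [hg]
        _ = y.1 (gmap y i) := by rw [← e2]
        _ = y.1 (gmap x i) := by rw [hg]
  exact Prod.ext hperm hS

/-- Every Hamiltonian path arises from an element of `Fix2`. -/
lemma hamp_surj {A : Set (V × V)} {w : List V} (hnd : w.Nodup)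
    (hcomp : ∀ v : V, v ∈ w) (hch : w.Chain' (fun a b => (a, b) ∈ A)) :
    ∃ x ∈ Fix2 A, listOf x = w := by
  classical
  have hwne : w ≠ [] := by
    intro h
    obtain v := Classical.arbitrary V
    exact absurd (hcomp v) (by simp [h])
  have hlen : w.length = Fintype.card V := by
    have h1 : w.toFinset = Finset.univ := by
      ext v
      simp [hcomp v]
    have h2 := List.toFinset_card_of_nodup hnd
    rw [h1] at h2
    simp only [Finset.card_univ] at h2
    omega
  have hnpos : 0 < w.length := List.length_pos_iff.mpr hwne
  set lst := w.getLast hwne with hlst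
  have hlst_elem : lst = w[w.length - 1]'(by omega) := List.getLast_eq_getElem hwne
  set σ := w.formPerm with hσ
  set S := Finset.univ.erase lst with hS
  have hsdiff : Finset.univ \ S = {lst} := by
    ext v
    rw [Finset.mem_sdiff, Finset.mem_singleton]
    constructor
    · rintro ⟨-, hv⟩
      by_contra hne
      exact hv (Finset.mem_erase.mpr ⟨hne, Finset.mem_univ _⟩)
    · rintro rfl
      exact ⟨Finset.mem_univ _, fun hc => (Finset.mem_erase.mp hc).1 rfl⟩
  have hSmem : ∀ v : V, v ∈ S ↔ v ≠ lst := by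
    intro v
    simp [hS]
  -- membership in Fix2
  have hWmem : (σ, S) ∈ Wset A := by
    rw [mem_Wset]
    constructor
    · intro v hv
      obtain ⟨i, hi, rfl⟩ := List.mem_iff_getElem.mp (hcomp v)
      have hine : i ≠ w.length - 1 := by
        intro h
        subst h
        rw [hSmem] at hv
        exact hv hlst_elem.symm
      have hi1 : i + 1 < w.length := by omega
      have happ : σ w[i] = w[i + 1] := by
        rw [hσ, List.formPerm_apply_getElem _ hnd i (by omega)]
        congr 1
        exact Nat.mod_eq_of_lt hi1
      rw [happ]
      have := List.isChain_iff_getElem.mp hch i (by omega)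
      simpa using this
    · intro v
      obtain ⟨i, hi, rfl⟩ := List.mem_iff_getElem.mp (hcomp v)
      refine ⟨lst, ?_, ?_⟩
      · -- SameCycle w[i] lst
        apply sameCycle_of_pow (k := w.length - 1 - i)
        rw [hσ, List.formPerm_pow_apply_getElem _ hnd _ i (by omega), hlst_elem]
        congr 1
        rw [Nat.mod_eq_of_lt (by omega)]
        omega
      · rw [hSmem]
        exact fun h => h rfl
  have hfix2 : (σ, S) ∈ Fix2 A := by
    rw [Fix2, Finset.mem_filter]
    refine ⟨hWmem, ?_⟩
    show (Finset.univ \ S).card ≤ 1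
    rw [hsdiff, Finset.card_singleton]
  refine ⟨(σ, S), hfix2, ?_⟩
  -- listOf (σ, S) = w
  have hne2 : (Finset.univ \ (σ, S).2).Nonempty := by
    rw [show Finset.univ \ (σ, S).2 = {lst} from hsdiff]
    exact ⟨lst, Finset.mem_singleton_self _⟩
  have hzpt : zpt (σ, S) = lst := by
    rw [zpt, dif_pos hne2]
    exact (min'_congr _ _ hne2 ⟨lst, Finset.mem_singleton_self _⟩ hsdiff).trans
      (Finset.min'_singleton lst)
  apply List.ext_getElem
  · rw [listOf_eq_ofFn, List.length_ofFn, hlen]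
  · intro i h1 h2
    have hstep : (listOf (σ, S))[i]'h1
        = gmap (σ, S) ⟨i, by omega⟩ := List.getElem_ofFn _
    rw [hstep]
    show (σ ^ (i + 1)) (zpt (σ, S)) = w[i]
    rw [hzpt, hlst_elem, hσ, List.formPerm_pow_apply_getElem _ hnd _ _ (by omega)]
    congr 1
    have : (w.length - 1 + (i + 1)) = w.length + i := by omega
    rw [this, Nat.add_mod_left, Nat.mod_eq_of_lt h2]

end NonemptyPart

lemma fix2_card (A : Set (V × V)) :
    (Fix2 A).card = hampCount V A := by
  rcases isEmpty_or_nonempty V with hV | hV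
  · -- empty case: both sides are 1
    have h1 : Fix2 A = {((1 : Perm V), (∅ : Finset V))} := by
      ext x
      simp only [Finset.mem_singleton]
      constructor
      · intro _
        have hx2 : x.2 = ∅ := Subsingleton.elim _ _
        have hx1 : x.1 = 1 := Subsingleton.elim _ _
        exact Prod.ext hx1 hx2
      · rintro rfl
        rw [Fix2, Finset.mem_filter, mem_Wset]
        refine ⟨⟨?_, ?_⟩, ?_⟩
        · intro v hv
          exact absurd hv (by simp)
        · intro v
          exact isEmptyElim v
        · show (Finset.univ \ (∅ : Finset V)).card ≤ 1
          simp [Finset.eq_empty_of_isEmpty (Finset.univ : Finset V)]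
      
    have h2 : {w : List V | w.Nodup ∧ (∀ x : V, x ∈ w) ∧
        w.Chain' fun a b => (a, b) ∈ A} = {([] : List V)} := by
      ext w
      simp only [Set.mem_setOf_eq, Set.mem_singleton_iff]
      constructor
      · rintro ⟨-, -, -⟩
        cases w with
        | nil => rfl
        | cons a _ => exact isEmptyElim a
      · rintro rfl
        exact ⟨List.nodup_nil, fun x => isEmptyElim x, List.isChain_nil⟩
    rw [hampCount, h2, Set.ncard_singleton, h1, Finset.card_singleton]
  · -- nonempty case: bijection via listOf
    have hset : {w : List V | w.Nodup ∧ (∀ x : V, x ∈ w) ∧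
        w.Chain' fun a b => (a, b) ∈ A} = ↑((Fix2 A).image listOf) := by
      ext w
      simp only [Set.mem_setOf_eq, Finset.coe_image, Set.mem_image, Finset.mem_coe]
      constructor
      · rintro ⟨hnd, hcomp, hch⟩
        obtain ⟨x, hx, hxw⟩ := hamp_surj hnd hcomp hch
        exact ⟨x, hx, hxw⟩
      · rintro ⟨x, hx, rfl⟩
        exact listOf_mem hx
    rw [hampCount, hset, Set.ncard_coe_finset,
      Finset.card_image_of_injOn (listOf_injOn A)]

lemma main_lemma (A : Set (V × V)) :
    hampCount V A ≡ (univ.filter (fun σ : Perm V => SV A σ)).card [MOD 2] := by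
  rw [← ZMod.natCast_eq_natCast_iff]
  rw [← fix1_card, ← fix2_card, ← card_W_eq_fix1, card_W_eq_fix2]

end RBproof
set_option maxHeartbeats 2000000 in
/-- **Theorem (Grinberg–Stanley, Theorem 5.4 (b)).**
`#hamps(D̄) ≡ |S_V(D,D̄)| (mod 2)`. -/
theorem hampCount_compl_mod_two (V : Type) [Fintype V] [DecidableEq V]
    (A : Set (V × V)) :
    hampCount V Aᶜ ≡
      (Finset.univ.filter (fun σ : Equiv.Perm V => memSVDDbar A σ)).card [MOD 2] := by
  letI : LinearOrder V := LinearOrder.lift' (Fintype.equivFin V) (Equiv.injective _)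
  have key : ∀ σ : Equiv.Perm V, memSVDDbar A σ ↔ RBproof.SV Aᶜ σ := by
    intro σ
    constructor
    · intro h v
      have hO : (Finset.univ.filter fun u => σ.SameCycle v u) ∈ cyclesOf σ :=
        Finset.mem_image_of_mem _ (Finset.mem_univ v)
      rcases h _ hO with h' | h'
      · exact Or.inr fun u hu => by
          simpa using h' u (by simp [hu])
      · exact Or.inl fun u hu => by
          simpa using h' u (by simp [hu])
    · intro h O hO
      rcases Finset.mem_image.mp hO with ⟨v, -, rfl⟩
      rcases h v with h' | h'
      · exact Or.inr fun u hu => by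
          have := h' u (by simpa using hu)
          simpa using this
      · exact Or.inl fun u hu => by
          have := h' u (by simpa using hu)
          simpa using this
  have hcard : (Finset.univ.filter (fun σ : Equiv.Perm V => memSVDDbar A σ)).card
      = (Finset.univ.filter (fun σ : Equiv.Perm V => RBproof.SV Aᶜ σ)).card := by
    apply Finset.card_bij (fun σ _ => σ)
    · intro a ha
      simp only [Finset.mem_filter] at ha ⊢
      exact ⟨Finset.mem_univ _, (key a).mp ha.2⟩
    · intro a _ b _ h
      exact h
    · intro b hb
      simp only [Finset.mem_filter] at hb
      exact ⟨b, Finset.mem_filter.mpr ⟨Finset.mem_univ _, (key b).mpr hb.2⟩, rfl⟩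
  rw [hcard]
  exact RBproof.main_lemma Aᶜ
end
end
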